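/- arXiv:1602.06773 — 6 statements merged into one kernel-verified Lean document; each statement's English description precedes it below -/
import Mathlib

section
/- Let V be a finite-dimensional vector space over a field k and let U and U' be two subspaces of V. Then there exists a basis B of V that is simultaneously compatible with U and with U', i.e. B ∩ U is a basis of U and B ∩ U' is a basis of U'. -/
/-- For a finite-dimensional vector space `V` over a field `k` and two
subspaces `U`, `U'`, there is a basis `B` of `V` compatible with both `U` and `U'`:
`B ∩ U` is a basis of `U` and `B ∩ U'` is a basis of `U'`. -/
theorem stmt0 (k : Type) [Field k] (V : Type) [AddCommGroup V] [Module k V]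
    [FiniteDimensional k V] (U U' : Submodule k V) :
    ∃ B : Set V, LinearIndependent k (Subtype.val : B → V) ∧
      Submodule.span k B = ⊤ ∧
      Submodule.span k (B ∩ (U : Set V)) = U ∧
      Submodule.span k (B ∩ (U' : Set V)) = U' := by
  classical
  -- a linearly independent spanning set of U ⊓ U'
  obtain ⟨s0, hs0sub, hs0span, hs0li⟩ := exists_linearIndependent k ((U ⊓ U' : Submodule k V) : Set V)
  rw [Submodule.span_eq] at hs0span
  -- extend inside U
  obtain ⟨s1, hs1U, hs01, hUspan1, hs1li⟩ :=
    exists_linearIndepOn_id_extension hs0li (hs0sub.trans (by intro x hx; exact hx.1))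
  replace hs1li : LinearIndependent k (Subtype.val : s1 → V) := hs1li
  -- extend inside U'
  obtain ⟨s2, hs2U, hs02, hUspan2, hs2li⟩ :=
    exists_linearIndepOn_id_extension hs0li (hs0sub.trans (by intro x hx; exact hx.2))
  replace hs2li : LinearIndependent k (Subtype.val : s2 → V) := hs2li
  have hspan1 : Submodule.span k s1 = U :=
    le_antisymm (Submodule.span_le.2 hs1U) (fun x hx => Submodule.span_le.2 hUspan1 (Submodule.subset_span hx))
  have hspan2 : Submodule.span k s2 = U' :=
    le_antisymm (Submodule.span_le.2 hs2U) (fun x hx => Submodule.span_le.2 hUspan2 (Submodule.subset_span hx))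
  -- span (s2 \ s0) intersects span s0 trivially
  have hdisj0 : Disjoint (Submodule.span k (s2 \ s0)) (Submodule.span k s0) := by
    have := hs2li.disjoint_span_image (s := Subtype.val ⁻¹' (s2 \ s0))
      (t := Subtype.val ⁻¹' s0) (by
        rw [Set.disjoint_iff]
        rintro ⟨x, hx⟩ ⟨h1, h2⟩
        exact h1.2 h2)
    have h1 : Subtype.val '' (Subtype.val ⁻¹' (s2 \ s0) : Set s2) = s2 \ s0 := by
      rw [Subtype.image_preimage_coe]
      exact Set.inter_eq_right.2 (Set.diff_subset)
    have h2 : Subtype.val '' (Subtype.val ⁻¹' s0 : Set s2) = s0 := by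
      rw [Subtype.image_preimage_coe]
      exact Set.inter_eq_right.2 hs02
    rwa [h1, h2] at this
  -- span (s2 \ s0) intersects U trivially
  have hdisjU : Disjoint (Submodule.span k s1) (Submodule.span k (s2 \ s0)) := by
    rw [disjoint_comm, Submodule.disjoint_def]
    intro x hx hxU
    rw [hspan1] at hxU
    have hxU' : x ∈ U' := by
      have : Submodule.span k (s2 \ s0) ≤ U' := by
        rw [← hspan2]; exact Submodule.span_mono Set.diff_subset
      exact this hx
    have hx0 : x ∈ Submodule.span k s0 := by rw [hs0span]; exact ⟨hxU, hxU'⟩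
    exact Submodule.disjoint_def.1 hdisj0 x hx hx0
  -- s1 ∪ s2 is linearly independent
  have hli12 : LinearIndependent k (Subtype.val : ↥(s1 ∪ (s2 \ s0)) → V) :=
    LinearIndepOn.id_union hs1li (LinearIndepOn.mono (s := s2) hs2li Set.diff_subset) hdisjU
  have hunion : s1 ∪ (s2 \ s0) = s1 ∪ s2 := by
    apply Set.Subset.antisymm
    · exact Set.union_subset_union_right _ Set.diff_subset
    · intro x hx
      rcases hx with hx | hx
      · exact Or.inl hx
      · by_cases h : x ∈ s0
        · exact Or.inl (hs01 h)
        · exact Or.inr ⟨hx, h⟩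
  rw [hunion] at hli12
  -- extend to a basis of V
  obtain ⟨B, _, hsB, hBspan, hBli⟩ := exists_linearIndepOn_id_extension hli12 (Set.subset_univ _)
  refine ⟨B, hBli, ?_, ?_, ?_⟩
  · exact le_antisymm le_top (fun x _ => hBspan (Set.mem_univ x))
  · apply le_antisymm
    · exact Submodule.span_le.2 (fun x hx => hx.2)
    · exact le_trans hspan1.symm.le
        (Submodule.span_mono (fun x hx => ⟨hsB (Or.inl hx), hs1U hx⟩))
  · apply le_antisymm
    · exact Submodule.span_le.2 (fun x hx => hx.2)
    · exact le_trans hspan2.symm.le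
        (Submodule.span_mono (fun x hx => ⟨hsB (Or.inr hx), hs2U hx⟩))
end

section
/- Let V be a finite-dimensional vector space with two filtrations 0 = U_0 ⊆ ... ⊆ U_{n+1} = V and 0 = U'_0 ⊆ ... ⊆ U'_{m+1} = V. For each pair (i,j) with 1 ≤ i ≤ n+1 and 1 ≤ j ≤ m+1, choose a subspace C(i,j) of U_i ∩ U'_j such that ((U_i ∩ U'_{j-1}) + (U_{i-1} ∩ U'_j)) ⊕ C(i,j) = U_i ∩ U'_j (internal direct sum). Then V is the internal direct sum of the subspaces C(i,j) over all such pairs (i,j). -/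
open Module Finset

private lemma stmt2_tele {N : ℕ} (h : Fin (N + 1) → ℤ) :
    ∑ j : Fin N, (h j.succ - h j.castSucc) = h (Fin.last N) - h 0 := by
  classical
  set g : ℕ → ℤ := fun t => if ht : t < N + 1 then h ⟨t, ht⟩ else 0 with hg
  have key : ∀ j : Fin N, h j.succ - h j.castSucc = g (j + 1) - g j := by
    intro j
    have h1 : g (j + 1) = h j.succ := by
      simp only [hg, dif_pos (Nat.succ_lt_succ j.isLt)]; congr 1
    have h2 : g (j : ℕ) = h j.castSucc := by
      simp only [hg, dif_pos (Nat.lt_succ_of_lt j.isLt)]; congr 1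
    rw [h1, h2]
  calc ∑ j : Fin N, (h j.succ - h j.castSucc)
      = ∑ j : Fin N, (g ((j : ℕ) + 1) - g (j : ℕ)) :=
        Finset.sum_congr rfl fun j _ => key j
    _ = ∑ t ∈ Finset.range N, (g (t + 1) - g t) :=
        Fin.sum_univ_eq_sum_range (fun t => g (t + 1) - g t) N
    _ = g N - g 0 := Finset.sum_range_sub g N
    _ = h (Fin.last N) - h 0 := by
        rw [hg]; simp only [dif_pos (Nat.lt_succ_self N), dif_pos (Nat.succ_pos N)]
        congr 1

/-- Given two filtrations of a finite-dimensional vector space `V`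
(indexed so that the paper's `U_i`, `1 ≤ i ≤ n+1`, is `U i.succ` for `i : Fin (n+1)`,
and `U_{i-1}` is `U i.castSucc`), and subspaces `C i j` with
`((U_i ∩ U'_{j-1}) + (U_{i-1} ∩ U'_j)) ⊕ C i j = U_i ∩ U'_j` (internally),
then `V` is the internal direct sum of the `C i j`. -/
theorem stmt2 (k : Type) [Field k] (V : Type) [AddCommGroup V] [Module k V]
    [FiniteDimensional k V] (n m : ℕ)
    (U : Fin (n + 2) → Submodule k V) (U' : Fin (m + 2) → Submodule k V)
    (hU : Monotone U) (hU' : Monotone U')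
    (hU0 : U 0 = ⊥) (hUtop : U (Fin.last (n + 1)) = ⊤)
    (hU'0 : U' 0 = ⊥) (hU'top : U' (Fin.last (m + 1)) = ⊤)
    (C : Fin (n + 1) → Fin (m + 1) → Submodule k V)
    (hdisj : ∀ i j,
      Disjoint ((U i.succ ⊓ U' j.castSucc) ⊔ (U i.castSucc ⊓ U' j.succ)) (C i j))
    (hsum : ∀ i j,
      ((U i.succ ⊓ U' j.castSucc) ⊔ (U i.castSucc ⊓ U' j.succ)) ⊔ C i j
        = U i.succ ⊓ U' j.succ) :
    DirectSum.IsInternal (fun p : Fin (n + 1) × Fin (m + 1) => C p.1 p.2) := by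
  classical
  set S : Submodule k V := ⨆ p : Fin (n + 1) × Fin (m + 1), C p.1 p.2 with hS
  have hCle : ∀ i j, C i j ≤ S := fun i j => le_iSup (fun p : Fin (n+1) × Fin (m+1) => C p.1 p.2) (i, j)
  -- spanning
  have hspan : ∀ i : Fin (n + 2), ∀ j : Fin (m + 2), U i ⊓ U' j ≤ S := by
    intro i
    induction i using Fin.induction with
    | zero => intro j; rw [hU0]; simp
    | succ i ih =>
      intro j
      induction j using Fin.induction with
      | zero => rw [hU'0]; simp
      | succ j ihj =>
        rw [← hsum i j]
        exact sup_le (sup_le ihj (ih j.succ)) (hCle i j)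
  have hsup_top : S = ⊤ := by
    have := hspan (Fin.last (n + 1)) (Fin.last (m + 1))
    rw [hUtop, hU'top, top_inf_eq] at this
    exact le_antisymm le_top this
  -- dimension bookkeeping
  set d : Fin (n + 2) → Fin (m + 2) → ℤ :=
    fun i j => (finrank k (U i ⊓ U' j : Submodule k V) : ℤ) with hd
  have hinter : ∀ (i : Fin (n+1)) (j : Fin (m+1)),
      (U i.succ ⊓ U' j.castSucc) ⊓ (U i.castSucc ⊓ U' j.succ)
        = U i.castSucc ⊓ U' j.castSucc := by
    intro i j
    have h1 : U i.castSucc ≤ U i.succ := hU (Fin.castSucc_le_succ i)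
    have h2 : U' j.castSucc ≤ U' j.succ := hU' (Fin.castSucc_le_succ j)
    apply le_antisymm
    · exact le_inf (inf_le_right.trans inf_le_left) (inf_le_left.trans inf_le_right)
    · exact le_inf (le_inf (inf_le_left.trans h1) inf_le_right)
        (le_inf inf_le_left (inf_le_right.trans h2))
  have hCrank : ∀ (i : Fin (n+1)) (j : Fin (m+1)),
      (finrank k (C i j) : ℤ)
        = (d i.succ j.succ - d i.castSucc j.succ)
          - (d i.succ j.castSucc - d i.castSucc j.castSucc) := by
    intro i j
    set A := U i.succ ⊓ U' j.castSucc
    set B := U i.castSucc ⊓ U' j.succ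
    have e1 : finrank k ((A ⊔ B) ⊔ C i j : Submodule k V) + finrank k (((A ⊔ B) ⊓ C i j : Submodule k V)) = finrank k (A ⊔ B : Submodule k V) + finrank k (C i j) :=
      Submodule.finrank_sup_add_finrank_inf_eq _ _
    rw [(hdisj i j).eq_bot, hsum i j, finrank_bot, add_zero] at e1
    have e2 : finrank k (A ⊔ B : Submodule k V) + finrank k ((A ⊓ B : Submodule k V)) = finrank k A + finrank k B :=
      Submodule.finrank_sup_add_finrank_inf_eq _ _
    rw [hinter i j] at e2
    simp only [hd]
    zify at e1 e2
    linarith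
  -- endpoint values
  have hd0 : ∀ i : Fin (n + 2), d i 0 = 0 := by
    intro i; simp only [hd]; rw [hU'0, inf_bot_eq, finrank_bot]; norm_num
  have hdlast0 : d 0 (Fin.last (m + 1)) = 0 := by
    simp only [hd]; rw [hU0, bot_inf_eq, finrank_bot]; norm_num
  have hdtop : d (Fin.last (n + 1)) (Fin.last (m + 1)) = (finrank k V : ℤ) := by
    simp only [hd]; rw [hUtop, hU'top, top_inf_eq]
    norm_cast
    exact finrank_top k V
  -- total dimension
  have htotal : ∑ p : Fin (n + 1) × Fin (m + 1), (finrank k (C p.1 p.2) : ℤ)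
      = (finrank k V : ℤ) := by
    rw [Fintype.sum_prod_type]
    have hrow : ∀ i : Fin (n + 1),
        ∑ j : Fin (m + 1), (finrank k (C i j) : ℤ)
          = d i.succ (Fin.last (m + 1)) - d i.castSucc (Fin.last (m + 1)) := by
      intro i
      have htel := stmt2_tele (fun j => d i.succ j - d i.castSucc j)
      have hs : ∑ j : Fin (m + 1), (finrank k (C i j) : ℤ)
          = ∑ j : Fin (m + 1), (d i.succ j.succ - d i.castSucc j.succ
            - (d i.succ j.castSucc - d i.castSucc j.castSucc)) :=
        Finset.sum_congr rfl fun j _ => by rw [hCrank i j]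
      rw [hs]
      rw [htel, hd0 i.succ, hd0 i.castSucc]
      ring
    calc ∑ i : Fin (n+1), ∑ j : Fin (m+1), (finrank k (C i j) : ℤ)
        = ∑ i : Fin (n+1), (d i.succ (Fin.last (m+1)) - d i.castSucc (Fin.last (m+1))) :=
          Finset.sum_congr rfl fun i _ => hrow i
      _ = d (Fin.last (n+1)) (Fin.last (m+1)) - d 0 (Fin.last (m+1)) :=
          stmt2_tele (fun i => d i (Fin.last (m + 1)))
      _ = (finrank k V : ℤ) := by rw [hdtop, hdlast0, sub_zero]
  haveI : FiniteDimensional k (DirectSum (Fin (n+1) × Fin (m+1)) (fun p => C p.1 p.2)) :=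
    Module.Finite.equiv
      (DirectSum.linearEquivFunOnFintype k (Fin (n+1) × Fin (m+1)) (fun p => C p.1 p.2)).symm
  have hrank : finrank k (DirectSum (Fin (n+1) × Fin (m+1)) (fun p => C p.1 p.2))
      = finrank k V := by
    rw [Module.finrank_directSum]
    exact_mod_cast htotal
  have hsurj : Function.Surjective
      (DirectSum.coeLinearMap (fun p : Fin (n+1) × Fin (m+1) => C p.1 p.2)) := by
    rw [← LinearMap.range_eq_top, DirectSum.range_coeLinearMap, ← hS, hsup_top]
  have hinj := (LinearMap.injective_iff_surjective_of_finrank_eq_finrank hrank).2 hsurj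
  exact ⟨hinj, hsurj⟩
end

section
/- For a finite tree quiver Q, the assignment Q' ↦ M(Q') gives a bijection between the set of connected subquivers Q' of Q and the set of isomorphism classes of thin indecomposable representations of Q. -/
/-! A minimal framework for representations of a quiver with vertex set `V`,
arrow set `E` and source/target maps `s t : E → V`, over a field `k`. -/

structure QRep (k : Type) [Field k] {V E : Type} (s t : E → V) where
  space : V → Type
  [acg : ∀ v, AddCommGroup (space v)]
  [mod : ∀ v, Module k (space v)]
  map : ∀ e : E, space (s e) →ₗ[k] space (t e)

attribute [instance] QRep.acg QRep.mod

namespace QRep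

variable {k : Type} [Field k] {V E : Type} {s t : E → V}

/-- An isomorphism of representations: compatible linear equivalences at every vertex. -/
structure Iso (M N : QRep k s t) where
  app : ∀ v, M.space v ≃ₗ[k] N.space v
  comm : ∀ (e : E) (x : M.space (s e)), app (t e) (M.map e x) = N.map e (app (s e) x)

/-- The (binary) direct sum of two representations. -/
def prod (M N : QRep k s t) : QRep k s t where
  space v := M.space v × N.space v
  acg v := inferInstanceAs (AddCommGroup (M.space v × N.space v))
  mod v := inferInstanceAs (Module k (M.space v × N.space v))
  map e := (M.map e).prodMap (N.map e)

/-- The direct sum of an arbitrary family of representations. -/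
noncomputable def dsum {ι : Type} (F : ι → QRep k s t) : QRep k s t :=
  letI := Classical.decEq ι
  { space := fun v => DirectSum ι fun i => (F i).space v
    acg := fun v => inferInstanceAs (AddCommGroup (DirectSum ι fun i => (F i).space v))
    mod := fun v => inferInstanceAs (Module k (DirectSum ι fun i => (F i).space v))
    map := fun e => DirectSum.toModule k ι (DirectSum ι fun i => (F i).space (t e))
      fun i => (DirectSum.lof k ι (fun j => (F j).space (t e)) i).comp ((F i).map e) }

/-- The zero representation predicate. -/
def IsZero (M : QRep k s t) : Prop := ∀ (v : V) (x : M.space v), x = 0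

/-- A representation is indecomposable if it is nonzero and any direct sum
decomposition has a zero summand. -/
def Indecomposable (M : QRep k s t) : Prop :=
  ¬ M.IsZero ∧ ∀ N₁ N₂ : QRep k s t, Nonempty (Iso M (N₁.prod N₂)) → N₁.IsZero ∨ N₂.IsZero

/-- A representation is thin if all vertex spaces have dimension at most `1`. -/
def Thin (M : QRep k s t) : Prop := ∀ v : V, Module.rank k (M.space v) ≤ 1

/-- All vertex spaces are finite-dimensional. -/
def FinDim (M : QRep k s t) : Prop := ∀ v : V, FiniteDimensional k (M.space v)

end QRep

/-- The representation `M(Q)`: the field `k` at every vertex, identity at every arrow. -/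
def constRep (k : Type) [Field k] {V E : Type} (s t : E → V) : QRep k s t where
  space _ := k
  acg _ := inferInstanceAs (AddCommGroup k)
  mod _ := inferInstanceAs (Module k k)
  map _ := LinearMap.id

/-- The canonical map `(PLift P → k) → (PLift Q → k)`: the identity if `P` holds
(the two spaces both being `k` then), and zero otherwise. -/
noncomputable def restrictMap (k : Type) [Field k] (P Q : Prop) : (PLift P → k) →ₗ[k] (PLift Q → k) :=
  letI := Classical.propDecidable P
  { toFun := fun v _ => if h : P then v ⟨h⟩ else 0
    map_add' := by
      intro a b; funext hq; by_cases hP : P <;> simp [hP]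
    map_smul' := by
      intro c a; funext hq; by_cases hP : P <;> simp [hP] }

/-- The thin representation `M(Q')` attached to a set `S` of vertices (full subquiver on `S`):
one-dimensional spaces on `S`, zero outside, identity maps on arrows inside `S`,
zero maps elsewhere. -/
noncomputable def subsetRep (k : Type) [Field k] {V E : Type} (s t : E → V) (S : Set V) : QRep k s t where
  space v := PLift (v ∈ S) → k
  acg v := inferInstanceAs (AddCommGroup (PLift (v ∈ S) → k))
  mod v := inferInstanceAs (Module k (PLift (v ∈ S) → k))
  map e := restrictMap k (s e ∈ S) (t e ∈ S)

/-- The underlying (simple) graph of a quiver. -/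
def underlying {V E : Type} (s t : E → V) : SimpleGraph V :=
  SimpleGraph.fromRel fun a b => ∃ e, s e = a ∧ t e = b


namespace Stmt6Aux

open SimpleGraph

/-- Weight of a walk: product of `d a b` over the edges, in orientation of traversal. -/
noncomputable def wt {V : Type} {G : SimpleGraph V} {k : Type} [Field k] (d : V → V → kˣ) :
    ∀ {u v : V}, G.Walk u v → kˣ
  | _, _, SimpleGraph.Walk.nil => 1
  | _, _, @SimpleGraph.Walk.cons _ _ a b _ _h p => d a b * wt d p

lemma wt_nil {V : Type} {G : SimpleGraph V} {k : Type} [Field k] (d : V → V → kˣ) (u : V) :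
    wt d (SimpleGraph.Walk.nil : G.Walk u u) = 1 := rfl

lemma wt_cons {V : Type} {G : SimpleGraph V} {k : Type} [Field k] (d : V → V → kˣ)
    {a b c : V} (h : G.Adj a b) (p : G.Walk b c) :
    wt d (SimpleGraph.Walk.cons h p) = d a b * wt d p := rfl

lemma wt_concat {V : Type} {G : SimpleGraph V} {k : Type} [Field k] (d : V → V → kˣ)
    {u v w : V} (p : G.Walk u v) (h : G.Adj v w) :
    wt d (p.concat h) = wt d p * d v w := by
  induction p with
  | nil => simp [SimpleGraph.Walk.concat_nil, wt, mul_comm]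
  | cons h' p ih => rw [SimpleGraph.Walk.concat_cons, wt_cons, ih, wt_cons, mul_assoc]

/-- Gauge fixing on a tree: any edge-weighting admits a potential. -/
lemma gauge {V : Type} {G : SimpleGraph V} (hG : G.IsTree) {k : Type} [Field k]
    (d : V → V → kˣ) (hsym : ∀ a b, G.Adj a b → d a b * d b a = 1) (r : V) :
    ∃ lam : V → kˣ, ∀ a b, G.Adj a b → lam b = lam a * d a b := by
  have hex := hG.existsUnique_path r
  have hP : ∀ w, ((hex w).exists.choose : G.Walk r w).IsPath := fun w => (hex w).exists.choose_spec
  set P : ∀ w, G.Walk r w := fun w => (hex w).exists.choose with hPdef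
  have hUniq : ∀ (w : V) (q : G.Walk r w), q.IsPath → q = P w := by
    intro w q hq
    exact ((hex w).unique hq (hP w))
  classical
  refine ⟨fun v => wt d (P v), ?_⟩
  intro a b hab
  show wt d (P b) = wt d (P a) * d a b
  by_cases hb : b ∈ (P a).support
  · by_cases ha : a ∈ (P b).support
    · exfalso
      have e1 : (P a).takeUntil b hb = P b := hUniq b _ ((hP a).takeUntil hb)
      have e2 : (P b).takeUntil a ha = P a := hUniq a _ ((hP b).takeUntil ha)
      have t1 : ((P a).takeUntil b hb).length + ((P a).dropUntil b hb).length = (P a).length := by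
        rw [← SimpleGraph.Walk.length_append, SimpleGraph.Walk.take_spec]
      have t2 : ((P b).takeUntil a ha).length + ((P b).dropUntil a ha).length = (P b).length := by
        rw [← SimpleGraph.Walk.length_append, SimpleGraph.Walk.take_spec]
      rw [e1] at t1
      rw [e2] at t2
      have hd : ((P a).dropUntil b hb).length = 0 := by omega
      exact hab.ne (SimpleGraph.Walk.eq_of_length_eq_zero hd).symm
    · -- a ∉ P b : P a = (P b).concat hab.symm
      have hpath : ((P b).concat hab.symm).IsPath := by
        have h1 : (SimpleGraph.Walk.cons hab (P b).reverse).IsPath := by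
          rw [SimpleGraph.Walk.cons_isPath_iff]
          refine ⟨(hP b).reverse, ?_⟩
          rw [SimpleGraph.Walk.support_reverse, List.mem_reverse]
          exact ha
        have h2 : (SimpleGraph.Walk.cons hab (P b).reverse).reverse = (P b).concat hab.symm := by
          rw [SimpleGraph.Walk.reverse_cons, SimpleGraph.Walk.reverse_reverse, SimpleGraph.Walk.concat_eq_append]
        rw [← h2]
        exact h1.reverse
      have he : (P b).concat hab.symm = P a := hUniq a _ hpath
      have : wt d (P a) = wt d (P b) * d b a := by rw [← he, wt_concat]
      rw [this, mul_assoc, hsym b a hab.symm, mul_one]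
  · have hpath : ((P a).concat hab).IsPath := by
      have h1 : (SimpleGraph.Walk.cons hab.symm (P a).reverse).IsPath := by
        rw [SimpleGraph.Walk.cons_isPath_iff]
        refine ⟨(hP a).reverse, ?_⟩
        rw [SimpleGraph.Walk.support_reverse, List.mem_reverse]
        exact hb
      have h2 : (SimpleGraph.Walk.cons hab.symm (P a).reverse).reverse = (P a).concat hab := by
        rw [SimpleGraph.Walk.reverse_cons, SimpleGraph.Walk.reverse_reverse, SimpleGraph.Walk.concat_eq_append]
      rw [← h2]
      exact h1.reverse
    have he : (P a).concat hab = P b := hUniq b _ hpath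
    rw [← he, wt_concat]

end Stmt6Aux

namespace Stmt6Aux

open SimpleGraph

variable {k : Type} [Field k] {V E : Type} {s t : E → V}

lemma restrictMap_pos {P Q : Prop} (hP : P) (c : PLift P → k) :
    restrictMap k P Q c = fun _ => c ⟨hP⟩ := by
  funext q
  letI := Classical.propDecidable P
  show (if h : P then c ⟨h⟩ else 0) = c ⟨hP⟩
  rw [dif_pos hP]

lemma restrictMap_neg {P Q : Prop} (hP : ¬P) (c : PLift P → k) :
    restrictMap k P Q c = 0 := by
  funext q
  letI := Classical.propDecidable P
  show (if h : P then c ⟨h⟩ else 0) = 0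
  rw [dif_neg hP]

/-- The inverse of an isomorphism of representations. -/
noncomputable def isoSymm {M N : QRep k s t} (f : QRep.Iso M N) : QRep.Iso N M where
  app v := (f.app v).symm
  comm e x := by
    apply (f.app (t e)).injective
    rw [LinearEquiv.apply_symm_apply, f.comm e, LinearEquiv.apply_symm_apply]

lemma subsetRep_zero {S : Set V} {v : V} (hv : v ∉ S) (c : PLift (v ∈ S) → k) : c = 0 :=
  funext fun p => absurd p.down hv

/-- The canonical generator of the vertex space of `subsetRep`. -/
def gS (S : Set V) (v : V) : PLift (v ∈ S) → k := fun _ => 1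

lemma gS_ne_zero {S : Set V} {v : V} (hv : v ∈ S) : gS (k := k) S v ≠ 0 := by
  intro h
  have := congrFun h ⟨hv⟩
  simp [gS] at this

lemma eq_smul_gS {S : Set V} {v : V} (hv : v ∈ S) (c : PLift (v ∈ S) → k) :
    c = c ⟨hv⟩ • gS S v := by
  funext p
  rw [Subsingleton.elim p ⟨hv⟩]
  simp [gS]

/-- A one- (or zero-) dimensional space with chosen generator is equivalent to the
space of the thin representation. -/
noncomputable def thinEquiv (k : Type) [Field k] (P : Prop) {M : Type} [AddCommGroup M]
    [Module k M] (x : M) (hx : P → x ≠ 0) (hgen : ∀ y : M, ∃ r : k, r • x = y)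
    (hz : ¬P → ∀ y : M, y = 0) :
    (PLift P → k) ≃ₗ[k] M :=
  letI := Classical.propDecidable P
  if hP : P then
    LinearEquiv.ofBijective
      { toFun := fun c => c ⟨hP⟩ • x
        map_add' := fun a b => by simp [add_smul]
        map_smul' := fun r a => by simp [mul_smul] }
      ⟨fun a b hab => funext fun p => by
          rw [Subsingleton.elim p ⟨hP⟩]
          exact smul_left_injective k (hx hP) hab,
       fun y => by obtain ⟨r, hr⟩ := hgen y; exact ⟨fun _ => r, hr⟩⟩
  else
    haveI : IsEmpty (PLift P) := ⟨fun p => hP p.down⟩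
    LinearEquiv.ofBijective 0
      ⟨fun a b _ => funext fun p => isEmptyElim p,
       fun y => ⟨0, by simp [hz hP y]⟩⟩

lemma thinEquiv_apply {k : Type} [Field k] {P : Prop} {M : Type} [AddCommGroup M]
    [Module k M] (x : M) (hx : P → x ≠ 0) (hgen : ∀ y : M, ∃ r : k, r • x = y)
    (hz : ¬P → ∀ y : M, y = 0) (hP : P) (c : PLift P → k) :
    thinEquiv k P x hx hgen hz c = c ⟨hP⟩ • x := by
  simp only [thinEquiv, dif_pos hP]
  rfl

/-- The submodule family cutting out the part of a representation supported on `A`. -/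
noncomputable def Wmod (N : QRep k s t) (A : Set V) (v : V) : Submodule k (N.space v) :=
  letI := Classical.propDecidable (v ∈ A)
  if v ∈ A then ⊤ else ⊥

lemma Wmod_pos {N : QRep k s t} {A : Set V} {v : V} (hv : v ∈ A) : Wmod N A v = ⊤ := by
  unfold Wmod
  exact if_pos hv

lemma Wmod_neg {N : QRep k s t} {A : Set V} {v : V} (hv : v ∉ A) : Wmod N A v = ⊥ := by
  unfold Wmod
  exact if_neg hv

lemma wmod_isCompl (N : QRep k s t) (A : Set V) (v : V) :
    IsCompl (Wmod N A v) (Wmod N Aᶜ v) := by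
  by_cases hv : v ∈ A
  · rw [Wmod_pos hv, Wmod_neg (by simpa using hv)]
    exact isCompl_top_bot
  · rw [Wmod_neg hv, Wmod_pos (by simpa using hv)]
    exact isCompl_bot_top

lemma wmod_maps (N : QRep k s t) (A : Set V)
    (hA : ∀ e, N.map e ≠ 0 → (s e ∈ A ↔ t e ∈ A)) (e : E) :
    ∀ x ∈ Wmod N A (s e), N.map e x ∈ Wmod N A (t e) := by
  intro x hx
  by_cases h0 : N.map e = 0
  · rw [h0, LinearMap.zero_apply]; exact zero_mem _
  · by_cases hs : s e ∈ A
    · have ht : t e ∈ A := (hA e h0).mp hs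
      rw [Wmod_pos ht]; trivial
    · rw [Wmod_neg hs] at hx
      have : x = 0 := hx
      rw [this, map_zero]; exact zero_mem _

/-- The restriction of a representation to the part supported on `A`. -/
noncomputable def restrRep (N : QRep k s t) (A : Set V)
    (hA : ∀ e, N.map e ≠ 0 → (s e ∈ A ↔ t e ∈ A)) : QRep k s t where
  space v := Wmod N A v
  acg v := inferInstanceAs (AddCommGroup (Wmod N A v))
  mod v := inferInstanceAs (Module k (Wmod N A v))
  map e := (N.map e).restrict (wmod_maps N A hA e)

lemma compl_closure (N : QRep k s t) (A : Set V)
    (hA : ∀ e, N.map e ≠ 0 → (s e ∈ A ↔ t e ∈ A)) :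
    ∀ e, N.map e ≠ 0 → (s e ∈ Aᶜ ↔ t e ∈ Aᶜ) := by
  intro e h0
  simp [Set.mem_compl_iff, (hA e h0).not]

/-- The canonical decomposition of a representation along a set `A` closed under
"active" arrows. -/
noncomputable def restrIso (N : QRep k s t) (A : Set V)
    (hA : ∀ e, N.map e ≠ 0 → (s e ∈ A ↔ t e ∈ A)) :
    QRep.Iso N ((restrRep N A hA).prod (restrRep N Aᶜ (compl_closure N A hA))) where
  app v := (Submodule.prodEquivOfIsCompl _ _ (wmod_isCompl N A v)).symm
  comm e x := by
    erw [LinearEquiv.symm_apply_eq]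
    have hz : (((Submodule.prodEquivOfIsCompl _ _ (wmod_isCompl N A (s e))).symm x).1.val
        + ((Submodule.prodEquivOfIsCompl _ _ (wmod_isCompl N A (s e))).symm x).2.val) = x := by
      have := (Submodule.prodEquivOfIsCompl _ _ (wmod_isCompl N A (s e))).apply_symm_apply x
      rwa [Submodule.coe_prodEquivOfIsCompl'] at this
    show N.map e x = (Submodule.prodEquivOfIsCompl _ _ (wmod_isCompl N A (t e)))
      ((((N.map e).restrict (wmod_maps N A hA e)).prodMap
        ((N.map e).restrict (wmod_maps N Aᶜ (compl_closure N A hA) e)))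
        ((Submodule.prodEquivOfIsCompl _ _ (wmod_isCompl N A (s e))).symm x))
    rw [LinearMap.prodMap_apply, Submodule.coe_prodEquivOfIsCompl',
      LinearMap.restrict_coe_apply, LinearMap.restrict_coe_apply, ← map_add, hz]

lemma restrRep_isZero (N : QRep k s t) (A : Set V)
    (hA : ∀ e, N.map e ≠ 0 → (s e ∈ A ↔ t e ∈ A))
    (h : (restrRep N A hA).IsZero) {v : V} (hv : v ∈ A) (x : N.space v) : x = 0 := by
  have hx : x ∈ Wmod N A v := by rw [Wmod_pos hv]; trivial
  have := h v ⟨x, hx⟩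
  exact congrArg Subtype.val this

end Stmt6Aux

namespace Stmt6Aux

variable {k : Type} [Field k] {V E : Type} {s t : E → V}

lemma subsetRep_thin (S : Set V) : (subsetRep k s t S).Thin := by
  intro v
  rw [rank_le_one_iff]
  refine ⟨gS S v, fun u => ?_⟩
  by_cases hv : v ∈ S
  · exact ⟨u ⟨hv⟩, (eq_smul_gS hv u).symm⟩
  · exact ⟨0, by erw [zero_smul, subsetRep_zero hv u]; rfl⟩

lemma mem_of_iso {S S' : Set V}
    (f : QRep.Iso (subsetRep k s t S) (subsetRep k s t S')) {v : V} (hv : v ∈ S) : v ∈ S' := by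
  by_contra hv'
  have h1 : f.app v (gS S v) = 0 := subsetRep_zero hv' _
  exact gS_ne_zero hv ((f.app v).injective (h1.trans (map_zero (f.app v)).symm))

lemma subsetRep_indec {S : Set V} (hS : ((underlying s t).induce S).Connected) :
    (subsetRep k s t S).Indecomposable := by
  obtain ⟨v₀, hv₀⟩ : ∃ v, v ∈ S := by
    obtain ⟨⟨v₀, hv₀⟩⟩ := hS.nonempty
    exact ⟨v₀, hv₀⟩
  constructor
  · intro hz
    exact gS_ne_zero hv₀ (hz v₀ (gS S v₀))
  rintro N₁ N₂ ⟨f⟩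
  have notboth : ∀ v, v ∈ S →
      ¬((∀ x : N₁.space v, x = 0) ∧ ∀ x : N₂.space v, x = 0) := by
    rintro v hv ⟨h1, h2⟩
    have h0 : f.app v (gS S v) = 0 := Prod.ext (h1 _) (h2 _)
    exact gS_ne_zero hv ((f.app v).injective (h0.trans (map_zero (f.app v)).symm))
  have notboth' : ∀ v, v ∈ S →
      (∀ x : N₁.space v, x = 0) ∨ (∀ x : N₂.space v, x = 0) := by
    intro v hv
    by_contra hc
    push_neg at hc
    obtain ⟨⟨x₁, hx₁⟩, ⟨x₂, hx₂⟩⟩ := hc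
    have e1 : (x₁, (0 : N₂.space v)) = ((f.app v).symm (x₁, 0)) ⟨hv⟩ • f.app v (gS S v) := by
      have h := congrArg (f.app v) (eq_smul_gS hv ((f.app v).symm (x₁, 0)))
      erw [LinearEquiv.apply_symm_apply, map_smul] at h
      exact h
    have e2 : ((0 : N₁.space v), x₂) = ((f.app v).symm (0, x₂)) ⟨hv⟩ • f.app v (gS S v) := by
      have h := congrArg (f.app v) (eq_smul_gS hv ((f.app v).symm (0, x₂)))
      erw [LinearEquiv.apply_symm_apply, map_smul] at h
      exact h
    have ha : ((f.app v).symm (x₁, 0)) ⟨hv⟩ ≠ 0 := by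
      intro h
      rw [h, zero_smul] at e1
      exact hx₁ (congrArg Prod.fst e1)
    have hg2 : (f.app v (gS S v)).2 = 0 := by
      have hsnd : (0 : N₂.space v)
          = (((f.app v).symm (x₁, 0)) ⟨hv⟩) • (f.app v (gS S v)).2 := congrArg Prod.snd e1
      rcases smul_eq_zero.mp hsnd.symm with h | h
      · exact absurd h ha
      · exact h
    apply hx₂
    have hsnd2 : x₂ = (((f.app v).symm (0, x₂)) ⟨hv⟩) • (f.app v (gS S v)).2 :=
      congrArg Prod.snd e2
    rw [hg2, smul_zero] at hsnd2
    exact hsnd2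
  have hprop : ∀ e : E, s e ∈ S → t e ∈ S →
      (((∀ x : N₁.space (s e), x = 0) → ∀ x : N₁.space (t e), x = 0) ∧
       ((∀ x : N₂.space (s e), x = 0) → ∀ x : N₂.space (t e), x = 0)) := by
    intro e hs ht
    have hmap : (subsetRep k s t S).map e (gS S (s e)) = gS S (t e) := by
      show restrictMap k _ _ (gS S (s e)) = gS S (t e)
      rw [restrictMap_pos hs]
      rfl
    have hcomm := f.comm e (gS S (s e))
    rw [hmap] at hcomm
    constructor
    · intro h1
      have hfst : (f.app (t e) (gS S (t e))).1 = 0 := by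
        rw [hcomm]
        show N₁.map e ((f.app (s e) (gS S (s e))).1) = 0
        have hzero : (f.app (s e) (gS (k := k) S (s e))).1 = 0 := h1 _
        rw [hzero, map_zero]
      rcases notboth' (t e) ht with h | h
      · exact h
      · exfalso
        apply gS_ne_zero (k := k) ht
        apply (f.app (t e)).injective
        erw [map_zero]
        exact Prod.ext hfst (h _)
    · intro h2
      have hsnd : (f.app (t e) (gS S (t e))).2 = 0 := by
        rw [hcomm]
        show N₂.map e ((f.app (s e) (gS S (s e))).2) = 0
        have hzero : (f.app (s e) (gS (k := k) S (s e))).2 = 0 := h2 _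
        rw [hzero, map_zero]
      rcases notboth' (t e) ht with h | h
      · exfalso
        apply gS_ne_zero (k := k) ht
        apply (f.app (t e)).injective
        erw [map_zero]
        exact Prod.ext (h _) hsnd
      · exact h
  have hadj1 : ∀ a b, (underlying s t).Adj a b → a ∈ S → b ∈ S →
      ((∀ x : N₁.space a, x = 0) → (∀ x : N₁.space b, x = 0)) := by
    intro a b hab ha hb
    rw [underlying, SimpleGraph.fromRel_adj] at hab
    obtain ⟨hne, h | h⟩ := hab
    · obtain ⟨e, he1, he2⟩ := h
      subst he1; subst he2
      exact (hprop e ha hb).1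
    · obtain ⟨e, he1, he2⟩ := h
      subst he1; subst he2
      intro h1
      rcases notboth' (s e) hb with h' | h'
      · exact h'
      · exact absurd ⟨h1, (hprop e hb ha).2 h'⟩ (notboth (t e) ha)
  have hadj2 : ∀ a b, (underlying s t).Adj a b → a ∈ S → b ∈ S →
      ((∀ x : N₂.space a, x = 0) → (∀ x : N₂.space b, x = 0)) := by
    intro a b hab ha hb
    rw [underlying, SimpleGraph.fromRel_adj] at hab
    obtain ⟨hne, h | h⟩ := hab
    · obtain ⟨e, he1, he2⟩ := h
      subst he1; subst he2
      exact (hprop e ha hb).2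
    · obtain ⟨e, he1, he2⟩ := h
      subst he1; subst he2
      intro h2
      rcases notboth' (s e) hb with h' | h'
      · exact absurd ⟨(hprop e hb ha).1 h', h2⟩ (notboth (t e) ha)
      · exact h'
  have hwalk1 : ∀ (u w : ↥S) (p : ((underlying s t).induce S).Walk u w),
      (∀ x : N₁.space ↑u, x = 0) → (∀ x : N₁.space ↑w, x = 0) := by
    intro u w p
    induction p with
    | nil => exact id
    | cons h q ih =>
      intro h1
      exact ih (hadj1 _ _ h (Subtype.mem _) (Subtype.mem _) h1)
  have hwalk2 : ∀ (u w : ↥S) (p : ((underlying s t).induce S).Walk u w),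
      (∀ x : N₂.space ↑u, x = 0) → (∀ x : N₂.space ↑w, x = 0) := by
    intro u w p
    induction p with
    | nil => exact id
    | cons h q ih =>
      intro h2
      exact ih (hadj2 _ _ h (Subtype.mem _) (Subtype.mem _) h2)
  rcases notboth' v₀ hv₀ with h | h
  · left
    intro v x
    by_cases hv : v ∈ S
    · obtain ⟨p⟩ := hS.preconnected ⟨v₀, hv₀⟩ ⟨v, hv⟩
      exact hwalk1 _ _ p h x
    · have hc : ((f.app v).symm (x, 0)) = 0 := subsetRep_zero hv _
      have h' := congrArg (f.app v) hc
      erw [LinearEquiv.apply_symm_apply, map_zero] at h'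
      exact congrArg Prod.fst h'
  · right
    intro v x
    by_cases hv : v ∈ S
    · obtain ⟨p⟩ := hS.preconnected ⟨v₀, hv₀⟩ ⟨v, hv⟩
      exact hwalk2 _ _ p h x
    · have hc : ((f.app v).symm (0, x)) = 0 := subsetRep_zero hv _
      have h' := congrArg (f.app v) hc
      erw [LinearEquiv.apply_symm_apply, map_zero] at h'
      exact congrArg Prod.snd h'

end Stmt6Aux

namespace Stmt6Aux

variable {k : Type} [Field k] {V E : Type} {s t : E → V}

lemma part3 (hloop : ∀ e, s e ≠ t e)
    (hmulti : ∀ e e' : E, (s e = s e' ∧ t e = t e') ∨ (s e = t e' ∧ t e = s e') → e = e')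
    (htree : (underlying s t).IsTree)
    (N : QRep k s t) (hthin : N.Thin) (hindec : N.Indecomposable) :
    ∃ S : Set V, ((underlying s t).induce S).Connected ∧
      Nonempty (QRep.Iso (subsetRep k s t S) N) := by
  classical
  set S : Set V := {v | ∃ x : N.space v, x ≠ 0} with hSdef
  have hz : ∀ v, v ∉ S → ∀ y : N.space v, y = 0 := by
    intro v hv y
    by_contra hy
    exact hv ⟨y, hy⟩
  have hxex : ∀ v, ∃ x : N.space v, ∀ y, ∃ r : k, r • x = y := fun v =>
    rank_le_one_iff.mp (hthin v)
  choose x hx using hxex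
  have hxne : ∀ v, v ∈ S → x v ≠ 0 := by
    intro v hv h0
    obtain ⟨y, hy⟩ := hv
    obtain ⟨r, hr⟩ := hx v y
    rw [h0, smul_zero] at hr
    exact hy hr.symm
  set actG : SimpleGraph V :=
    SimpleGraph.fromRel (fun a b => ∃ e, N.map e ≠ 0 ∧ s e = a ∧ t e = b) with hactG
  have hle : actG ≤ underlying s t := by
    intro a b hab
    rw [hactG, SimpleGraph.fromRel_adj] at hab
    rw [underlying, SimpleGraph.fromRel_adj]
    obtain ⟨hne, h | h⟩ := hab
    · exact ⟨hne, Or.inl ⟨h.choose, h.choose_spec.2⟩⟩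
    · exact ⟨hne, Or.inr ⟨h.choose, h.choose_spec.2⟩⟩
  have hactAdj : ∀ e, N.map e ≠ 0 → actG.Adj (s e) (t e) := by
    intro e h0
    rw [hactG, SimpleGraph.fromRel_adj]
    exact ⟨hloop e, Or.inl ⟨e, h0, rfl, rfl⟩⟩
  have hmapS : ∀ e, N.map e ≠ 0 → s e ∈ S ∧ t e ∈ S := by
    intro e h0
    have h1 : ∃ y : N.space (s e), N.map e y ≠ 0 := by
      by_contra hc
      push_neg at hc
      exact h0 (LinearMap.ext hc)
    obtain ⟨y, hy⟩ := h1
    exact ⟨⟨y, fun h => hy (by rw [h, map_zero])⟩, ⟨N.map e y, hy⟩⟩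
  have hactS : ∀ {a b}, actG.Adj a b → a ∈ S ∧ b ∈ S := by
    intro a b hab
    rw [hactG, SimpleGraph.fromRel_adj] at hab
    obtain ⟨hne, h | h⟩ := hab
    · obtain ⟨e, h0, he1, he2⟩ := h
      subst he1; subst he2
      exact hmapS e h0
    · obtain ⟨e, h0, he1, he2⟩ := h
      subst he1; subst he2
      exact ⟨(hmapS e h0).2, (hmapS e h0).1⟩
  have hne0 : ¬ N.IsZero := hindec.1
  obtain ⟨v₀, x₀, hx₀⟩ : ∃ v, ∃ x : N.space v, x ≠ 0 := by
    by_contra hc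
    push_neg at hc
    exact hne0 fun v y => hc v y
  have hv₀ : v₀ ∈ S := ⟨x₀, hx₀⟩
  set A : Set V := {v | actG.Reachable v₀ v} with hA
  have hAcl : ∀ e, N.map e ≠ 0 → (s e ∈ A ↔ t e ∈ A) := by
    intro e h0
    constructor
    · intro h; exact h.trans (hactAdj e h0).reachable
    · intro h; exact h.trans (hactAdj e h0).symm.reachable
  rcases hindec.2 _ _ ⟨restrIso N A hAcl⟩ with hz1 | hz2
  · exfalso
    have hv₀A : v₀ ∈ A := SimpleGraph.Reachable.refl v₀
    exact hx₀ (restrRep_isZero N A hAcl hz1 hv₀A x₀)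
  have hSA : S ⊆ A := by
    intro v hv
    by_contra hvA
    obtain ⟨y, hy⟩ := hv
    exact hy (restrRep_isZero N Aᶜ (compl_closure N A hAcl) hz2 hvA y)
  have hwalkS : ∀ (a b : V) (p : actG.Walk a b), ∀ (ha : a ∈ S) (hb : b ∈ S),
      ((underlying s t).induce S).Reachable ⟨a, ha⟩ ⟨b, hb⟩ := by
    intro a b p
    induction p with
    | nil => intro ha hb; exact SimpleGraph.Reachable.refl _
    | cons h q ih =>
      intro ha hb
      have hc := (hactS h).2
      have hadj' : ((underlying s t).induce S).Adj ⟨_, ha⟩ ⟨_, hc⟩ := hle h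
      exact hadj'.reachable.trans (ih hc hb)
  have hconn : ((underlying s t).induce S).Connected := by
    rw [SimpleGraph.connected_iff]
    refine ⟨?_, ⟨⟨v₀, hv₀⟩⟩⟩
    rintro ⟨a, ha⟩ ⟨b, hb⟩
    obtain ⟨p⟩ := (hSA ha).symm.trans (hSA hb)
    exact hwalkS a b p ha hb
  have hactive : ∀ e, s e ∈ S → t e ∈ S → N.map e ≠ 0 := by
    intro e hs ht
    obtain ⟨p⟩ : actG.Reachable (s e) (t e) := (hSA hs).symm.trans (hSA ht)
    have hq := p.toPath.2
    have hinj : Function.Injective (SimpleGraph.Hom.ofLE hle) := by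
      intro a b h
      simpa using h
    have hmq : ((p.toPath.1).map (SimpleGraph.Hom.ofLE hle)).IsPath :=
      SimpleGraph.Walk.map_isPath_of_injective hinj hq
    have hadj : (underlying s t).Adj (s e) (t e) := by
      rw [underlying, SimpleGraph.fromRel_adj]
      exact ⟨hloop e, Or.inl ⟨e, rfl, rfl⟩⟩
    have hone : (SimpleGraph.Walk.cons hadj SimpleGraph.Walk.nil).IsPath := by
      rw [SimpleGraph.Walk.cons_isPath_iff]
      refine ⟨SimpleGraph.Walk.IsPath.nil, ?_⟩
      simp [SimpleGraph.Walk.support_nil, hloop e]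
    have huniq := htree.IsAcyclic.path_unique
      ⟨(p.toPath.1).map (SimpleGraph.Hom.ofLE hle), hmq⟩ ⟨_, hone⟩
    have hval := congrArg (fun q : (underlying s t).Path (s e) (t e) => q.1.length) huniq
    simp only [SimpleGraph.Walk.length_map] at hval
    have hlen : (p.toPath.1).length = 1 := by
      simpa using hval
    have hadj2 : actG.Adj (s e) (t e) := SimpleGraph.Walk.adj_of_length_eq_one hlen
    rw [hactG, SimpleGraph.fromRel_adj] at hadj2
    obtain ⟨hne, h | h⟩ := hadj2
    · obtain ⟨e', h0, he1, he2⟩ := h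
      have hee : e' = e := hmulti e' e (Or.inl ⟨he1, he2⟩)
      rwa [hee] at h0
    · obtain ⟨e', h0, he1, he2⟩ := h
      have hee : e' = e := hmulti e' e (Or.inr ⟨he1, he2⟩)
      exact absurd (he1 ▸ congrArg s hee ▸ rfl : s e = t e) (hloop e)
  choose μ hμ using fun e => hx (t e) (N.map e (x (s e)))
  have hμne : ∀ e, s e ∈ S → t e ∈ S → μ e ≠ 0 := by
    intro e hs ht h0
    have h1 : N.map e (x (s e)) ≠ 0 := by
      have hm := hactive e hs ht
      intro hmx
      apply hm
      apply LinearMap.ext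
      intro y
      obtain ⟨r, hr⟩ := hx (s e) y
      rw [← hr, map_smul, hmx, smul_zero, LinearMap.zero_apply]
    exact h1 (by rw [← hμ e, h0, zero_smul])
  set P1 : V → V → Prop := fun a b => ∃ e, s e = a ∧ t e = b ∧ s e ∈ S ∧ t e ∈ S with hP1
  have hP1uniq : ∀ (a b : V) (e e' : E), (s e = a ∧ t e = b) → (s e' = a ∧ t e' = b) → e = e' := by
    rintro a b e e' ⟨h1, h2⟩ ⟨h3, h4⟩
    exact hmulti e e' (Or.inl ⟨h1.trans h3.symm, h2.trans h4.symm⟩)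
  set d : V → V → kˣ := fun a b =>
    if h : P1 a b then Units.mk0 (μ h.choose)
      (hμne _ h.choose_spec.2.2.1 h.choose_spec.2.2.2)
    else if h' : P1 b a then (Units.mk0 (μ h'.choose)
      (hμne _ h'.choose_spec.2.2.1 h'.choose_spec.2.2.2))⁻¹
    else 1 with hd
  have hd_int : ∀ e, s e ∈ S → t e ∈ S → (d (s e) (t e) : k) = μ e := by
    intro e hs ht
    have hP : P1 (s e) (t e) := ⟨e, rfl, rfl, hs, ht⟩
    have hde : d (s e) (t e) = Units.mk0 (μ hP.choose)
        (hμne _ hP.choose_spec.2.2.1 hP.choose_spec.2.2.2) := by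
      simp only [hd]
      rw [dif_pos hP]
    have he : hP.choose = e :=
      hP1uniq _ _ _ _ ⟨hP.choose_spec.1, hP.choose_spec.2.1⟩ ⟨rfl, rfl⟩
    rw [hde, Units.val_mk0, he]
  have hdsym : ∀ a b, (underlying s t).Adj a b → d a b * d b a = 1 := by
    intro a b hab
    have hne : a ≠ b := hab.ne
    have hnotboth : P1 a b → ¬ P1 b a := by
      rintro ⟨e, he1, he2, -, -⟩ ⟨e', he1', he2', -, -⟩
      have hee : e = e' := hmulti e e' (Or.inr ⟨he1.trans he2'.symm, he2.trans he1'.symm⟩)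
      apply hne
      rw [← he1, hee, he1']
    by_cases h : P1 a b
    · have h' : ¬ P1 b a := hnotboth h
      simp only [hd]
      rw [dif_pos h, dif_neg h', dif_pos h, mul_inv_cancel]
    · by_cases h' : P1 b a
      · simp only [hd]
        rw [dif_neg h, dif_pos h', dif_pos h', inv_mul_cancel]
      · simp only [hd]
        rw [dif_neg h, dif_neg h', dif_neg h', dif_neg h, one_mul]
  obtain ⟨lam, hlam⟩ := gauge htree d hdsym v₀
  set x' : ∀ v, N.space v := fun v => (lam v : k) • x v with hx'
  have hx'ne : ∀ v, v ∈ S → x' v ≠ 0 := by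
    intro v hv h0
    rcases smul_eq_zero.mp h0 with h | h
    · exact absurd h (Units.ne_zero _)
    · exact absurd h (hxne v hv)
  have hx'gen : ∀ v (y : N.space v), ∃ r : k, r • x' v = y := by
    intro v y
    obtain ⟨r, hr⟩ := hx v y
    refine ⟨r * (((lam v)⁻¹ : kˣ) : k), ?_⟩
    show (r * _) • ((lam v : k) • x v) = y
    rw [smul_smul, mul_assoc, Units.inv_mul, mul_one, hr]
  have hgauge : ∀ e, s e ∈ S → t e ∈ S → N.map e (x' (s e)) = x' (t e) := by
    intro e hs ht
    have hadj : (underlying s t).Adj (s e) (t e) := by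
      rw [underlying, SimpleGraph.fromRel_adj]
      exact ⟨hloop e, Or.inl ⟨e, rfl, rfl⟩⟩
    have h1 := hlam (s e) (t e) hadj
    show N.map e ((lam (s e) : k) • x (s e)) = (lam (t e) : k) • x (t e)
    rw [map_smul, ← hμ e, h1, Units.val_mul, hd_int e hs ht, smul_smul]
  refine ⟨S, hconn, ⟨⟨fun v => thinEquiv k (v ∈ S) (x' v) (fun hv => hx'ne v hv)
    (hx'gen v) (fun hv => hz v hv), ?_⟩⟩⟩
  intro e c
  by_cases ht : t e ∈ S
  · by_cases hs : s e ∈ S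
    · show thinEquiv k (t e ∈ S) (x' (t e)) _ _ _ (restrictMap k _ _ c)
        = N.map e (thinEquiv k (s e ∈ S) (x' (s e)) _ _ _ c)
      erw [restrictMap_pos hs, thinEquiv_apply _ _ _ _ ht, thinEquiv_apply _ _ _ _ hs,
        map_smul, hgauge e hs ht]
    · show thinEquiv k (t e ∈ S) (x' (t e)) _ _ _ (restrictMap k _ _ c)
        = N.map e (thinEquiv k (s e ∈ S) (x' (s e)) (fun hv => hx'ne _ hv)
          (hx'gen _) (fun hv => hz _ hv) c)
      have h1 := hz (s e) hs ((thinEquiv k (s e ∈ S) (x' (s e)) (fun hv => hx'ne _ hv)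
        (hx'gen _) (fun hv => hz _ hv)) c)
      erw [restrictMap_neg hs, map_zero, h1, map_zero]
  · exact (hz (t e) ht _).trans (hz (t e) ht _).symm

end Stmt6Aux

/-- For a finite tree quiver `Q`, the assignment `S ↦ M(S)` (full subquiver
on a vertex set `S`) is a bijection between connected subquivers of `Q` (equivalently, vertex
sets `S` whose induced subgraph is connected, connectedness forcing fullness in a tree) and
isomorphism classes of thin indecomposable representations of `Q`: each `M(S)` is thin and
indecomposable, the assignment is injective up to isomorphism, and every thin indecomposable
representation is isomorphic to some `M(S)`. -/
theorem stmt6 (k : Type) [Field k] {V E : Type} [Fintype V] [Fintype E] (s t : E → V)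
    (hloop : ∀ e, s e ≠ t e)
    (hmulti : ∀ e e' : E,
      (s e = s e' ∧ t e = t e') ∨ (s e = t e' ∧ t e = s e') → e = e')
    (htree : (underlying s t).IsTree) :
    (∀ S : Set V, ((underlying s t).induce S).Connected →
      (subsetRep k s t S).Thin ∧ (subsetRep k s t S).Indecomposable) ∧
    (∀ S S' : Set V, ((underlying s t).induce S).Connected →
      ((underlying s t).induce S').Connected →
      Nonempty (QRep.Iso (subsetRep k s t S) (subsetRep k s t S')) → S = S') ∧
    (∀ N : QRep k s t, N.Thin → N.Indecomposable →
      ∃ S : Set V, ((underlying s t).induce S).Connected ∧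
        Nonempty (QRep.Iso (subsetRep k s t S) N)) := by
  refine ⟨?_, ?_, ?_⟩
  · intro S hS
    exact ⟨Stmt6Aux.subsetRep_thin S, Stmt6Aux.subsetRep_indec hS⟩
  · rintro S S' _ _ ⟨f⟩
    ext v
    exact ⟨fun hv => Stmt6Aux.mem_of_iso f hv,
      fun hv => Stmt6Aux.mem_of_iso (Stmt6Aux.isoSymm f) hv⟩
  · intro N hthin hindec
    exact Stmt6Aux.part3 hloop hmulti htree N hthin hindec
end

section
/- Let Q be a finite connected quiver such that every indecomposable finite-dimensional representation of Q is thin. Then the underlying graph of Q is a Dynkin graph of type A, i.e. Q is a quiver of type A_n for some n. -/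
namespace QRep
variable {k : Type} [Field k] {V E : Type} {s t : E → V}

lemma indec_of_endo (M : QRep k s t) (hnz : ¬ M.IsZero)
    (hidem : ∀ φ : ∀ v, M.space v →ₗ[k] M.space v,
      (∀ (e : E) (x : M.space (s e)), φ (t e) (M.map e x) = M.map e (φ (s e) x)) →
      (∀ v x, φ v (φ v x) = φ v x) →
      (∀ v x, φ v x = 0) ∨ (∀ v x, φ v x = x)) :
    M.Indecomposable := by
  refine ⟨hnz, fun N₁ N₂ hiso => ?_⟩
  obtain ⟨f⟩ := hiso
  classical
  let π : ∀ v, (N₁.space v × N₂.space v) →ₗ[k] (N₁.space v × N₂.space v) :=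
    fun v => (LinearMap.inl k _ _).comp (LinearMap.fst k (N₁.space v) (N₂.space v))
  let φ : ∀ v, M.space v →ₗ[k] M.space v :=
    fun v => ((f.app v).symm.toLinearMap.comp (π v)).comp (f.app v).toLinearMap
  have hφ : ∀ v x, φ v x = (f.app v).symm (π v (f.app v x)) := fun v x => rfl
  have happ : ∀ (v) (x : M.space v), f.app v (φ v x) = π v (f.app v x) := by
    intro v x; rw [hφ]; exact (f.app v).apply_symm_apply _
  have hπmap : ∀ (e : E) (y : N₁.space (s e) × N₂.space (s e)),
      π (t e) ((N₁.prod N₂).map e y) = (N₁.prod N₂).map e (π (s e) y) := by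
    intro e y
    show π (t e) ((N₁.map e).prodMap (N₂.map e) y) = (N₁.map e).prodMap (N₂.map e) (π (s e) y)
    simp [π, LinearMap.prodMap_apply]
  have hcomm : ∀ (e : E) (x : M.space (s e)), φ (t e) (M.map e x) = M.map e (φ (s e) x) := by
    intro e x
    erw [hφ, hφ, f.comm e x, hπmap]
    rw [LinearEquiv.symm_apply_eq, f.comm e _]
    congr 1
    exact ((f.app (s e)).apply_symm_apply _).symm
  have hid : ∀ v x, φ v (φ v x) = φ v x := by
    intro v x
    erw [hφ, hφ, (f.app v).apply_symm_apply]
    have h2 : π v (π v (f.app v x)) = π v (f.app v x) := by simp [π]; rfl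
    erw [h2]; rfl
  rcases hidem φ hcomm hid with h0 | h1
  · left
    intro v y
    have h := happ v ((f.app v).symm (y, 0))
    erw [h0, map_zero, (f.app v).apply_symm_apply] at h
    have h2 : π v (y, 0) = (y, 0) := by simp [π]
    rw [h2] at h
    exact (congrArg Prod.fst h).symm
  · right
    intro v y
    have h := happ v ((f.app v).symm (0, y))
    erw [h1, (f.app v).apply_symm_apply] at h
    have h2 : π v (0, y) = (0, 0) := by simp [π]
    rw [h2] at h
    simpa using congrArg Prod.snd h

end QRep

lemma idem_comm_trivial {k : Type} [Field k] (A : Matrix (Fin 2) (Fin 2) k)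
    (hc : A * !![1,1;0,1] = !![1,1;0,1] * A) (hi : A * A = A) : A = 0 ∨ A = 1 := by
  have e00 : (A * !![1,1;0,1] : Matrix (Fin 2) (Fin 2) k) 0 0
      = (!![(1:k),1;0,1] * A : Matrix (Fin 2) (Fin 2) k) 0 0 := by rw [hc]
  have e01 : (A * !![1,1;0,1] : Matrix (Fin 2) (Fin 2) k) 0 1
      = (!![(1:k),1;0,1] * A : Matrix (Fin 2) (Fin 2) k) 0 1 := by rw [hc]
  simp [Matrix.mul_apply, Fin.sum_univ_two] at e00 e01
  have hc0 : A 1 0 = 0 := e00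
  have hd : A 1 1 = A 0 0 := by linear_combination -e01
  have i00 : (A * A : Matrix (Fin 2) (Fin 2) k) 0 0 = A 0 0 := by rw [hi]
  have i01 : (A * A : Matrix (Fin 2) (Fin 2) k) 0 1 = A 0 1 := by rw [hi]
  simp only [Matrix.mul_apply, Fin.sum_univ_two, hc0, hd] at i00 i01
  have hq : A 0 0 * (A 0 0 - 1) = 0 := by linear_combination i00
  rcases mul_eq_zero.mp hq with ha | ha
  · left
    have hb : A 0 1 = 0 := by linear_combination 2 * A 0 1 * ha - i01
    ext i j
    fin_cases i <;> fin_cases j <;> simp [ha, hb, hc0, hd]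
  · right
    have ha : A 0 0 = 1 := by linear_combination ha
    have hb : A 0 1 = 0 := by linear_combination i01 - 2 * A 0 1 * ha
    ext i j
    fin_cases i <;> fin_cases j <;> simp [ha, hb, hc0, hd, Matrix.one_apply]

noncomputable def bridgeRep (k : Type) [Field k] {V E : Type} (s t : E → V) (e₀ : E) :
    QRep k s t :=
  letI := Classical.decEq E
  { space := fun _ => Fin 2 → k
    acg := fun _ => inferInstance
    mod := fun _ => inferInstance
    map := fun e => if e = e₀ then Matrix.toLin' !![(1:k),1;0,1] else LinearMap.id }

lemma bridge_false {k : Type} [Field k] {V E : Type} (s t : E → V)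
    (hthin : ∀ M : QRep k s t, M.FinDim → M.Indecomposable → M.Thin)
    (e₀ : E)
    (hconn' : (underlying (fun e : {e : E // e ≠ e₀} => s e.1) (fun e => t e.1)).Connected) :
    False := by
  classical
  set M := bridgeRep k s t e₀ with hM
  have hsp : ∀ v, M.space v = (Fin 2 → k) := fun _ => rfl
  have hmapid : ∀ e : E, e ≠ e₀ → M.map e = LinearMap.id := by
    intro e he
    show (if e = e₀ then Matrix.toLin' !![(1:k),1;0,1] else LinearMap.id) = LinearMap.id
    rw [if_neg he]
  have hmap0 : M.map e₀ = Matrix.toLin' !![(1:k),1;0,1] := by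
    show (if e₀ = e₀ then Matrix.toLin' !![(1:k),1;0,1] else LinearMap.id) = _
    rw [if_pos rfl]
  have hV : Nonempty V := hconn'.nonempty
  have hind : M.Indecomposable := by
    apply QRep.indec_of_endo
    · intro hz
      obtain ⟨v⟩ := hV
      have h1 := congrFun (hz v (fun _ => (1:k))) 0
      exact one_ne_zero h1
    · intro φ hcomm hidem
      have hadj : ∀ a b : V,
          (underlying (fun e : {e : E // e ≠ e₀} => s e.1) (fun e => t e.1)).Adj a b →
          φ a = φ b := by
        intro a b hab
        obtain ⟨hne, ⟨e, he1, he2⟩ | ⟨e, he1, he2⟩⟩ := hab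
        · replace he1 : s e.1 = a := he1
          replace he2 : t e.1 = b := he2
          have hc := hcomm e.1
          rw [hmapid e.1 e.2] at hc
          rw [← he1, ← he2]
          exact LinearMap.ext fun x => (hc x).symm
        · replace he1 : s e.1 = b := he1
          replace he2 : t e.1 = a := he2
          have hc := hcomm e.1
          rw [hmapid e.1 e.2] at hc
          rw [← he1, ← he2]
          exact LinearMap.ext fun x => hc x
      have hreach : ∀ a b : V,
          (underlying (fun e : {e : E // e ≠ e₀} => s e.1) (fun e => t e.1)).Reachable a b →
          φ a = φ b := by
        intro a b h
        obtain ⟨w⟩ := h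
        induction w with
        | nil => rfl
        | cons h p ih => exact (hadj _ _ h).trans ih
      have hall : ∀ v, φ v = φ (s e₀) := fun v =>
        hreach v (s e₀) (hconn'.preconnected v (s e₀))
      set B : (Fin 2 → k) →ₗ[k] (Fin 2 → k) := φ (s e₀) with hB
      have hBc : B ∘ₗ Matrix.toLin' !![(1:k),1;0,1] = Matrix.toLin' !![(1:k),1;0,1] ∘ₗ B := by
        apply LinearMap.ext
        intro x
        have := hcomm e₀ x
        rw [hmap0] at this
        rw [hall (t e₀)] at this
        exact this
      have hBi : B ∘ₗ B = B := LinearMap.ext fun x => hidem (s e₀) x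
      have hAc : LinearMap.toMatrix' B * !![(1:k),1;0,1] = !![(1:k),1;0,1] * LinearMap.toMatrix' B := by
        have h1 := congrArg LinearMap.toMatrix' hBc
        rwa [LinearMap.toMatrix'_comp, LinearMap.toMatrix'_comp,
          LinearMap.toMatrix'_toLin'] at h1
      have hAi : LinearMap.toMatrix' B * LinearMap.toMatrix' B = LinearMap.toMatrix' B := by
        have h1 := congrArg LinearMap.toMatrix' hBi
        rwa [LinearMap.toMatrix'_comp] at h1
      rcases idem_comm_trivial _ hAc hAi with hA | hA
      · left
        intro v x
        have hB0 : B = 0 := by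
          have := congrArg Matrix.toLin' hA
          rwa [Matrix.toLin'_toMatrix', map_zero] at this
        rw [hall v, hB0]
        rfl
      · right
        intro v x
        have hB1 : B = LinearMap.id := by
          have := congrArg Matrix.toLin' hA
          rwa [Matrix.toLin'_toMatrix', Matrix.toLin'_one] at this
        rw [hall v, hB1]
        rfl
  have hfd : M.FinDim := fun v => inferInstanceAs (FiniteDimensional k (Fin 2 → k))
  have hth := hthin M hfd hind
  obtain ⟨v⟩ := hV
  have h2 : Module.rank k (Fin 2 → k) = 2 := by simpa using rank_fin_fun (R := k) 2
  have h3 := hth v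
  have h4 : Module.rank k (M.space v) = Module.rank k (Fin 2 → k) := rfl
  rw [h4, h2] at h3
  norm_num at h3

open Submodule in
lemma deg3_false {k : Type} [Field k] {V E : Type} (s t : E → V)
    (hthin : ∀ M : QRep k s t, M.FinDim → M.Indecomposable → M.Thin)
    (c a1 a2 a3 : V) (e1 e2 e3 : E)
    (hd12 : a1 ≠ a2) (hd13 : a1 ≠ a3) (hd23 : a2 ≠ a3)
    (hc1 : a1 ≠ c) (hc2 : a2 ≠ c) (hc3 : a3 ≠ c)
    (he12 : e1 ≠ e2) (he13 : e1 ≠ e3) (he23 : e2 ≠ e3)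
    (ho1 : (s e1 = c ∧ t e1 = a1) ∨ (s e1 = a1 ∧ t e1 = c))
    (ho2 : (s e2 = c ∧ t e2 = a2) ∨ (s e2 = a2 ∧ t e2 = c))
    (ho3 : (s e3 = c ∧ t e3 = a3) ∨ (s e3 = a3 ∧ t e3 = c)) : False := by
  classical
  set w1 : Fin 2 → k := ![1, 0] with hw1
  set w2 : Fin 2 → k := ![0, 1] with hw2
  set w3 : Fin 2 → k := ![1, 1] with hw3
  set f1 : (Fin 2 → k) →ₗ[k] k := LinearMap.proj 1 with hf1
  set f2 : (Fin 2 → k) →ₗ[k] k := LinearMap.proj 0 with hf2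
  set f3 : (Fin 2 → k) →ₗ[k] k := (LinearMap.proj 0 : (Fin 2 → k) →ₗ[k] k) -
    (LinearMap.proj 1 : (Fin 2 → k) →ₗ[k] k) with hf3
  -- pointwise facts
  have hfw1 : f1 w1 = 0 := by show w1 1 = 0; simp [hw1]
  have hfw2 : f2 w2 = 0 := by show w2 0 = 0; simp [hw2]
  have hfw3 : f3 w3 = 0 := by show w3 0 - w3 1 = 0; simp [hw3]
  have hwne1 : w1 ≠ 0 := fun h => one_ne_zero (congrFun h 0 : (1:k) = 0)
  have hwne2 : w2 ≠ 0 := fun h => one_ne_zero (congrFun h 1 : (1:k) = 0)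
  have hwne3 : w3 ≠ 0 := fun h => one_ne_zero (congrFun h 0 : (1:k) = 0)
  have hker1 : ∀ x : Fin 2 → k, f1 x = 0 → x ∈ span k {w1} := by
    intro x hx
    have hx1 : x 1 = 0 := hx
    rw [mem_span_singleton]
    refine ⟨x 0, funext fun j => ?_⟩
    fin_cases j <;> simp [hw1, hx1]
  have hker2 : ∀ x : Fin 2 → k, f2 x = 0 → x ∈ span k {w2} := by
    intro x hx
    have hx1 : x 0 = 0 := hx
    rw [mem_span_singleton]
    refine ⟨x 1, funext fun j => ?_⟩
    fin_cases j <;> simp [hw2, hx1]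
  have hker3 : ∀ x : Fin 2 → k, f3 x = 0 → x ∈ span k {w3} := by
    intro x hx
    have hx1 : x 0 - x 1 = 0 := hx
    rw [mem_span_singleton]
    refine ⟨x 0, funext fun j => ?_⟩
    fin_cases j <;> simp [hw3, sub_eq_zero.mp hx1]
  set T : V → Submodule k (Fin 2 → k) := fun v =>
    if v = c then ⊤ else if v = a1 then span k {w1} else if v = a2 then span k {w2}
      else if v = a3 then span k {w3} else ⊥ with hT
  have hTc : T c = ⊤ := by rw [hT]; simp
  have hTa1 : T a1 = span k {w1} := by rw [hT]; simp [hc1]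
  have hTa2 : T a2 = span k {w2} := by rw [hT]; simp [hc2, hd12.symm]
  have hTa3 : T a3 = span k {w3} := by rw [hT]; simp [hc3, hd13.symm, hd23.symm]
  have hmemc : ∀ x : Fin 2 → k, x ∈ T c := by intro x; rw [hTc]; exact mem_top
  set g : E → ((Fin 2 → k) →ₗ[k] (Fin 2 → k)) := fun e =>
    if e = e1 then (if s e1 = c then f1.smulRight w1 else LinearMap.id)
    else if e = e2 then (if s e2 = c then f2.smulRight w2 else LinearMap.id)
    else if e = e3 then (if s e3 = c then f3.smulRight w3 else LinearMap.id)
    else 0 with hg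
  have hge1 : g e1 = (if s e1 = c then f1.smulRight w1 else LinearMap.id) := by
    rw [hg]; simp
  have hge2 : g e2 = (if s e2 = c then f2.smulRight w2 else LinearMap.id) := by
    rw [hg]; simp [he12.symm]
  have hge3 : g e3 = (if s e3 = c then f3.smulRight w3 else LinearMap.id) := by
    rw [hg]; simp [he13.symm, he23.symm]
  -- maps respect the submodules
  have key0 : ∀ (ai : V) (ei : E) (wi : Fin 2 → k) (fi : (Fin 2 → k) →ₗ[k] k),
      T ai = span k {wi} →
      g ei = (if s ei = c then fi.smulRight wi else LinearMap.id) →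
      ((s ei = c ∧ t ei = ai) ∨ (s ei = ai ∧ t ei = c)) →
      ai ≠ c →
      ∀ x ∈ T (s ei), g ei x ∈ T (t ei) := by
    intro ai ei wi fi hTai hgei hoi hanec x hx
    rcases hoi with ⟨hs, ht⟩ | ⟨hs, ht⟩
    · rw [hgei, if_pos hs, ht, hTai]
      exact smul_mem _ _ (mem_span_singleton_self wi)
    · have hnc : ¬ (s ei = c) := by rw [hs]; exact hanec
      rw [hgei, if_neg hnc, ht]
      exact hmemc x
  have hmapsTo : ∀ e : E, ∀ x ∈ T (s e), g e x ∈ T (t e) := by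
    intro e x hx
    by_cases h1 : e = e1
    · subst h1; exact key0 a1 e w1 f1 hTa1 hge1 ho1 hc1 x hx
    by_cases h2 : e = e2
    · subst h2; exact key0 a2 e w2 f2 hTa2 hge2 ho2 hc2 x hx
    by_cases h3 : e = e3
    · subst h3; exact key0 a3 e w3 f3 hTa3 hge3 ho3 hc3 x hx
    have : g e = 0 := by rw [hg]; simp [h1, h2, h3]
    rw [this]
    exact zero_mem _
  set M : QRep k s t :=
    { space := fun v => ↥(T v)
      acg := fun v => inferInstance
      mod := fun v => inferInstance
      map := fun e => (g e).restrict (fun x hx => hmapsTo e x hx) } with hMdef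
  have hmapval : ∀ (e : E) (x : M.space (s e)), (M.map e x).1 = g e x.1 := by
    intro e x
    rfl
  have hind : M.Indecomposable := by
    apply QRep.indec_of_endo
    · intro hz
      have h1 := congrArg Subtype.val (hz c ⟨w1, hmemc w1⟩)
      exact one_ne_zero (congrFun h1 0 : (1:k) = 0)
    · intro φ hcomm hid
      have hsub : ∀ {v v' : V} (h : v = v') (x : M.space v) (x' : M.space v'),
          x.1 = x'.1 → (φ v x).1 = (φ v' x').1 := by
        intro v v' h
        subst h
        intro x x' hx
        rw [Subtype.ext hx]
      -- Step 1: the value of φ at c on each wi lies in span {wi}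
      have key1 : ∀ (ai : V) (ei : E) (wi : Fin 2 → k) (fi : (Fin 2 → k) →ₗ[k] k),
          T ai = span k {wi} →
          g ei = (if s ei = c then fi.smulRight wi else LinearMap.id) →
          ((s ei = c ∧ t ei = ai) ∨ (s ei = ai ∧ t ei = c)) →
          ai ≠ c → fi wi = 0 → wi ≠ 0 →
          (∀ x, fi x = 0 → x ∈ span k {wi}) →
          (φ c ⟨wi, hmemc wi⟩).1 ∈ span k {wi} := by
        intro ai ei wi fi hTai hgei hoi hanec hfwi hwnei hkeri
        rcases hoi with ⟨hs, ht⟩ | ⟨hs, ht⟩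
        · -- out-edge : s ei = c, t ei = ai
          have hmem_s : wi ∈ T (s ei) := by rw [hs]; exact hmemc wi
          have hzero : M.map ei ⟨wi, hmem_s⟩ = 0 := by
            apply Subtype.ext
            rw [hmapval]
            show g ei wi = (0 : Fin 2 → k)
            rw [hgei, if_pos hs]
            show fi wi • wi = 0
            rw [hfwi, zero_smul]
          have h := hcomm ei ⟨wi, hmem_s⟩
          rw [hzero, map_zero] at h
          have hval := congrArg Subtype.val h
          rw [hmapval] at hval
          have hgv : g ei ((φ (s ei) ⟨wi, hmem_s⟩).1)
              = fi ((φ (s ei) ⟨wi, hmem_s⟩).1) • wi := by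
            rw [hgei, if_pos hs]; rfl
          rw [hgv] at hval
          have hf0 : fi ((φ (s ei) ⟨wi, hmem_s⟩).1) = 0 := by
            rcases smul_eq_zero.mp hval.symm with h' | h'
            · exact h'
            · exact absurd h' hwnei
          have heq : (φ (s ei) ⟨wi, hmem_s⟩).1 = (φ c ⟨wi, hmemc wi⟩).1 :=
            hsub hs _ _ rfl
          rw [heq] at hf0
          exact hkeri _ hf0
        · -- in-edge : s ei = ai, t ei = c
          have hmem_s : wi ∈ T (s ei) := by
            rw [hs, hTai]; exact mem_span_singleton_self wi
          have hgid : g ei = LinearMap.id := by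
            rw [hgei, if_neg (by rw [hs]; exact hanec)]
          have hmape : (M.map ei ⟨wi, hmem_s⟩).1 = wi := by
            rw [hmapval, hgid]; rfl
          have h := hcomm ei ⟨wi, hmem_s⟩
          have hval := congrArg Subtype.val h
          rw [hmapval, hgid] at hval
          have hlhs : (φ (t ei) (M.map ei ⟨wi, hmem_s⟩)).1
              = (φ c ⟨wi, hmemc wi⟩).1 := hsub ht _ _ hmape
          have hval2 : (φ c ⟨wi, hmemc wi⟩).1 = (φ (s ei) ⟨wi, hmem_s⟩).1 := by
            have h' := hlhs.symm.trans hval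
            simpa using h'
          rw [hval2]
          have hTs : T (s ei) = span k {wi} := by rw [hs, hTai]
          exact hTs.le (φ (s ei) ⟨wi, hmem_s⟩).2
      have hin1 := key1 a1 e1 w1 f1 hTa1 hge1 ho1 hc1 hfw1 hwne1 hker1
      have hin2 := key1 a2 e2 w2 f2 hTa2 hge2 ho2 hc2 hfw2 hwne2 hker2
      have hin3 := key1 a3 e3 w3 f3 hTa3 hge3 ho3 hc3 hfw3 hwne3 hker3
      obtain ⟨m1, hm1⟩ := mem_span_singleton.mp hin1
      obtain ⟨m2, hm2⟩ := mem_span_singleton.mp hin2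
      obtain ⟨m3, hm3⟩ := mem_span_singleton.mp hin3
      -- additivity : w3 = w1 + w2
      have hw12 : (⟨w3, hmemc w3⟩ : M.space c)
          = ⟨w1, hmemc w1⟩ + ⟨w2, hmemc w2⟩ := by
        apply Subtype.ext
        show w3 = w1 + w2
        funext j
        fin_cases j <;> simp [hw1, hw2, hw3]
      have hp3 : (φ c ⟨w3, hmemc w3⟩).1
          = (φ c ⟨w1, hmemc w1⟩).1 + (φ c ⟨w2, hmemc w2⟩).1 := by
        rw [hw12, map_add]; rfl
      -- equate coordinates to get a single scalar
      have hmm : m3 • w3 = m1 • w1 + m2 • w2 := by rw [hm1, hm2, hm3, hp3]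
      have hc1' : m3 = m1 := by
        have := congrFun hmm 0
        simpa [hw1, hw2, hw3] using this
      have hc2' : m3 = m2 := by
        have := congrFun hmm 1
        simpa [hw1, hw2, hw3] using this
      set μ := m3 with hμdef
      -- φ at c is scalar multiplication by μ
      have hsc : ∀ x : M.space c, (φ c x).1 = μ • x.1 := by
        intro x
        have hx : x = (x.1 0) • ⟨w1, hmemc w1⟩ + (x.1 1) • ⟨w2, hmemc w2⟩ := by
          apply Subtype.ext
          show x.1 = x.1 0 • w1 + x.1 1 • w2
          funext j
          fin_cases j <;> simp [hw1, hw2]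
        rw [hx, map_add, map_smul, map_smul]
        show x.1 0 • (φ c ⟨w1, hmemc w1⟩).1 + x.1 1 • (φ c ⟨w2, hmemc w2⟩).1
            = μ • (x.1 0 • w1 + x.1 1 • w2)
        rw [← hm1, ← hm2, ← hc1', ← hc2']
        funext j
        simp only [Pi.add_apply, Pi.smul_apply, smul_eq_mul]
        ring
      -- idempotency gives μ² = μ
      have hidem2 : μ * μ = μ := by
        have h := hid c ⟨w1, hmemc w1⟩
        have hval := congrArg Subtype.val h
        rw [hsc, hsc] at hval
        have := congrFun hval 0
        simpa [hw1] using this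
      -- φ at each aᵢ is also scalar multiplication by μ
      have key2 : ∀ (ai : V) (ei : E) (wi zi : Fin 2 → k) (fi : (Fin 2 → k) →ₗ[k] k),
          T ai = span k {wi} →
          g ei = (if s ei = c then fi.smulRight wi else LinearMap.id) →
          ((s ei = c ∧ t ei = ai) ∨ (s ei = ai ∧ t ei = c)) →
          ai ≠ c → fi wi = 0 → fi zi = 1 →
          ∀ x : M.space ai, (φ ai x).1 = μ • x.1 := by
        intro ai ei wi zi fi hTai hgei hoi hanec hfwi hfzi
        have hmemai : wi ∈ T ai := by rw [hTai]; exact mem_span_singleton_self wi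
        have hbase : (φ ai ⟨wi, hmemai⟩).1 = μ • wi := by
          rcases hoi with ⟨hs, ht⟩ | ⟨hs, ht⟩
          · -- out-edge : s ei = c, t ei = ai ; use the vector zi
            have hmem_s : zi ∈ T (s ei) := by rw [hs]; exact hmemc zi
            have hmapz : (M.map ei ⟨zi, hmem_s⟩).1 = wi := by
              rw [hmapval]
              show g ei zi = wi
              rw [hgei, if_pos hs]
              show fi zi • wi = wi
              rw [hfzi, one_smul]
            have h := hcomm ei ⟨zi, hmem_s⟩
            have hval := congrArg Subtype.val h
            rw [hmapval] at hval
            have hlhs : (φ (t ei) (M.map ei ⟨zi, hmem_s⟩)).1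
                = (φ ai ⟨wi, hmemai⟩).1 := hsub ht _ _ hmapz
            have hrhs : g ei ((φ (s ei) ⟨zi, hmem_s⟩).1)
                = fi ((φ (s ei) ⟨zi, hmem_s⟩).1) • wi := by
              rw [hgei, if_pos hs]; rfl
            have hA : (φ ai ⟨wi, hmemai⟩).1
                = fi ((φ (s ei) ⟨zi, hmem_s⟩).1) • wi :=
              (hlhs.symm.trans hval).trans hrhs
            have heq : (φ (s ei) ⟨zi, hmem_s⟩).1 = (φ c ⟨zi, hmemc zi⟩).1 :=
              hsub hs _ _ rfl
            have hX : fi ((φ (s ei) ⟨zi, hmem_s⟩).1) = μ := by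
              rw [heq, hsc]
              show fi (μ • zi) = μ
              rw [map_smul, hfzi, smul_eq_mul, mul_one]
            rw [hA, hX]
          · -- in-edge : s ei = ai, t ei = c
            have hmem_s : wi ∈ T (s ei) := by
              rw [hs, hTai]; exact mem_span_singleton_self wi
            have hgid : g ei = LinearMap.id := by
              rw [hgei, if_neg (by rw [hs]; exact hanec)]
            have hmape : (M.map ei ⟨wi, hmem_s⟩).1 = wi := by
              rw [hmapval, hgid]; rfl
            have h := hcomm ei ⟨wi, hmem_s⟩
            have hval := congrArg Subtype.val h
            rw [hmapval, hgid] at hval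
            have hlhs : (φ (t ei) (M.map ei ⟨wi, hmem_s⟩)).1
                = (φ c ⟨wi, hmemc wi⟩).1 := hsub ht _ _ hmape
            have heq : (φ (s ei) ⟨wi, hmem_s⟩).1 = (φ ai ⟨wi, hmemai⟩).1 :=
              hsub hs _ _ rfl
            have h1 : (φ c ⟨wi, hmemc wi⟩).1 = μ • wi := by
              rw [hsc]
            have hA : (φ c ⟨wi, hmemc wi⟩).1 = (φ (s ei) ⟨wi, hmem_s⟩).1 := by
              have h' := hlhs.symm.trans hval
              simpa using h'
            show (φ ai ⟨wi, hmemai⟩).1 = μ • wi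
            rw [← heq, ← hA, h1]
        intro x
        obtain ⟨α, hα⟩ := mem_span_singleton.mp (hTai.le x.2)
        have hx : x = α • ⟨wi, hmemai⟩ := by
          apply Subtype.ext
          exact hα.symm
        rw [hx, map_smul]
        show α • (φ ai ⟨wi, hmemai⟩).1 = μ • (α • wi)
        rw [hbase]
        rw [smul_comm]
      have hsc1 := key2 a1 e1 w1 ![0,1] f1 hTa1 hge1 ho1 hc1 hfw1 (by show (![(0:k),1]) 1 = 1; simp)
      have hsc2 := key2 a2 e2 w2 ![1,0] f2 hTa2 hge2 ho2 hc2 hfw2 (by show (![(1:k),0]) 0 = 1; simp)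
      have hsc3 := key2 a3 e3 w3 ![1,0] f3 hTa3 hge3 ho3 hc3 hfw3
        (by show (![(1:k),0]) 0 - (![(1:k),0]) 1 = 1; simp)
      -- master : φ is scalar multiplication by μ everywhere
      have master : ∀ (v : V) (x : M.space v), (φ v x).1 = μ • x.1 := by
        intro v x
        by_cases h : v = c
        · subst h; exact hsc x
        by_cases h1 : v = a1
        · subst h1; exact hsc1 x
        by_cases h2 : v = a2
        · subst h2; exact hsc2 x
        by_cases h3 : v = a3
        · subst h3; exact hsc3 x
        have hbot : T v = ⊥ := by rw [hT]; simp [h, h1, h2, h3]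
        have hx0 : x = 0 := by
          apply Subtype.ext
          simpa using hbot.le x.2
        rw [hx0, map_zero]
        simp
      have hcases : μ = 0 ∨ μ = 1 := by
        rcases mul_eq_zero.mp (show μ * (μ - 1) = 0 by linear_combination hidem2) with h | h
        · exact Or.inl h
        · exact Or.inr (by linear_combination h)
      rcases hcases with hμ | hμ
      · left
        intro v x
        apply Subtype.ext
        rw [master, hμ]
        simp
      · right
        intro v x
        apply Subtype.ext
        rw [master, hμ]
        simp
  -- conclude : M is indecomposable, finite-dimensional but not thin
  have hfd : M.FinDim := fun v => inferInstanceAs (FiniteDimensional k ↥(T v))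
  have hth := hthin M hfd hind
  have h3 := hth c
  have h4 : Module.rank k (M.space c) = 2 := by
    show Module.rank k ↥(T c) = 2
    rw [hTc, rank_top]
    simp [rank_fin_fun]
  rw [h4] at h3
  norm_num at h3

section Combinatorics

variable {k : Type} [Field k] {V E : Type} (s t : E → V)

lemma noloop (hthin : ∀ M : QRep k s t, M.FinDim → M.Indecomposable → M.Thin)
    (hconn : (underlying s t).Connected) : ∀ e, s e ≠ t e := by
  intro e0 he
  apply bridge_false s t hthin e0
  apply SimpleGraph.Connected.mono ?_ hconn
  intro a b hab
  simp only [underlying, SimpleGraph.fromRel_adj] at hab ⊢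
  obtain ⟨hne, h⟩ := hab
  refine ⟨hne, ?_⟩
  rcases h with ⟨e, h1, h2⟩ | ⟨e, h1, h2⟩
  · have hee : e ≠ e0 := by
      rintro rfl
      exact hne (h1.symm.trans (he.trans h2))
    exact Or.inl ⟨⟨e, hee⟩, h1, h2⟩
  · have hee : e ≠ e0 := by
      rintro rfl
      exact hne (h2.symm.trans (he.symm ▸ h1))
    exact Or.inr ⟨⟨e, hee⟩, h1, h2⟩

lemma nomulti (hthin : ∀ M : QRep k s t, M.FinDim → M.Indecomposable → M.Thin)
    (hconn : (underlying s t).Connected) : ∀ e e' : E, e ≠ e' →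
    ¬ ((s e = s e' ∧ t e = t e') ∨ (s e = t e' ∧ t e = s e')) := by
  intro e0 e1 hne01 h
  apply bridge_false s t hthin e0
  apply SimpleGraph.Connected.mono ?_ hconn
  intro a b hab
  simp only [underlying, SimpleGraph.fromRel_adj] at hab ⊢
  obtain ⟨hne, hw⟩ := hab
  refine ⟨hne, ?_⟩
  rcases hw with ⟨e, h1, h2⟩ | ⟨e, h1, h2⟩
  · by_cases hee : e = e0
    · subst hee
      rcases h with ⟨hs, ht⟩ | ⟨hs, ht⟩
      · exact Or.inl ⟨⟨e1, fun hh => hne01 hh.symm⟩, hs ▸ h1, ht ▸ h2⟩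
      · exact Or.inr ⟨⟨e1, fun hh => hne01 hh.symm⟩, ht ▸ h2, hs ▸ h1⟩
    · exact Or.inl ⟨⟨e, hee⟩, h1, h2⟩
  · by_cases hee : e = e0
    · subst hee
      rcases h with ⟨hs, ht⟩ | ⟨hs, ht⟩
      · exact Or.inr ⟨⟨e1, fun hh => hne01 hh.symm⟩, hs ▸ h1, ht ▸ h2⟩
      · exact Or.inl ⟨⟨e1, fun hh => hne01 hh.symm⟩, ht ▸ h2, hs ▸ h1⟩
    · exact Or.inr ⟨⟨e, hee⟩, h1, h2⟩

lemma nodeg3 (hthin : ∀ M : QRep k s t, M.FinDim → M.Indecomposable → M.Thin)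
    (hconn : (underlying s t).Connected) :
    ∀ (c : V) (f1 f2 f3 : E), (s f1 = c ∨ t f1 = c) → (s f2 = c ∨ t f2 = c) →
      (s f3 = c ∨ t f3 = c) → f1 ≠ f2 → f1 ≠ f3 → f2 ≠ f3 → False := by
  intro c f1 f2 f3 hi1 hi2 hi3 h12 h13 h23
  have hl := noloop s t hthin hconn
  have hm := nomulti s t hthin hconn
  classical
  -- other endpoints
  have other : ∀ f : E, (s f = c ∨ t f = c) →
      ∃ a : V, a ≠ c ∧ ((s f = c ∧ t f = a) ∨ (s f = a ∧ t f = c)) := by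
    intro f hf
    by_cases hs : s f = c
    · exact ⟨t f, fun h => hl f (hs.trans h.symm), Or.inl ⟨hs, rfl⟩⟩
    · have ht : t f = c := hf.resolve_left hs
      exact ⟨s f, fun h => hl f (h.trans ht.symm), Or.inr ⟨rfl, ht⟩⟩
  obtain ⟨a1, ha1, ho1⟩ := other f1 hi1
  obtain ⟨a2, ha2, ho2⟩ := other f2 hi2
  obtain ⟨a3, ha3, ho3⟩ := other f3 hi3
  have hdist : ∀ (f f' : E) (a a' : V), f ≠ f' →
      ((s f = c ∧ t f = a) ∨ (s f = a ∧ t f = c)) →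
      ((s f' = c ∧ t f' = a') ∨ (s f' = a' ∧ t f' = c)) → a ≠ a' := by
    rintro f f' a a' hff (⟨hs, ht⟩ | ⟨hs, ht⟩) (⟨hs', ht'⟩ | ⟨hs', ht'⟩) rfl
    · exact hm f f' hff (Or.inl ⟨hs.trans hs'.symm, ht.trans ht'.symm⟩)
    · exact hm f f' hff (Or.inr ⟨hs.trans ht'.symm, ht.trans hs'.symm⟩)
    · exact hm f f' hff (Or.inr ⟨hs.trans ht'.symm, ht.trans hs'.symm⟩)
    · exact hm f f' hff (Or.inl ⟨hs.trans hs'.symm, ht.trans ht'.symm⟩)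
  exact deg3_false s t hthin c a1 a2 a3 f1 f2 f3
    (hdist f1 f2 a1 a2 h12 ho1 ho2) (hdist f1 f3 a1 a3 h13 ho1 ho3)
    (hdist f2 f3 a2 a3 h23 ho2 ho3) ha1 ha2 ha3 h12 h13 h23 ho1 ho2 ho3

end Combinatorics

lemma edges_lt {k : Type} [Field k] {V E : Type} [Fintype V] [Fintype E] (s t : E → V)
    (hthin : ∀ M : QRep k s t, M.FinDim → M.Indecomposable → M.Thin)
    (hconn : (underlying s t).Connected) : Fintype.card E < Fintype.card V := by
  classical
  by_contra hge
  push_neg at hge  -- card V ≤ card E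
  have hV : Nonempty V := hconn.nonempty
  obtain ⟨r⟩ := hV
  set G := underlying s t with hG
  set d : V → ℕ := fun v => G.dist r v with hd
  have hstep : ∀ v : {v : V // v ≠ r}, ∃ p : E × V,
      ((s p.1 = v.1 ∧ t p.1 = p.2) ∨ (s p.1 = p.2 ∧ t p.1 = v.1)) ∧ d p.2 < d v.1 := by
    intro ⟨v, hv⟩
    have hreach : G.Reachable r v := hconn.preconnected r v
    obtain ⟨w, hw⟩ := hreach.exists_walk_length_eq_dist
    cases hwr : w.reverse with
    | nil =>
      exfalso
      have := congrArg SimpleGraph.Walk.length hwr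
      rw [SimpleGraph.Walk.length_reverse] at this
      -- length w = 0 → r = v
      have hnil := SimpleGraph.Walk.eq_of_length_eq_zero this
      exact hv hnil.symm
    | cons h q =>
      rename_i u
      -- h : G.Adj v u, q : G.Walk u r
      have hlen : q.length + 1 = w.length := by
        have := congrArg SimpleGraph.Walk.length hwr
        rw [SimpleGraph.Walk.length_reverse] at this
        simpa using this.symm
      have hdu : d u < d v := by
        have h1 : G.dist u r ≤ q.length := SimpleGraph.dist_le q
        have h2 : d u = G.dist u r := SimpleGraph.dist_comm
        have h3 : d v = w.length := hw.symm
        omega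
      obtain ⟨hne, hor⟩ : v ≠ u ∧ _ := by
        have := h
        simp only [hG, underlying, SimpleGraph.fromRel_adj] at this
        exact this
      rcases hor with ⟨e, he1, he2⟩ | ⟨e, he1, he2⟩
      · exact ⟨(e, u), Or.inl ⟨he1, he2⟩, hdu⟩
      · exact ⟨(e, u), Or.inr ⟨he1, he2⟩, hdu⟩
  set f : {v : V // v ≠ r} → E := fun v => (hstep v).choose.1 with hf
  have hfinj : Function.Injective f := by
    intro v1 v2 hf12
    by_contra hne
    have hs1 := (hstep v1).choose_spec
    have hs2 := (hstep v2).choose_spec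
    set p1 := (hstep v1).choose
    set p2 := (hstep v2).choose
    have hvne : v1.1 ≠ v2.1 := fun h => hne (Subtype.ext h)
    have he : p1.1 = p2.1 := hf12
    rcases hs1.1 with ⟨ha, hb⟩ | ⟨ha, hb⟩ <;> rcases hs2.1 with ⟨hc, hd'⟩ | ⟨hc, hd'⟩
    · exact hvne (ha.symm.trans (he ▸ hc))
    · -- s p1 = v1, t p1 = p1.2 ; s p2 = p2.2, t p2 = v2
      have h1 : p2.2 = v1.1 := by rw [← hc, ← he, ha]
      have h2 : p1.2 = v2.1 := by rw [← hb, he, hd']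
      have k1 : d p2.2 = d v1.1 := by rw [h1]
      have k2 : d p1.2 = d v2.1 := by rw [h2]
      have l1 := hs1.2
      have l2 := hs2.2
      omega
    · have h1 : p2.2 = v1.1 := by rw [← hd', ← he, hb]
      have h2 : p1.2 = v2.1 := by rw [← ha, he, hc]
      have k1 : d p2.2 = d v1.1 := by rw [h1]
      have k2 : d p1.2 = d v2.1 := by rw [h2]
      have l1 := hs1.2
      have l2 := hs2.2
      omega
    · exact hvne (hb.symm.trans (he ▸ hd'))
  have hcard1 : Fintype.card {v : V // v ≠ r} = Fintype.card V - 1 := by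
    rw [Fintype.card_subtype_compl, Fintype.card_subtype_eq]
  have hnsurj : ∃ e0 : E, e0 ∉ Set.range f := by
    by_contra hsur
    push_neg at hsur
    have : Function.Surjective f := fun e => hsur e
    have hbij := Fintype.card_of_bijective ⟨hfinj, this⟩
    have hV1 : 1 ≤ Fintype.card V := Fintype.card_pos_iff.mpr ⟨r⟩
    omega
  obtain ⟨e0, he0⟩ := hnsurj
  apply bridge_false s t hthin e0
  set G' := underlying (fun e : {e : E // e ≠ e0} => s e.1) (fun e => t e.1) with hG'
  have hreach : ∀ (n : ℕ) (v : V), d v = n → G'.Reachable v r := by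
    intro n
    induction n using Nat.strong_induction_on with
    | _ n ihn =>
      intro v hv
      by_cases hvr : v = r
      · subst hvr; rfl
      · have hs := (hstep ⟨v, hvr⟩).choose_spec
        set p := (hstep ⟨v, hvr⟩).choose
        have hpe : p.1 ≠ e0 := by
          intro h
          exact he0 ⟨⟨v, hvr⟩, h⟩
        have hlt : d p.2 < d v := hs.2
        have hvu : v ≠ p.2 := by
          intro h
          rw [← h] at hlt
          omega
        have hadj : G'.Adj v p.2 := by
          simp only [hG', underlying, SimpleGraph.fromRel_adj]
          rcases hs.1 with ⟨ha, hb⟩ | ⟨ha, hb⟩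
          · exact ⟨hvu, Or.inl ⟨⟨p.1, hpe⟩, ha, hb⟩⟩
          · exact ⟨hvu, Or.inr ⟨⟨p.1, hpe⟩, ha, hb⟩⟩
        exact hadj.reachable.trans (ihn (d p.2) (by omega) p.2 rfl)
  have hne : Nonempty V := ⟨r⟩
  have hpre : G'.Preconnected := fun a b =>
    (hreach (d a) a rfl).trans (hreach (d b) b rfl).symm
  exact ⟨hpre⟩

lemma pathcombo : ∀ (n : ℕ) (V E : Type) [Fintype V] [Fintype E] (s t : E → V),
    Fintype.card V = n →
    (underlying s t).Connected →
    (∀ e, s e ≠ t e) →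
    (∀ e e' : E, e ≠ e' → ¬ ((s e = s e' ∧ t e = t e') ∨ (s e = t e' ∧ t e = s e'))) →
    (∀ (c : V) (f1 f2 f3 : E), (s f1 = c ∨ t f1 = c) → (s f2 = c ∨ t f2 = c) →
      (s f3 = c ∨ t f3 = c) → f1 ≠ f2 → f1 ≠ f3 → f2 ≠ f3 → False) →
    Fintype.card E < Fintype.card V →
    ∃ (m : ℕ) (φ : V ≃ Fin (m + 1)) (ψ : E ≃ Fin m),
      ∀ e : E, (φ (s e) = (ψ e).castSucc ∧ φ (t e) = (ψ e).succ) ∨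
        (φ (s e) = (ψ e).succ ∧ φ (t e) = (ψ e).castSucc) := by
  intro n
  induction n using Nat.strong_induction_on with
  | _ n ihn =>
  intro V E instV instE s t hcardV hconn hloop hmulti hdeg hcard
  classical
  have hVne : Nonempty V := hconn.nonempty
  have hn1 : 1 ≤ n := by
    have := Fintype.card_pos_iff.mpr hVne
    omega
  by_cases hone : n = 1
  · -- base case : a single vertex, no edges
    have hsub : Subsingleton V := by
      apply Fintype.card_le_one_iff_subsingleton.mp
      omega
    have hE : IsEmpty E := ⟨fun e => hloop e (Subsingleton.elim _ _)⟩
    refine ⟨0, Fintype.equivFinOfCardEq (by omega), Equiv.equivOfIsEmpty E (Fin 0),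
      fun e => hE.elim e⟩
  -- inductive step : n ≥ 2
  have hn2 : 2 ≤ n := by omega
  set Ev : V → Finset E := fun v => Finset.univ.filter (fun e => s e = v ∨ t e = v) with hEv
  have hEcard : ∀ e : E, (Finset.univ.filter fun v : V => s e = v ∨ t e = v).card = 2 := by
    intro e
    have hset : (Finset.univ.filter fun v : V => s e = v ∨ t e = v) = {s e, t e} := by
      ext v
      simp only [Finset.mem_filter, Finset.mem_univ, true_and, Finset.mem_insert,
        Finset.mem_singleton]
      exact ⟨fun h => h.imp Eq.symm Eq.symm, fun h => h.imp Eq.symm Eq.symm⟩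
    rw [hset]
    exact Finset.card_pair (hloop e)
  have hsum : ∑ v : V, (Ev v).card = 2 * Fintype.card E := by
    calc ∑ v : V, (Ev v).card
        = ∑ v : V, ∑ e : E, (if s e = v ∨ t e = v then 1 else 0) :=
          Finset.sum_congr rfl (fun v _ => Finset.card_filter _ _)
      _ = ∑ e : E, ∑ v : V, (if s e = v ∨ t e = v then 1 else 0) := Finset.sum_comm
      _ = ∑ e : E, (Finset.univ.filter fun v : V => s e = v ∨ t e = v).card :=
          Finset.sum_congr rfl (fun e _ => (Finset.card_filter _ _).symm)
      _ = ∑ e : E, 2 := Finset.sum_congr rfl (fun e _ => hEcard e)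
      _ = 2 * Fintype.card E := by
          rw [Finset.sum_const, Finset.card_univ, smul_eq_mul, mul_comm]
  have hleaf : ∃ v₀ : V, (Ev v₀).card ≤ 1 := by
    by_contra hall
    push_neg at hall
    have h2 : Finset.univ.card • 2 ≤ ∑ v : V, (Ev v).card :=
      Finset.card_nsmul_le_sum _ _ _ (fun v _ => by have := hall v; omega)
    simp only [smul_eq_mul, Finset.card_univ] at h2
    rw [hsum] at h2
    omega
  obtain ⟨v₀, hv₀⟩ := hleaf
  obtain ⟨u', hu'⟩ := Fintype.exists_ne_of_one_lt_card (by omega : 1 < Fintype.card V) v₀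
  have hEv₀ne : (Ev v₀).Nonempty := by
    obtain ⟨w⟩ := hconn.preconnected v₀ u'
    cases w with
    | nil => exact absurd rfl hu'.symm
    | @cons _ y _ h q =>
      simp only [underlying, SimpleGraph.fromRel_adj] at h
      obtain ⟨hne, hor⟩ := h
      rcases hor with ⟨e, he1, he2⟩ | ⟨e, he1, he2⟩
      · exact ⟨e, by simp [hEv, he1]⟩
      · exact ⟨e, by simp [hEv, he2]⟩
  have hcard1 : (Ev v₀).card = 1 :=
    le_antisymm hv₀ (Finset.card_pos.mpr hEv₀ne)
  obtain ⟨e₀, he₀⟩ := Finset.card_eq_one.mp hcard1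
  have hinc0 : ∀ e : E, (s e = v₀ ∨ t e = v₀) ↔ e = e₀ := by
    intro e
    constructor
    · intro h
      have hmem : e ∈ Ev v₀ := by simp [hEv, h]
      rw [he₀] at hmem
      simpa using hmem
    · intro h
      have hmem : e₀ ∈ Ev v₀ := by rw [he₀]; exact Finset.mem_singleton_self e₀
      rw [h]
      simpa [hEv] using hmem
  set u : V := if s e₀ = v₀ then t e₀ else s e₀ with hu
  have hince₀ : s e₀ = v₀ ∨ t e₀ = v₀ := (hinc0 e₀).mpr rfl
  have hor0 : (s e₀ = v₀ ∧ t e₀ = u) ∨ (s e₀ = u ∧ t e₀ = v₀) := by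
    by_cases h : s e₀ = v₀
    · exact Or.inl ⟨h, by rw [hu, if_pos h]⟩
    · exact Or.inr ⟨by rw [hu, if_neg h], hince₀.resolve_left h⟩
  have hu_ne : u ≠ v₀ := by
    by_cases h : s e₀ = v₀
    · rw [hu, if_pos h]
      intro hh
      exact hloop e₀ (h.trans hh.symm)
    · rw [hu, if_neg h]
      exact h
  -- the subquiver with v₀ and e₀ removed
  have hsne : ∀ e : {e : E // e ≠ e₀}, s e.1 ≠ v₀ := fun e h => e.2 ((hinc0 e.1).mp (Or.inl h))
  have htne : ∀ e : {e : E // e ≠ e₀}, t e.1 ≠ v₀ := fun e h => e.2 ((hinc0 e.1).mp (Or.inr h))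
  set s' : {e : E // e ≠ e₀} → {v : V // v ≠ v₀} := fun e => ⟨s e.1, hsne e⟩ with hs'
  set t' : {e : E // e ≠ e₀} → {v : V // v ≠ v₀} := fun e => ⟨t e.1, htne e⟩ with ht'
  have hto_u : ∀ x : V, x ≠ v₀ → (underlying s t).Adj x v₀ → x = u := by
    intro x hx hadj
    simp only [underlying, SimpleGraph.fromRel_adj] at hadj
    obtain ⟨hne, hor⟩ := hadj
    rcases hor with ⟨e, he1, he2⟩ | ⟨e, he1, he2⟩
    · have hee : e = e₀ := (hinc0 e).mp (Or.inr he2)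
      subst hee
      rcases hor0 with ⟨ha, hb⟩ | ⟨ha, hb⟩
      · exact absurd (he1.symm.trans ha) hx
      · exact he1.symm.trans ha
    · have hee : e = e₀ := (hinc0 e).mp (Or.inl he1)
      subst hee
      rcases hor0 with ⟨ha, hb⟩ | ⟨ha, hb⟩
      · exact he2.symm.trans hb
      · exact absurd (he2.symm.trans hb) hx
  have hadj' : ∀ (a b : V) (ha : a ≠ v₀) (hb : b ≠ v₀), (underlying s t).Adj a b →
      (underlying s' t').Adj ⟨a, ha⟩ ⟨b, hb⟩ := by
    intro a b ha hb hadj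
    simp only [underlying, SimpleGraph.fromRel_adj] at hadj
    obtain ⟨hne, hor⟩ := hadj
    simp only [underlying, SimpleGraph.fromRel_adj]
    refine ⟨fun h => hne (congrArg Subtype.val h), ?_⟩
    rcases hor with ⟨e, he1, he2⟩ | ⟨e, he1, he2⟩
    · have hee : e ≠ e₀ := by
        intro h
        subst h
        rcases hor0 with ⟨hxx, hyy⟩ | ⟨hxx, hyy⟩
        · exact ha (he1.symm.trans hxx)
        · exact hb (he2.symm.trans hyy)
      exact Or.inl ⟨⟨e, hee⟩, Subtype.ext he1, Subtype.ext he2⟩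
    · have hee : e ≠ e₀ := by
        intro h
        subst h
        rcases hor0 with ⟨hxx, hyy⟩ | ⟨hxx, hyy⟩
        · exact hb (he1.symm.trans hxx)
        · exact ha (he2.symm.trans hyy)
      exact Or.inr ⟨⟨e, hee⟩, Subtype.ext he1, Subtype.ext he2⟩
  have hwalk : ∀ (m : ℕ) (x : V) (hx : x ≠ v₀) (b : V) (hb : b ≠ v₀)
      (w : (underlying s t).Walk x b), w.length ≤ m →
      (underlying s' t').Reachable ⟨x, hx⟩ ⟨b, hb⟩ := by
    intro m
    induction m with
    | zero =>
      intro x hx b hb w hw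
      cases w with
      | nil => exact SimpleGraph.Reachable.refl _
      | cons h q => simp [SimpleGraph.Walk.length_cons] at hw
    | succ m ihm =>
      intro x hx b hb w hw
      cases w with
      | nil => exact SimpleGraph.Reachable.refl _
      | @cons _ y _ h q =>
        by_cases hy : y = v₀
        · have hy' : v₀ = y := hy.symm
          subst hy'
          cases q with
          | nil => exact absurd rfl hb
          | @cons _ z _ h₂ q₂ =>
            have hxu : x = u := hto_u x hx h
            have hz_ne : z ≠ v₀ := fun hzz => h₂.ne' (hzz.symm ▸ rfl)
            have hzu : z = u := hto_u z hz_ne h₂.symm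
            have hxz : (⟨x, hx⟩ : {v : V // v ≠ v₀}) = ⟨z, hz_ne⟩ :=
              Subtype.ext (hxu.trans hzu.symm)
            rw [hxz]
            apply ihm z hz_ne b hb q₂
            simp only [SimpleGraph.Walk.length_cons] at hw
            omega
        · refine ((hadj' x y hx hy h).reachable).trans (ihm y hy b hb q ?_)
          simp only [SimpleGraph.Walk.length_cons] at hw
          omega
  have hVne' : Nonempty {v : V // v ≠ v₀} := ⟨⟨u, hu_ne⟩⟩
  have hconn' : (underlying s' t').Connected := by
    refine ⟨fun a b => ?_⟩
    obtain ⟨w⟩ := hconn.preconnected a.1 b.1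
    exact hwalk w.length a.1 a.2 b.1 b.2 w le_rfl
  -- cardinalities
  have hcV' : Fintype.card V = Fintype.card {v : V // v ≠ v₀} + 1 := by
    rw [← Fintype.card_option]
    exact Fintype.card_congr (Equiv.optionSubtypeNe v₀).symm
  have hcE' : Fintype.card E = Fintype.card {e : E // e ≠ e₀} + 1 := by
    rw [← Fintype.card_option]
    exact Fintype.card_congr (Equiv.optionSubtypeNe e₀).symm
  -- hypotheses for the subquiver
  have hloop' : ∀ e, s' e ≠ t' e := fun e h => hloop e.1 (congrArg Subtype.val h)
  have hmulti' : ∀ e e', e ≠ e' →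
      ¬ ((s' e = s' e' ∧ t' e = t' e') ∨ (s' e = t' e' ∧ t' e = s' e')) := by
    intro e e' hne h
    apply hmulti e.1 e'.1 (fun hh => hne (Subtype.ext hh))
    rcases h with ⟨h1, h2⟩ | ⟨h1, h2⟩
    · exact Or.inl ⟨congrArg Subtype.val h1, congrArg Subtype.val h2⟩
    · exact Or.inr ⟨congrArg Subtype.val h1, congrArg Subtype.val h2⟩
  have hdeg' : ∀ (c : {v : V // v ≠ v₀}) (f1 f2 f3 : {e : E // e ≠ e₀}),
      (s' f1 = c ∨ t' f1 = c) → (s' f2 = c ∨ t' f2 = c) → (s' f3 = c ∨ t' f3 = c) →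
      f1 ≠ f2 → f1 ≠ f3 → f2 ≠ f3 → False := by
    intro c f1 f2 f3 h1 h2 h3 n12 n13 n23
    apply hdeg c.1 f1.1 f2.1 f3.1
    · exact h1.imp (congrArg Subtype.val) (congrArg Subtype.val)
    · exact h2.imp (congrArg Subtype.val) (congrArg Subtype.val)
    · exact h3.imp (congrArg Subtype.val) (congrArg Subtype.val)
    · exact fun h => n12 (Subtype.ext h)
    · exact fun h => n13 (Subtype.ext h)
    · exact fun h => n23 (Subtype.ext h)
  obtain ⟨m', φ'0, ψ'0, hprop0⟩ :=
    ihn (n - 1) (by omega) {v : V // v ≠ v₀} {e : E // e ≠ e₀} s' t'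
      (by omega) hconn' hloop' hmulti' hdeg' (by omega)
  set uu : {v : V // v ≠ v₀} := ⟨u, hu_ne⟩ with huu
  -- u sits at one end of the path
  have hj : φ'0 uu = 0 ∨ φ'0 uu = Fin.last m' := by
    by_contra hboth
    push_neg at hboth
    obtain ⟨h0, hlast⟩ := hboth
    set j := φ'0 uu with hjdef
    set i1 := j.pred h0 with hi1def
    set i2 := j.castPred hlast with hi2def
    have hi1 : i1.succ = j := Fin.succ_pred j h0
    have hi2 : i2.castSucc = j := Fin.castSucc_castPred j hlast
    have hne12 : i1 ≠ i2 := by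
      intro h
      have hv1 : i1.val + 1 = j.val := by rw [← hi1]; rfl
      have hv2 : i2.val = j.val := by rw [← hi2]; rfl
      rw [h] at hv1
      omega
    set g1 := ψ'0.symm i1 with hg1def
    set g2 := ψ'0.symm i2 with hg2def
    have hg1 : ψ'0 g1 = i1 := ψ'0.apply_symm_apply i1
    have hg2 : ψ'0 g2 = i2 := ψ'0.apply_symm_apply i2
    have hginc : ∀ (i : Fin m') (g : {e : E // e ≠ e₀}), ψ'0 g = i →
        (i.succ = j ∨ i.castSucc = j) → s g.1 = u ∨ t g.1 = u := by
      intro i g hgi hij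
      rcases hprop0 g with ⟨hA, hB⟩ | ⟨hA, hB⟩ <;> rcases hij with hij | hij
      · have : t' g = uu := φ'0.injective (by rw [hB, hgi, hij])
        exact Or.inr (congrArg Subtype.val this)
      · have : s' g = uu := φ'0.injective (by rw [hA, hgi, hij])
        exact Or.inl (congrArg Subtype.val this)
      · have : s' g = uu := φ'0.injective (by rw [hA, hgi, hij])
        exact Or.inl (congrArg Subtype.val this)
      · have : t' g = uu := φ'0.injective (by rw [hB, hgi, hij])
        exact Or.inr (congrArg Subtype.val this)
    have hinc1 : s g1.1 = u ∨ t g1.1 = u := hginc i1 g1 hg1 (Or.inl hi1)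
    have hinc2 : s g2.1 = u ∨ t g2.1 = u := hginc i2 g2 hg2 (Or.inr hi2)
    have hince0u : s e₀ = u ∨ t e₀ = u := by
      rcases hor0 with ⟨ha, hb⟩ | ⟨ha, hb⟩
      · exact Or.inr hb
      · exact Or.inl ha
    have hg12 : g1.1 ≠ g2.1 := by
      intro h
      apply hne12
      rw [← hg1, ← hg2, Subtype.ext h]
    exact hdeg u g1.1 g2.1 e₀ hinc1 hinc2 hince0u hg12 g1.2 g2.2
  -- WLOG u is at the far end
  obtain ⟨φ', ψ', hprop, hulast⟩ :
      ∃ (φ' : {v : V // v ≠ v₀} ≃ Fin (m' + 1)) (ψ' : {e : E // e ≠ e₀} ≃ Fin m'),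
        (∀ e, (φ' (s' e) = (ψ' e).castSucc ∧ φ' (t' e) = (ψ' e).succ) ∨
          (φ' (s' e) = (ψ' e).succ ∧ φ' (t' e) = (ψ' e).castSucc)) ∧
        φ' uu = Fin.last m' := by
    rcases hj with hj0 | hjl
    · refine ⟨φ'0.trans Fin.revPerm, ψ'0.trans Fin.revPerm, fun e => ?_, ?_⟩
      · rcases hprop0 e with ⟨hA, hB⟩ | ⟨hA, hB⟩
        · right
          constructor
          · show (φ'0 (s' e)).rev = ((ψ'0 e).rev).succ
            rw [hA, Fin.rev_castSucc]
          · show (φ'0 (t' e)).rev = ((ψ'0 e).rev).castSucc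
            rw [hB, Fin.rev_succ]
        · left
          constructor
          · show (φ'0 (s' e)).rev = ((ψ'0 e).rev).castSucc
            rw [hA, Fin.rev_succ]
          · show (φ'0 (t' e)).rev = ((ψ'0 e).rev).succ
            rw [hB, Fin.rev_castSucc]
      · show (φ'0 uu).rev = Fin.last m'
        rw [hj0]
        ext
        simp [Fin.val_rev]
    · exact ⟨φ'0, ψ'0, hprop0, hjl⟩
  -- assemble the final equivalences
  set φ : V ≃ Fin (m' + 2) :=
    ((Equiv.optionSubtypeNe v₀).symm.trans (Equiv.optionCongr φ')).trans
      finSuccEquivLast.symm with hφdef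
  set ψ : E ≃ Fin (m' + 1) :=
    ((Equiv.optionSubtypeNe e₀).symm.trans (Equiv.optionCongr ψ')).trans
      finSuccEquivLast.symm with hψdef
  have hφv₀ : φ v₀ = Fin.last (m' + 1) := by
    rw [hφdef]
    simp [Equiv.optionSubtypeNe_symm_self]
  have hφ : ∀ (v : V) (hv : v ≠ v₀), φ v = (φ' ⟨v, hv⟩).castSucc := by
    intro v hv
    rw [hφdef]
    simp [Equiv.optionSubtypeNe_symm_of_ne hv]
  have hψe₀ : ψ e₀ = Fin.last m' := by
    rw [hψdef]
    simp [Equiv.optionSubtypeNe_symm_self]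
  have hψ : ∀ (e : E) (he : e ≠ e₀), ψ e = (ψ' ⟨e, he⟩).castSucc := by
    intro e he
    rw [hψdef]
    simp [Equiv.optionSubtypeNe_symm_of_ne he]
  refine ⟨m' + 1, φ, ψ, fun e => ?_⟩
  by_cases he : e = e₀
  · subst he
    rcases hor0 with ⟨ha, hb⟩ | ⟨ha, hb⟩
    · right
      constructor
      · rw [ha, hφv₀, hψe₀]
        exact (Fin.succ_last m').symm
      · rw [hb, hφ u hu_ne, hψe₀]
        rw [show (⟨u, hu_ne⟩ : {v : V // v ≠ v₀}) = uu from rfl, hulast]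
    · left
      constructor
      · rw [ha, hφ u hu_ne, hψe₀]
        rw [show (⟨u, hu_ne⟩ : {v : V // v ≠ v₀}) = uu from rfl, hulast]
      · rw [hb, hφv₀, hψe₀]
        exact (Fin.succ_last m').symm
  · have hse : s e ≠ v₀ := fun h => he ((hinc0 e).mp (Or.inl h))
    have hte : t e ≠ v₀ := fun h => he ((hinc0 e).mp (Or.inr h))
    have hseq : φ' (s' ⟨e, he⟩) = φ' ⟨s e, hse⟩ := rfl
    have hteq : φ' (t' ⟨e, he⟩) = φ' ⟨t e, hte⟩ := rfl
    rcases hprop ⟨e, he⟩ with ⟨hA, hB⟩ | ⟨hA, hB⟩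
    · left
      constructor
      · rw [hφ (s e) hse, hψ e he, ← hseq, hA]
      · rw [hφ (t e) hte, hψ e he, ← hteq, hB]
        exact (Fin.succ_castSucc _).symm
    · right
      constructor
      · rw [hφ (s e) hse, hψ e he, ← hseq, hA]
        exact (Fin.succ_castSucc _).symm
      · rw [hφ (t e) hte, hψ e he, ← hteq, hB]

/-- If `Q` is a finite connected quiver all of whose indecomposable
finite-dimensional representations are thin, then `Q` is of type `A`: there are bijections
`φ : V ≃ Fin (n+1)` and `ψ : E ≃ Fin n` identifying `Q` with the linear quiver
(one edge between `i` and `i+1`, in some orientation, for each `i`). -/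
theorem stmt9 (k : Type) [Field k] {V E : Type} [Fintype V] [Fintype E] (s t : E → V)
    (hconn : (underlying s t).Connected)
    (hthin : ∀ M : QRep k s t, M.FinDim → M.Indecomposable → M.Thin) :
    ∃ (n : ℕ) (φ : V ≃ Fin (n + 1)) (ψ : E ≃ Fin n),
      ∀ e : E,
        (φ (s e) = (ψ e).castSucc ∧ φ (t e) = (ψ e).succ) ∨
        (φ (s e) = (ψ e).succ ∧ φ (t e) = (ψ e).castSucc) := by
  classical
  have hloop := noloop s t hthin hconn
  have hmulti := nomulti s t hthin hconn
  have hdeg := nodeg3 s t hthin hconn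
  have hcard := edges_lt s t hthin hconn
  exact pathcombo (Fintype.card V) V E s t rfl hconn hloop hmulti hdeg hcard
end

section
/- For n ≥ 4 and 1 ≤ r ≤ n−3, the r-twin representation of the quiver Q(n) is indecomposable, where the r-twin representation has k at vertices 1 and 2, k² at vertices 3,...,r+2, k at vertices r+3,...,n, the two canonical projections k² → k at the arrows into vertices 1 and 2, identity maps between consecutive copies of k² and between consecutive copies of k, and the diagonal embedding k → k² at the arrow from vertex r+3 to vertex r+2. -/
/-! A framework for representations of the quiver `Q(n)` of type `D_n` (`n = m + 3`):
vertices `1, 2` (two tips, here `T1`, `T2`), and an arm `3, 4, ..., n` (here `A 0, ..., A m`),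
with arrows `π₁ : 3 → 1`, `π₂ : 3 → 2` (here `p1`, `p2`) and `i+1 → i` for `3 ≤ i < n`
(here `f i : A i.succ →ₗ A i.castSucc`). -/

structure DRep (k : Type) [Field k] (m : ℕ) where
  T1 : Type
  T2 : Type
  A : Fin (m + 1) → Type
  [acg1 : AddCommGroup T1]
  [mod1 : Module k T1]
  [acg2 : AddCommGroup T2]
  [mod2 : Module k T2]
  [acgA : ∀ i, AddCommGroup (A i)]
  [modA : ∀ i, Module k (A i)]
  p1 : A ⟨0, Nat.succ_pos m⟩ →ₗ[k] T1
  p2 : A ⟨0, Nat.succ_pos m⟩ →ₗ[k] T2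
  f : ∀ i : Fin m, A i.succ →ₗ[k] A i.castSucc

attribute [instance] DRep.acg1 DRep.mod1 DRep.acg2 DRep.mod2 DRep.acgA DRep.modA

namespace DRep

variable {k : Type} [Field k] {m : ℕ}

/-- A morphism of representations of `Q(m+3)`. -/
structure Hom (M N : DRep k m) where
  g1 : M.T1 →ₗ[k] N.T1
  g2 : M.T2 →ₗ[k] N.T2
  gA : ∀ i, M.A i →ₗ[k] N.A i
  comm1 : ∀ x, g1 (M.p1 x) = N.p1 (gA ⟨0, Nat.succ_pos m⟩ x)
  comm2 : ∀ x, g2 (M.p2 x) = N.p2 (gA ⟨0, Nat.succ_pos m⟩ x)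
  commf : ∀ (i : Fin m) x, gA i.castSucc (M.f i x) = N.f i (gA i.succ x)

/-- An isomorphism of representations of `Q(m+3)`. -/
structure Iso (M N : DRep k m) where
  g1 : M.T1 ≃ₗ[k] N.T1
  g2 : M.T2 ≃ₗ[k] N.T2
  gA : ∀ i, M.A i ≃ₗ[k] N.A i
  comm1 : ∀ x, g1 (M.p1 x) = N.p1 (gA ⟨0, Nat.succ_pos m⟩ x)
  comm2 : ∀ x, g2 (M.p2 x) = N.p2 (gA ⟨0, Nat.succ_pos m⟩ x)
  commf : ∀ (i : Fin m) x, gA i.castSucc (M.f i x) = N.f i (gA i.succ x)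

/-- The identity morphism. -/
def Hom.id (M : DRep k m) : Hom M M :=
  ⟨LinearMap.id, LinearMap.id, fun _ => LinearMap.id,
    fun _ => rfl, fun _ => rfl, fun _ _ => rfl⟩

/-- Composition of morphisms. -/
def Hom.comp {M N P : DRep k m} (ψ : Hom N P) (φ : Hom M N) : Hom M P where
  g1 := ψ.g1.comp φ.g1
  g2 := ψ.g2.comp φ.g2
  gA i := (ψ.gA i).comp (φ.gA i)
  comm1 x := by simp only [LinearMap.comp_apply]; rw [φ.comm1, ψ.comm1]
  comm2 x := by simp only [LinearMap.comp_apply]; rw [φ.comm2, ψ.comm2]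
  commf i x := by simp only [LinearMap.comp_apply]; rw [φ.commf, ψ.commf]

/-- The (binary) direct sum of two representations. -/
def prod (M N : DRep k m) : DRep k m where
  T1 := M.T1 × N.T1
  T2 := M.T2 × N.T2
  A i := M.A i × N.A i
  acgA i := inferInstanceAs (AddCommGroup (M.A i × N.A i))
  modA i := inferInstanceAs (Module k (M.A i × N.A i))
  p1 := M.p1.prodMap N.p1
  p2 := M.p2.prodMap N.p2
  f i := (M.f i).prodMap (N.f i)

/-- The direct sum of an arbitrary family of representations. -/
noncomputable def dsum {ι : Type} (F : ι → DRep k m) : DRep k m :=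
  letI := Classical.decEq ι
  { T1 := DirectSum ι fun i => (F i).T1
    T2 := DirectSum ι fun i => (F i).T2
    A := fun v => DirectSum ι fun i => (F i).A v
    acgA := fun v => inferInstanceAs (AddCommGroup (DirectSum ι fun i => (F i).A v))
    modA := fun v => inferInstanceAs (Module k (DirectSum ι fun i => (F i).A v))
    p1 := DirectSum.toModule k ι (DirectSum ι fun i => (F i).T1)
      fun i => (DirectSum.lof k ι (fun j => (F j).T1) i).comp ((F i).p1)
    p2 := DirectSum.toModule k ι (DirectSum ι fun i => (F i).T2)
      fun i => (DirectSum.lof k ι (fun j => (F j).T2) i).comp ((F i).p2)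
    f := fun v => DirectSum.toModule k ι (DirectSum ι fun i => (F i).A v.castSucc)
      fun i => (DirectSum.lof k ι (fun j => (F j).A v.castSucc) i).comp ((F i).f v) }

/-- The zero representation predicate. -/
def IsZero (M : DRep k m) : Prop :=
  (∀ x : M.T1, x = 0) ∧ (∀ x : M.T2, x = 0) ∧ ∀ i, ∀ x : M.A i, x = 0

/-- Indecomposability: nonzero, and any direct sum decomposition has a zero summand. -/
def Indecomposable (M : DRep k m) : Prop :=
  ¬ M.IsZero ∧ ∀ N₁ N₂ : DRep k m, Nonempty (Iso M (N₁.prod N₂)) → N₁.IsZero ∨ N₂.IsZero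

/-- Thin: all vertex spaces of dimension at most `1`. -/
def Thin (M : DRep k m) : Prop :=
  Module.rank k M.T1 ≤ 1 ∧ Module.rank k M.T2 ≤ 1 ∧ ∀ i, Module.rank k (M.A i) ≤ 1

/-- All vertex spaces finite-dimensional. -/
def FinDim (M : DRep k m) : Prop :=
  FiniteDimensional k M.T1 ∧ FiniteDimensional k M.T2 ∧ ∀ i, FiniteDimensional k (M.A i)

/-- Membership in the subcategory `B̌`: the combined map
`(π₁, π₂) : M₃ → M₁ ⊕ M₂` is bijective. -/
def InB (M : DRep k m) : Prop :=
  Function.Bijective (fun x : M.A ⟨0, Nat.succ_pos m⟩ => (M.p1 x, M.p2 x))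

end DRep

/-- Dimension profile of the `r`-twin representation along the arm: `2` on the first `r`
arm vertices (quiver vertices `3, ..., r+2`), `1` afterwards. -/
def cnt (r j : ℕ) : ℕ := if j < r then 2 else 1

/-- The `r`-twin representation of `Q(n)` (`n = m + 3`): `k` at the tips `1` and `2`, `k²`
at the vertices `3, ..., r+2`, `k` at the vertices `r+3, ..., n`; the maps to the tips are
the two canonical projections `k² → k`, the arrow from vertex `r+3` to `r+2` is the diagonal
embedding `k → k²`, all other arm arrows are identities. -/
noncomputable def twinRep (k : Type) [Field k] (m r : ℕ) (hr : 0 < r) : DRep k m where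
  T1 := k
  T2 := k
  A i := Fin (cnt r i.val) → k
  acgA i := inferInstanceAs (AddCommGroup (Fin (cnt r i.val) → k))
  modA i := inferInstanceAs (Module k (Fin (cnt r i.val) → k))
  p1 := LinearMap.proj ⟨0, by unfold cnt; split <;> omega⟩
  p2 := LinearMap.proj
    ⟨1, by
      have h0 : ((⟨0, Nat.succ_pos m⟩ : Fin (m + 1)) : ℕ) = 0 := rfl
      unfold cnt; rw [h0, if_pos hr]; omega⟩
  f i := LinearMap.funLeft k k fun a =>
    ⟨min a.val (cnt r i.succ.val - 1), by
      have h1 : 0 < cnt r i.succ.val := by unfold cnt; split <;> omega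
      omega⟩
section Aux0

variable {k : Type} [Field k] {m r : ℕ}

lemma twin_g1_smul (hr : 1 ≤ r)
    (φ : DRep.Hom (twinRep k m r hr) (twinRep k m r hr)) (a : k)
    (ha : φ.g1 (1 : k) = a) (c : k) : φ.g1 c = c * a :=
  (congrArg φ.g1 (mul_one c).symm).trans ((map_smul φ.g1 c (1 : k)).trans (congrArg (c • ·) ha))

lemma twin_g2_smul (hr : 1 ≤ r)
    (φ : DRep.Hom (twinRep k m r hr) (twinRep k m r hr)) (b : k)
    (hb : φ.g2 (1 : k) = b) (c : k) : φ.g2 c = c * b :=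
  (congrArg φ.g2 (mul_one c).symm).trans ((map_smul φ.g2 c (1 : k)).trans (congrArg (c • ·) hb))

end Aux0
section Aux

variable {k : Type} [Field k] {m r : ℕ}

lemma cnt_pos (r j : ℕ) : 0 < cnt r j := by unfold cnt; split <;> omega

lemma cnt_anti (r j : ℕ) : cnt r (j + 1) ≤ cnt r j := by unfold cnt; split_ifs <;> omega

lemma twin_key (hr : 1 ≤ r) (hrm : r ≤ m)
    (φ : DRep.Hom (twinRep k m r hr) (twinRep k m r hr)) (a b : k)
    (ha : φ.g1 (1 : k) = a) (hb : φ.g2 (1 : k) = b) :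
    ∀ (j : ℕ) (hj : j < m + 1) (x : Fin (cnt r j) → k) (t : Fin (cnt r j)),
      φ.gA ⟨j, hj⟩ x t = (if (t : ℕ) = 0 then a else b) * x t := by
  have hg1 : ∀ c : k, φ.g1 c = c * a := by
    intro c
    exact (congrArg φ.g1 (mul_one c).symm).trans ((map_smul φ.g1 c (1 : k)).trans (congrArg (c • ·) ha))
  have hg2 : ∀ c : k, φ.g2 c = c * b := by
    intro c
    exact (congrArg φ.g2 (mul_one c).symm).trans ((map_smul φ.g2 c (1 : k)).trans (congrArg (c • ·) hb))
  intro j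
  induction j with
  | zero =>
    intro hj x t
    have h2 : cnt r 0 = 2 := by unfold cnt; split <;> omega
    rcases t with ⟨tv, htv⟩
    have htv' : tv < 2 := by omega
    interval_cases tv
    · have h0 : φ.g1 (x ⟨0, htv⟩) = φ.gA ⟨0, hj⟩ x ⟨0, htv⟩ := φ.comm1 x
      rw [← h0, hg1]
      simp [mul_comm]
    · have h0 : φ.g2 (x ⟨1, htv⟩) = φ.gA ⟨0, hj⟩ x ⟨1, htv⟩ := φ.comm2 x
      rw [← h0, hg2]
      simp [mul_comm]
  | succ j ih =>
    intro hj x t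
    have hjm : j < m := by omega
    have hle : cnt r (j + 1) ≤ cnt r j := cnt_anti r j
    set t' : Fin (cnt r j) := ⟨t.val, lt_of_lt_of_le t.isLt hle⟩ with ht'
    have hc := φ.commf ⟨j, hjm⟩ x
    have h2 : ∀ y : Fin (cnt r (j + 1)) → k,
        ((twinRep k m r hr).f ⟨j, hjm⟩ y : Fin (cnt r j) → k) t' = y t := by
      intro y
      have hmin : min (t.val) (cnt r (j + 1) - 1) = t.val := by have := t.isLt; omega
      show y ⟨min t'.val (cnt r (j+1) - 1), _⟩ = y t
      congr 1
      exact Fin.ext hmin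
    have h1 : (φ.gA ⟨j, by omega⟩ ((twinRep k m r hr).f ⟨j, hjm⟩ x) : Fin (cnt r j) → k) t'
        = ((twinRep k m r hr).f ⟨j, hjm⟩ (φ.gA ⟨j + 1, hj⟩ x) : Fin (cnt r j) → k) t' :=
      congrFun hc t'
    have e1 := h2 x
    have e2 := h2 (φ.gA ⟨j + 1, hj⟩ x)
    have e3 := ih (by omega) ((twinRep k m r hr).f ⟨j, hjm⟩ x) t'
    exact e2.symm.trans (h1.symm.trans (e3.trans (congrArg (fun z => (if (t : ℕ) = 0 then a else b) * z) e1)))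

end Aux
section Aux2

variable {k : Type} [Field k] {m r : ℕ}

lemma twin_ab (hr : 1 ≤ r) (hrm : r ≤ m)
    (φ : DRep.Hom (twinRep k m r hr) (twinRep k m r hr)) (a b : k)
    (ha : φ.g1 (1 : k) = a) (hb : φ.g2 (1 : k) = b) : b = a := by
  have key := twin_key hr hrm φ a b ha hb
  have hrm1 : r - 1 < m := by omega
  have h21 : cnt r (r - 1) = 2 := by unfold cnt; split <;> omega
  have h1c : cnt r (r - 1 + 1) = 1 := by unfold cnt; split <;> omega
  set x : Fin (cnt r (r - 1 + 1)) → k := (fun _ => 1) with hx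
  have hc := φ.commf ⟨r - 1, hrm1⟩ x
  have h1 : (φ.gA ⟨r - 1, by omega⟩ ((twinRep k m r hr).f ⟨r - 1, hrm1⟩ x) :
        Fin (cnt r (r - 1)) → k) ⟨1, by show (1:ℕ) < cnt r (r - 1); omega⟩
      = ((twinRep k m r hr).f ⟨r - 1, hrm1⟩ (φ.gA ⟨r - 1 + 1, by omega⟩ x) :
        Fin (cnt r (r - 1)) → k) ⟨1, by show (1:ℕ) < cnt r (r - 1); omega⟩ :=
    congrFun hc _
  have hL : (φ.gA ⟨r - 1, by omega⟩ ((twinRep k m r hr).f ⟨r - 1, hrm1⟩ x) :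
        Fin (cnt r (r - 1)) → k) ⟨1, by show (1:ℕ) < cnt r (r - 1); omega⟩ = b := by
    refine (key (r - 1) (by omega) ((twinRep k m r hr).f ⟨r - 1, hrm1⟩ x) ⟨1, by show (1:ℕ) < cnt r (r - 1); omega⟩).trans ?_
    show (if (1 : ℕ) = 0 then a else b) * (1 : k) = b
    norm_num
  have hR : ((twinRep k m r hr).f ⟨r - 1, hrm1⟩ (φ.gA ⟨r - 1 + 1, by omega⟩ x) :
        Fin (cnt r (r - 1)) → k) ⟨1, by show (1:ℕ) < cnt r (r - 1); omega⟩ = a := by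
    show (φ.gA ⟨r - 1 + 1, by omega⟩ x : Fin (cnt r (r - 1 + 1)) → k)
        ⟨min 1 (cnt r (r - 1 + 1) - 1), by show min 1 (cnt r (r - 1 + 1) - 1) < cnt r (r - 1 + 1); omega⟩ = a
    rw [key (r - 1 + 1) (by omega) x ⟨min 1 (cnt r (r - 1 + 1) - 1), by show min 1 (cnt r (r - 1 + 1) - 1) < cnt r (r - 1 + 1); omega⟩]
    have : min 1 (cnt r (r - 1 + 1) - 1) = 0 := by omega
    rw [if_pos (by simpa using this)]
    show a * (1 : k) = a
    norm_num
  rw [hL, hR] at h1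
  exact h1

end Aux2
section Aux3

variable {k : Type} [Field k] {m : ℕ} {M N₁ N₂ : DRep k m}

lemma prod_p1_apply (N₁ N₂ : DRep k m)
    (w : N₁.A ⟨0, Nat.succ_pos m⟩ × N₂.A ⟨0, Nat.succ_pos m⟩) :
    (N₁.prod N₂).p1 w = (N₁.p1 w.1, N₂.p1 w.2) := rfl

lemma prod_p2_apply (N₁ N₂ : DRep k m)
    (w : N₁.A ⟨0, Nat.succ_pos m⟩ × N₂.A ⟨0, Nat.succ_pos m⟩) :
    (N₁.prod N₂).p2 w = (N₁.p2 w.1, N₂.p2 w.2) := rfl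

lemma prod_f_apply (N₁ N₂ : DRep k m) (i : Fin m)
    (w : N₁.A i.succ × N₂.A i.succ) :
    (N₁.prod N₂).f i w = (N₁.f i w.1, N₂.f i w.2) := rfl

/-- The endomorphism of `M` obtained by transporting "project to the first factor"
along an isomorphism `M ≃ N₁ ⊕ N₂`. -/
def cutHom (φ : DRep.Iso M (N₁.prod N₂)) : DRep.Hom M M where
  g1 := φ.g1.symm.toLinearMap ∘ₗ
    (LinearMap.prodMap LinearMap.id (0 : N₂.T1 →ₗ[k] N₂.T1)) ∘ₗ φ.g1.toLinearMap
  g2 := φ.g2.symm.toLinearMap ∘ₗ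
    (LinearMap.prodMap LinearMap.id (0 : N₂.T2 →ₗ[k] N₂.T2)) ∘ₗ φ.g2.toLinearMap
  gA i := (φ.gA i).symm.toLinearMap ∘ₗ
    (LinearMap.prodMap LinearMap.id (0 : N₂.A i →ₗ[k] N₂.A i)) ∘ₗ (φ.gA i).toLinearMap
  comm1 := by
    intro x
    have e1 : ∀ y, M.p1 ((φ.gA ⟨0, Nat.succ_pos m⟩).symm y) = φ.g1.symm ((N₁.prod N₂).p1 y) := by
      intro y
      rw [LinearEquiv.eq_symm_apply]
      have := φ.comm1 ((φ.gA ⟨0, Nat.succ_pos m⟩).symm y)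
      rwa [LinearEquiv.apply_symm_apply] at this
    show φ.g1.symm ((LinearMap.prodMap LinearMap.id (0 : N₂.T1 →ₗ[k] N₂.T1)) (φ.g1 (M.p1 x)))
        = M.p1 ((φ.gA ⟨0, Nat.succ_pos m⟩).symm
            ((LinearMap.prodMap LinearMap.id (0 : N₂.A ⟨0, Nat.succ_pos m⟩ →ₗ[k] N₂.A ⟨0, Nat.succ_pos m⟩)) (φ.gA ⟨0, Nat.succ_pos m⟩ x)))
    rw [φ.comm1 x]
    refine Eq.trans ?_ (e1 _).symm
    congr 1
    exact Prod.ext rfl (map_zero N₂.p1).symm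
  comm2 := by
    intro x
    have e2 : ∀ y, M.p2 ((φ.gA ⟨0, Nat.succ_pos m⟩).symm y) = φ.g2.symm ((N₁.prod N₂).p2 y) := by
      intro y
      rw [LinearEquiv.eq_symm_apply]
      have := φ.comm2 ((φ.gA ⟨0, Nat.succ_pos m⟩).symm y)
      rwa [LinearEquiv.apply_symm_apply] at this
    show φ.g2.symm ((LinearMap.prodMap LinearMap.id (0 : N₂.T2 →ₗ[k] N₂.T2)) (φ.g2 (M.p2 x)))
        = M.p2 ((φ.gA ⟨0, Nat.succ_pos m⟩).symm
            ((LinearMap.prodMap LinearMap.id (0 : N₂.A ⟨0, Nat.succ_pos m⟩ →ₗ[k] N₂.A ⟨0, Nat.succ_pos m⟩)) (φ.gA ⟨0, Nat.succ_pos m⟩ x)))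
    rw [φ.comm2 x]
    refine Eq.trans ?_ (e2 _).symm
    congr 1
    exact Prod.ext rfl (map_zero N₂.p2).symm
  commf := by
    intro i x
    have ef : ∀ y, M.f i ((φ.gA i.succ).symm y) = (φ.gA i.castSucc).symm ((N₁.prod N₂).f i y) := by
      intro y
      rw [LinearEquiv.eq_symm_apply]
      have := φ.commf i ((φ.gA i.succ).symm y)
      rwa [LinearEquiv.apply_symm_apply] at this
    show (φ.gA i.castSucc).symm ((LinearMap.prodMap LinearMap.id (0 : N₂.A i.castSucc →ₗ[k] N₂.A i.castSucc)) (φ.gA i.castSucc (M.f i x)))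
        = M.f i ((φ.gA i.succ).symm
            ((LinearMap.prodMap LinearMap.id (0 : N₂.A i.succ →ₗ[k] N₂.A i.succ)) (φ.gA i.succ x)))
    rw [φ.commf i x]
    refine Eq.trans ?_ (ef _).symm
    congr 1
    exact Prod.ext rfl (map_zero (N₂.f i)).symm

lemma cutHom_g1_apply (φ : DRep.Iso M (N₁.prod N₂)) (z : M.T1) :
    (cutHom φ).g1 z = φ.g1.symm ((φ.g1 z).1, 0) := by
  rfl

lemma cutHom_g2_apply (φ : DRep.Iso M (N₁.prod N₂)) (z : M.T2) :
    (cutHom φ).g2 z = φ.g2.symm ((φ.g2 z).1, 0) := by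
  rfl

lemma cutHom_gA_apply (φ : DRep.Iso M (N₁.prod N₂)) (i : Fin (m + 1)) (z : M.A i) :
    (cutHom φ).gA i z = (φ.gA i).symm (((φ.gA i) z).1, 0) := by
  rfl

/-- Extraction helpers. -/
lemma zero_left {U V W : Type} [AddCommGroup U] [Module k U] [AddCommGroup V] [Module k V]
    [AddCommGroup W] [Module k W] (e : U ≃ₗ[k] V × W)
    (h : ∀ z : U, e.symm ((e z).1, 0) = 0) : ∀ v : V, v = 0 := by
  intro v
  have h1 := h (e.symm (v, 0))
  rw [LinearEquiv.apply_symm_apply] at h1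
  simpa using congrArg (fun u => (e u).1) h1

lemma zero_right {U V W : Type} [AddCommGroup U] [Module k U] [AddCommGroup V] [Module k V]
    [AddCommGroup W] [Module k W] (e : U ≃ₗ[k] V × W)
    (h : ∀ z : U, e.symm ((e z).1, 0) = z) : ∀ w : W, w = 0 := by
  intro w
  have h1 := h (e.symm (0, w))
  rw [LinearEquiv.apply_symm_apply] at h1
  have h2 := congrArg (fun u => (e u).2) h1
  simpa using h2.symm

end Aux3

/-- For `n ≥ 4` and `1 ≤ r ≤ n - 3`, the `r`-twin representation of the
quiver `Q(n)` of type `D_n` is indecomposable. (Here `DRep k (n-3)` is the category of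
representations of `Q(n)`.) -/
theorem stmt14 (k : Type) [Field k] (n r : ℕ) (hn : 4 ≤ n)
    (hr1 : 1 ≤ r) (hr2 : r ≤ n - 3) :
    (twinRep k (n - 3) r hr1).Indecomposable := by
  constructor
  · rintro ⟨h1, -, -⟩
    have h := h1 (id (1 : k))
    have h' : (1 : k) = 0 := h
    exact one_ne_zero h'
  · rintro N₁ N₂ ⟨φ⟩
    obtain ⟨a, ha⟩ : ∃ a : k, (cutHom φ).g1 (1 : k) = a := ⟨_, rfl⟩
    obtain ⟨b, hb⟩ : ∃ b : k, (cutHom φ).g2 (1 : k) = b := ⟨_, rfl⟩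
    have hba : b = a := twin_ab hr1 hr2 (cutHom φ) a b ha hb
    have key := twin_key hr1 hr2 (cutHom φ) a b ha hb
    have hga := twin_g1_smul hr1 (cutHom φ) a ha
    have hgb := twin_g2_smul hr1 (cutHom φ) b hb
    have h2 : (cutHom φ).g1 ((cutHom φ).g1 (1 : k)) = (cutHom φ).g1 (1 : k) := by
      erw [cutHom_g1_apply, cutHom_g1_apply, LinearEquiv.apply_symm_apply]; rfl
    have haa : a * a = a := by
      have e1 : (cutHom φ).g1 a = a * a := hga a
      have e2 : (cutHom φ).g1 a = a := by rw [← ha]; exact h2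
      rw [← e1, e2]
    have ha01 : a = 0 ∨ a = 1 := by
      rcases eq_or_ne a 0 with h | h
      · exact Or.inl h
      · exact Or.inr (mul_left_cancel₀ h (by rw [haa, mul_one]))
    rcases ha01 with ha0 | ha1
    · refine Or.inl ⟨?_, ?_, ?_⟩
      · refine zero_left φ.g1 fun z => ?_
        have hz : (cutHom φ).g1 z = 0 := by erw [hga z, ha0, mul_zero]; rfl
        exact (cutHom_g1_apply φ z).symm.trans hz
      · refine zero_left φ.g2 fun z => ?_
        have hz : (cutHom φ).g2 z = 0 := by erw [hgb z, hba, ha0, mul_zero]; rfl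
        exact (cutHom_g2_apply φ z).symm.trans hz
      · intro i
        refine zero_left (φ.gA i) fun z => ?_
        have hz : (cutHom φ).gA i z = 0 := by
          funext t
          have hk := key i.val i.isLt z t
          rw [hba, ha0] at hk
          simp at hk; exact hk
        exact (cutHom_gA_apply φ i z).symm.trans hz
    · refine Or.inr ⟨?_, ?_, ?_⟩
      · refine zero_right φ.g1 fun z => ?_
        have hz : (cutHom φ).g1 z = z := by erw [hga z, ha1, mul_one]
        exact (cutHom_g1_apply φ z).symm.trans hz
      · refine zero_right φ.g2 fun z => ?_
        have hz : (cutHom φ).g2 z = z := by erw [hgb z, hba, ha1, mul_one]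
        exact (cutHom_g2_apply φ z).symm.trans hz
      · intro i
        refine zero_right (φ.gA i) fun z => ?_
        have hz : (cutHom φ).gA i z = z := by
          funext t
          have hk := key i.val i.isLt z t
          rw [hba, ha1] at hk
          simpa using hk
        exact (cutHom_gA_apply φ i z).symm.trans hz
end

section
/- Let Q be a finite quiver with an arm (Q', x), where Q' is a full subquiver of type A_t containing the vertex x, x has at most one neighbor in Q', and there are no arrows between vertices of Q outside Q' and vertices of Q' other than x. Then every representation M of Q decomposes as M = M' ⊕ M'', where M' is conical on (Q', x) (i.e. the restriction of M' to Q' has all maps pointing toward x injective and all other maps of Q' surjective) and the support of M'' is contained in Q' \ {x}. In particular, every indecomposable representation M of Q with M_x ≠ 0 is conical on (Q', x). -/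
/-- A representation is conical on the arm `(a, b)` (vertices `a 0, ..., a L`, arrows `b i`
between `a i` and `a (i+1)`, with `x = a 0`): arrows pointing toward `x` act injectively,
the other arrows of the arm act surjectively. -/
def ConicalOn (k : Type) [Field k] {V E : Type} {s t : E → V} (M : QRep k s t)
    {L : ℕ} (a : Fin (L + 1) → V) (b : Fin L → E) : Prop :=
  ∀ i : Fin L,
    (t (b i) = a i.castSucc → Function.Injective (M.map (b i))) ∧
    (t (b i) = a i.succ → Function.Surjective (M.map (b i)))

namespace Stmt16Aux

open Function

variable {k : Type} [Field k] {V E : Type} {s t : E → V}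

/-- Transport of vertex spaces along an equality of vertices. -/
def lcast (M : QRep k s t) {v w : V} (h : v = w) : M.space v ≃ₗ[k] M.space w :=
  Eq.rec (motive := fun w _ => M.space v ≃ₗ[k] M.space w) (LinearEquiv.refl k (M.space v)) h

@[simp] lemma lcast_rfl (M : QRep k s t) {v : V} (h : v = v) :
    lcast M h = LinearEquiv.refl k (M.space v) := rfl

lemma lcast_symm (M : QRep k s t) {v w : V} (h : v = w) :
    (lcast M h).symm = lcast M h.symm := by subst h; rfl

@[simp] lemma lcast_lcast_symm (M : QRep k s t) {v w : V} (h : v = w) (x : M.space v) :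
    lcast M h.symm (lcast M h x) = x := by subst h; rfl

@[simp] lemma lcast_symm_lcast (M : QRep k s t) {v w : V} (h : v = w) (x : M.space w) :
    lcast M h (lcast M h.symm x) = x := by subst h; rfl

lemma mem_map_lcast (M : QRep k s t) {v w : V} (h : v = w) (p : Submodule k (M.space v))
    (x : M.space w) : x ∈ p.map (lcast M h).toLinearMap ↔ lcast M h.symm x ∈ p := by
  subst h
  simp

@[simp] lemma map_lcast_top (M : QRep k s t) {v w : V} (h : v = w) :
    Submodule.map (lcast M h).toLinearMap (⊤ : Submodule k (M.space v)) = ⊤ := by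
  subst h; simp

@[simp] lemma map_lcast_bot (M : QRep k s t) {v w : V} (h : v = w) :
    Submodule.map (lcast M h).toLinearMap (⊥ : Submodule k (M.space v)) = ⊥ := by
  subst h; simp

section Compl

variable {P Q : Type} [AddCommGroup P] [Module k P] [AddCommGroup Q] [Module k Q]

/-- Relative complement of a submodule inside a larger one. -/
lemma exists_relCompl (p q : Submodule k P) (hpq : p ≤ q) :
    ∃ r : Submodule k P, r ≤ q ∧ Disjoint p r ∧ p ⊔ r = q := by
  obtain ⟨c, hc⟩ := Submodule.exists_isCompl (Submodule.comap q.subtype p)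
  refine ⟨c.map q.subtype, Submodule.map_subtype_le q c, ?_, ?_⟩
  · rw [disjoint_iff]
    ext x
    simp only [Submodule.mem_inf, Submodule.mem_bot, Submodule.mem_map]
    constructor
    · rintro ⟨hxp, ⟨y, hyc, rfl⟩⟩
      have : y ∈ Submodule.comap q.subtype p ⊓ c := ⟨hxp, hyc⟩
      rw [hc.inf_eq_bot] at this
      rw [Submodule.mem_bot] at this
      simp [this]
    · rintro rfl; exact ⟨p.zero_mem, 0, c.zero_mem, rfl⟩
  · apply le_antisymm (sup_le hpq (Submodule.map_subtype_le q c))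
    intro x hx
    have : (⟨x, hx⟩ : q) ∈ Submodule.comap q.subtype p ⊔ c := by rw [hc.sup_eq_top]; trivial
    obtain ⟨y, hy, z, hz, hyz⟩ := Submodule.mem_sup.1 this
    have : x = (y : P) + (z : P) := by
      have := congrArg (q.subtype) hyz; simpa using this.symm
    rw [this]
    exact Submodule.add_mem_sup hy (Submodule.mem_map_of_mem hz)

/-- A subspace disjoint from `X` extends to a complement of `X`. -/
lemma exists_compl_ge (X A : Submodule k P) (h : Disjoint X A) :
    ∃ Y : Submodule k P, A ≤ Y ∧ IsCompl X Y := by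
  obtain ⟨D, hD⟩ := Submodule.exists_isCompl (X ⊔ A)
  refine ⟨A ⊔ D, le_sup_left, ?_, ?_⟩
  · rw [disjoint_iff]
    ext x
    simp only [Submodule.mem_inf, Submodule.mem_bot]
    constructor
    · rintro ⟨hxX, hxAD⟩
      obtain ⟨a, ha, d, hd, rfl⟩ := Submodule.mem_sup.1 hxAD
      have hdX : d ∈ X ⊔ A := by
        have : d = (a + d) - a := by abel
        rw [this]
        exact Submodule.sub_mem _ (le_sup_left (a := X) (b := A) hxX)
          (le_sup_right (a := X) (b := A) ha)
      have : d ∈ (X ⊔ A) ⊓ D := ⟨hdX, hd⟩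
      rw [hD.inf_eq_bot] at this
      rw [Submodule.mem_bot] at this
      subst this
      have : a ∈ X ⊓ A := ⟨by simpa using hxX, ha⟩
      rw [h.eq_bot] at this
      simpa using this
    · rintro rfl; exact ⟨X.zero_mem, Submodule.zero_mem _⟩
  · rw [codisjoint_iff]
    rw [← sup_assoc, sup_comm X A, sup_assoc, ← sup_assoc, sup_comm A X]
    rw [hD.sup_eq_top]

/-- Outward step: choosing a complement below an image-compatible complement. -/
lemma fwd_step (f : P →ₗ[k] Q) (X : Submodule k P) (Y' : Submodule k Q)
    (h : IsCompl (X.map f) Y') :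
    ∃ Y : Submodule k P, IsCompl X Y ∧ Y.map f ≤ Y' ∧
      (Surjective f → Y.map f = Y') := by
  obtain ⟨r, hrq, hdisj, hsup⟩ := exists_relCompl (X ⊓ Y'.comap f) (Y'.comap f) inf_le_right
  refine ⟨r, ⟨?_, ?_⟩, ?_, ?_⟩
  · -- X ⊓ r = ⊥
    rw [disjoint_iff, eq_bot_iff]
    intro x hx
    rw [Submodule.mem_inf] at hx
    have : x ∈ (X ⊓ Y'.comap f) ⊓ r := ⟨⟨hx.1, hrq hx.2⟩, hx.2⟩
    rw [hdisj.eq_bot] at this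
    exact this
  · -- X ⊔ r = ⊤
    rw [codisjoint_iff, eq_top_iff]
    intro v _
    have hfv : f v ∈ X.map f ⊔ Y' := by rw [h.sup_eq_top]; trivial
    obtain ⟨fx, hfx, y, hy, hfxy⟩ := Submodule.mem_sup.1 hfv
    obtain ⟨x, hxX, rfl⟩ := hfx
    have hvx : v - x ∈ Y'.comap f := by
      simp only [Submodule.mem_comap, map_sub]
      have : f v - f x = y := by rw [← hfxy]; abel
      rw [this]; exact hy
    rw [← hsup] at hvx
    obtain ⟨w, hw, z, hz, hwz⟩ := Submodule.mem_sup.1 hvx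
    have hveq : v = (x + w) + z := by
      have : v = x + (w + z) := by rw [hwz]; abel
      rw [this]; abel
    rw [hveq]
    exact Submodule.add_mem_sup (X.add_mem hxX hw.1) hz
  · -- map f r ≤ Y'
    rintro y ⟨x, hx, rfl⟩
    exact hrq hx
  · -- surjectivity gives equality
    intro hsurj
    apply le_antisymm
    · rintro y ⟨x, hx, rfl⟩; exact hrq hx
    · intro y hy
      obtain ⟨v, rfl⟩ := hsurj y
      have hv : v ∈ Y'.comap f := hy
      rw [← hsup] at hv
      obtain ⟨w, hw, z, hz, hwz⟩ := Submodule.mem_sup.1 hv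
      have hfv : f v = f w + f z := by rw [← hwz]; simp
      have hfzY : f z ∈ Y' := hrq hz
      have hfw' : f w ∈ X.map f ⊓ Y' := by
        refine ⟨Submodule.mem_map_of_mem hw.1, ?_⟩
        have : f w = f v - f z := by rw [hfv]; abel
        rw [this]
        exact Y'.sub_mem hy hfzY
      rw [h.inf_eq_bot, Submodule.mem_bot] at hfw'
      have : f v = f z := by rw [hfv, hfw', zero_add]
      rw [this]
      exact Submodule.mem_map_of_mem hz

end Compl

end Stmt16Aux

namespace Stmt16Aux -- reopened

open Function

variable {k : Type} [Field k]

section Compl2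

variable {P Q : Type} [AddCommGroup P] [Module k P] [AddCommGroup Q] [Module k Q]

/-- Inward step: extending the image of a complement to a complement. -/
lemma bwd_step (g : Q →ₗ[k] P) (X : Submodule k P) (Y' : Submodule k Q)
    (h : IsCompl (X.comap g) Y') :
    ∃ Y : Submodule k P, IsCompl X Y ∧ Y'.map g ≤ Y := by
  have hdisj : Disjoint X (Y'.map g) := by
    rw [disjoint_iff, eq_bot_iff]
    rintro x ⟨hxX, ⟨y, hy, rfl⟩⟩
    have : y ∈ X.comap g ⊓ Y' := ⟨hxX, hy⟩
    rw [h.inf_eq_bot, Submodule.mem_bot] at this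
    subst this
    simp
  obtain ⟨Y, hle, hY⟩ := exists_compl_ge X (Y'.map g) hdisj
  exact ⟨Y, hY, hle⟩

end Compl2

section Chain

variable {n : ℕ} {Pf : Fin (n + 1) → Type} [∀ i, AddCommGroup (Pf i)] [∀ i, Module k (Pf i)]
  (dir : Fin n → Bool)
  (f : ∀ i : Fin n, Pf i.castSucc →ₗ[k] Pf i.succ)
  (g : ∀ i : Fin n, Pf i.succ →ₗ[k] Pf i.castSucc)
  (X0 : Submodule k (Pf 0))

/-- The canonical forward chain of submodules. -/
noncomputable def chainX : ∀ i, Submodule k (Pf i) :=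
  Fin.induction X0 (fun i Xi => if dir i then Xi.map (f i) else Xi.comap (g i))

@[simp] lemma chainX_zero : chainX dir f g X0 0 = X0 := rfl

lemma chainX_succ (i : Fin n) :
    chainX dir f g X0 i.succ =
      (if dir i then (chainX dir f g X0 i.castSucc).map (f i)
        else (chainX dir f g X0 i.castSucc).comap (g i)) := by
  unfold chainX
  rw [Fin.induction_succ]

lemma chainX_fwd (i : Fin n) (h : dir i = true) :
    chainX dir f g X0 i.succ = (chainX dir f g X0 i.castSucc).map (f i) := by
  rw [chainX_succ, if_pos h]

lemma chainX_bwd (i : Fin n) (h : dir i = false) :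
    chainX dir f g X0 i.succ = (chainX dir f g X0 i.castSucc).comap (g i) := by
  rw [chainX_succ, h]; simp

/-- One backward step for the complements. -/
noncomputable def chainStep (i : Fin n)
    (Ys : {Y : Submodule k (Pf i.succ) // IsCompl (chainX dir f g X0 i.succ) Y}) :
    {Y : Submodule k (Pf i.castSucc) // IsCompl (chainX dir f g X0 i.castSucc) Y} :=
  if h : dir i then
    ⟨(fwd_step (f i) (chainX dir f g X0 i.castSucc) Ys.1
        (chainX_fwd dir f g X0 i h ▸ Ys.2)).choose,
      (fwd_step (f i) (chainX dir f g X0 i.castSucc) Ys.1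
        (chainX_fwd dir f g X0 i h ▸ Ys.2)).choose_spec.1⟩
  else
    ⟨(bwd_step (g i) (chainX dir f g X0 i.castSucc) Ys.1
        (chainX_bwd dir f g X0 i (by simpa using h) ▸ Ys.2)).choose,
      (bwd_step (g i) (chainX dir f g X0 i.castSucc) Ys.1
        (chainX_bwd dir f g X0 i (by simpa using h) ▸ Ys.2)).choose_spec.1⟩

/-- The backward chain of complements, as a subtype-valued function. -/
noncomputable def chainYs : ∀ i, {Y : Submodule k (Pf i) // IsCompl (chainX dir f g X0 i) Y} :=
  Fin.reverseInduction
    ⟨(Submodule.exists_isCompl (chainX dir f g X0 (Fin.last n))).choose,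
      (Submodule.exists_isCompl (chainX dir f g X0 (Fin.last n))).choose_spec⟩
    (chainStep dir f g X0)

noncomputable def chainY (i : Fin (n+1)) : Submodule k (Pf i) := (chainYs dir f g X0 i).1

lemma chainY_isCompl (i : Fin (n+1)) : IsCompl (chainX dir f g X0 i) (chainY dir f g X0 i) :=
  (chainYs dir f g X0 i).2

lemma chainYs_castSucc (i : Fin n) :
    chainYs dir f g X0 i.castSucc = chainStep dir f g X0 i (chainYs dir f g X0 i.succ) := by
  unfold chainYs
  rw [Fin.reverseInduction_castSucc]

lemma chainY_fwd (i : Fin n) (h : dir i = true) :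
    (chainY dir f g X0 i.castSucc).map (f i) ≤ chainY dir f g X0 i.succ ∧
      (Surjective (f i) →
        (chainY dir f g X0 i.castSucc).map (f i) = chainY dir f g X0 i.succ) := by
  have e : chainY dir f g X0 i.castSucc
      = (chainStep dir f g X0 i (chainYs dir f g X0 i.succ)).1 := by
    rw [chainY, chainYs_castSucc]
  rw [e, chainStep, dif_pos h]
  exact ⟨(fwd_step (f i) (chainX dir f g X0 i.castSucc) (chainYs dir f g X0 i.succ).1
      (chainX_fwd dir f g X0 i h ▸ (chainYs dir f g X0 i.succ).2)).choose_spec.2.1,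
    (fwd_step (f i) (chainX dir f g X0 i.castSucc) (chainYs dir f g X0 i.succ).1
      (chainX_fwd dir f g X0 i h ▸ (chainYs dir f g X0 i.succ).2)).choose_spec.2.2⟩

lemma chainY_bwd (i : Fin n) (h : dir i = false) :
    (chainY dir f g X0 i.succ).map (g i) ≤ chainY dir f g X0 i.castSucc := by
  have e : chainY dir f g X0 i.castSucc
      = (chainStep dir f g X0 i (chainYs dir f g X0 i.succ)).1 := by
    rw [chainY, chainYs_castSucc]
  rw [e, chainStep, dif_neg (by simp [h])]
  exact (bwd_step (g i) (chainX dir f g X0 i.castSucc) (chainYs dir f g X0 i.succ).1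
      (chainX_bwd dir f g X0 i (by simpa using h) ▸ (chainYs dir f g X0 i.succ).2)).choose_spec.2

end Chain

end Stmt16Aux

namespace Stmt16Aux

open Function QRep

variable {k : Type} [Field k] {V E : Type} {s t : E → V}

/-- The zero representation. -/
def zeroRep : QRep k s t where
  space _ := PUnit
  acg _ := inferInstanceAs (AddCommGroup PUnit)
  mod _ := inferInstanceAs (Module k PUnit)
  map _ := 0

lemma zeroRep_isZero : (zeroRep : QRep k s t).IsZero := fun _ x => rfl

def isoRefl (M : QRep k s t) : Iso M M where
  app _ := LinearEquiv.refl k _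
  comm _ _ := rfl

def isoTrans {M N P : QRep k s t} (h1 : Iso M N) (h2 : Iso N P) : Iso M P where
  app v := (h1.app v).trans (h2.app v)
  comm e x := by simp [LinearEquiv.trans_apply, h1.comm, h2.comm]

def isoProdCongr {A B C D : QRep k s t} (h1 : Iso A C) (h2 : Iso B D) :
    Iso (A.prod B) (C.prod D) where
  app v := (h1.app v).prodCongr (h2.app v)
  comm e x := by
    show ((h1.app (t e)) ((A.map e) x.1), (h2.app (t e)) ((B.map e) x.2))
        = ((C.map e) ((h1.app (s e)) x.1), (D.map e) ((h2.app (s e)) x.2))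
    rw [h1.comm, h2.comm]

def isoProdAssoc (A B C : QRep k s t) : Iso ((A.prod B).prod C) (A.prod (B.prod C)) where
  app v := LinearEquiv.prodAssoc k _ _ _
  comm e x := rfl

def isoProdZero (M : QRep k s t) : Iso M (M.prod zeroRep) where
  app v :=
    { toFun := fun x => (x, PUnit.unit)
      map_add' := fun a b => rfl
      map_smul' := fun c a => rfl
      invFun := fun p => p.1
      left_inv := fun x => rfl
      right_inv := fun p => rfl }
  comm e x := rfl

/-- The subrepresentation attached to an arrow-stable family of submodules. -/
noncomputable def subRep (M : QRep k s t) (C : ∀ v, Submodule k (M.space v))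
    (hC : ∀ e : E, ∀ x ∈ C (s e), M.map e x ∈ C (t e)) : QRep k s t where
  space v := C v
  acg v := inferInstanceAs (AddCommGroup (C v))
  mod v := inferInstanceAs (Module k (C v))
  map e := (M.map e).restrict (hC e)

/-- A pair of complementary stable families decomposes a representation. -/
noncomputable def isoOfCompl (M : QRep k s t) (C W : ∀ v, Submodule k (M.space v))
    (hC : ∀ e : E, ∀ x ∈ C (s e), M.map e x ∈ C (t e))
    (hW : ∀ e : E, ∀ x ∈ W (s e), M.map e x ∈ W (t e))
    (hcompl : ∀ v, IsCompl (C v) (W v)) :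
    Iso M ((subRep M C hC).prod (subRep M W hW)) where
  app v := (Submodule.prodEquivOfIsCompl (C v) (W v) (hcompl v)).symm
  comm e x := by
    beta_reduce
    erw [LinearEquiv.symm_apply_eq]
    show M.map e x =
      (M.map e ((((Submodule.prodEquivOfIsCompl (C (s e)) (W (s e))
        (hcompl (s e))).symm x).1 : C (s e)) : M.space (s e))) +
      (M.map e ((((Submodule.prodEquivOfIsCompl (C (s e)) (W (s e))
        (hcompl (s e))).symm x).2 : W (s e)) : M.space (s e)))
    rw [← map_add]
    congr 1
    exact ((Submodule.prodEquivOfIsCompl (C (s e)) (W (s e))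
      (hcompl (s e))).apply_symm_apply x).symm

lemma restrict_injective {P Q : Type} [AddCommGroup P] [Module k P] [AddCommGroup Q]
    [Module k Q] (f : P →ₗ[k] Q) {p : Submodule k P} {q : Submodule k Q}
    (hf : ∀ x ∈ p, f x ∈ q) (h : ∀ x ∈ p, f x = 0 → x = 0) :
    Injective (f.restrict hf) := by
  intro x y hxy
  have : f (x - y) = 0 := by
    have := congrArg (Subtype.val) hxy
    simp only [LinearMap.restrict_apply] at this
    rw [map_sub, this, sub_self]
  have := h _ (p.sub_mem x.2 y.2) this
  ext
  have := congrArg (Subtype.val) (show x - y = (0 : p) from Subtype.ext (by simpa using this))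
  simpa [sub_eq_zero] using this

lemma restrict_surjective {P Q : Type} [AddCommGroup P] [Module k P] [AddCommGroup Q]
    [Module k Q] (f : P →ₗ[k] Q) {p : Submodule k P} {q : Submodule k Q}
    (hf : ∀ x ∈ p, f x ∈ q) (h : ∀ y ∈ q, ∃ x ∈ p, f x = y) :
    Surjective (f.restrict hf) := by
  rintro ⟨y, hy⟩
  obtain ⟨x, hx, hfx⟩ := h y hy
  exact ⟨⟨x, hx⟩, Subtype.ext (by simpa [LinearMap.restrict_apply] using hfx)⟩

end Stmt16Aux

namespace Stmt16Aux

open Function QRep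

variable {k : Type} [Field k] {V E : Type} {s t : E → V}

section Arm

variable (N : QRep k s t) {n : ℕ} (a : Fin (n + 1) → V) (b : Fin n → E)

lemma arm_excl (ha : Injective a) (i : Fin n) (h1 : t (b i) = a i.castSucc)
    (h2 : t (b i) = a i.succ) : False :=
  absurd (ha (h1.symm.trans h2)) (Fin.castSucc_lt_succ (i := i)).ne

/-- Orientation of the `i`-th arm arrow: `true` means pointing away from the root. -/
noncomputable def armdir (_N : QRep k s t) : Fin n → Bool := fun i =>
  @decide (t (b i) = a i.succ) (Classical.propDecidable _)

lemma armdir_iff (i : Fin n) : armdir a b N i = true ↔ t (b i) = a i.succ := by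
  simp [armdir]

lemma arm_src_of_fwd (ha : Injective a)
    (hb : ∀ i : Fin n, (s (b i) = a i.castSucc ∧ t (b i) = a i.succ) ∨
      (s (b i) = a i.succ ∧ t (b i) = a i.castSucc))
    (i : Fin n) (h : t (b i) = a i.succ) :
    s (b i) = a i.castSucc := by
  rcases hb i with ⟨hs, _⟩ | ⟨_, ht⟩
  · exact hs
  · exact absurd h (fun h2 => arm_excl a b ha i ht h2)

lemma arm_src_of_bwd (ha : Injective a)
    (hb : ∀ i : Fin n, (s (b i) = a i.castSucc ∧ t (b i) = a i.succ) ∨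
      (s (b i) = a i.succ ∧ t (b i) = a i.castSucc))
    (i : Fin n) (h : t (b i) = a i.castSucc) :
    s (b i) = a i.succ := by
  rcases hb i with ⟨_, ht⟩ | ⟨hs, _⟩
  · exact absurd ht (fun h2 => arm_excl a b ha i h h2)
  · exact hs

variable (hb : ∀ i : Fin n, (s (b i) = a i.castSucc ∧ t (b i) = a i.succ) ∨
    (s (b i) = a i.succ ∧ t (b i) = a i.castSucc))

/-- The normalized forward map along the `i`-th arm arrow. -/
noncomputable def armfwd (ha : Injective a) :
    ∀ i : Fin n, N.space (a i.castSucc) →ₗ[k] N.space (a i.succ) := fun i =>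
  letI := Classical.propDecidable (t (b i) = a i.succ)
  if h : t (b i) = a i.succ then
    ((lcast N h).toLinearMap ∘ₗ N.map (b i)) ∘ₗ
      (lcast N (arm_src_of_fwd a b ha hb i h).symm).toLinearMap
  else 0

/-- The normalized backward map along the `i`-th arm arrow. -/
noncomputable def armbwd (ha : Injective a) :
    ∀ i : Fin n, N.space (a i.succ) →ₗ[k] N.space (a i.castSucc) := fun i =>
  letI := Classical.propDecidable (t (b i) = a i.castSucc)
  if h : t (b i) = a i.castSucc then
    ((lcast N h).toLinearMap ∘ₗ N.map (b i)) ∘ₗ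
      (lcast N (arm_src_of_bwd a b ha hb i h).symm).toLinearMap
  else 0

lemma armfwd_comp (ha : Injective a) (j : Fin n) (ht : t (b j) = a j.succ)
    (hs : a j.castSucc = s (b j)) (x : N.space (s (b j))) :
    armfwd N a b hb ha j (lcast N hs.symm x) = lcast N ht (N.map (b j) x) := by
  rw [armfwd, dif_pos ht]
  show lcast N ht (N.map (b j)
    (lcast N (arm_src_of_fwd a b ha hb j ht).symm (lcast N hs.symm x))) = _
  congr 1
  have heq : lcast N (arm_src_of_fwd a b ha hb j ht).symm (lcast N hs.symm x)
      = lcast N hs (lcast N hs.symm x) := rfl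
  rw [heq, lcast_symm_lcast]

lemma armbwd_comp (ha : Injective a) (j : Fin n) (ht : t (b j) = a j.castSucc)
    (hs : a j.succ = s (b j)) (x : N.space (s (b j))) :
    armbwd N a b hb ha j (lcast N hs.symm x) = lcast N ht (N.map (b j) x) := by
  rw [armbwd, dif_pos ht]
  show lcast N ht (N.map (b j)
    (lcast N (arm_src_of_bwd a b ha hb j ht).symm (lcast N hs.symm x))) = _
  congr 1
  have heq : lcast N (arm_src_of_bwd a b ha hb j ht).symm (lcast N hs.symm x)
      = lcast N hs (lcast N hs.symm x) := rfl
  rw [heq, lcast_symm_lcast]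

/-- Extending an arm-indexed family of submodules to a vertex-indexed family. -/
noncomputable def famOf (C : ∀ i, Submodule k (N.space (a i))) (d : Bool) :
    ∀ v, Submodule k (N.space v) := fun v =>
  letI := Classical.propDecidable (∃ i, a i = v)
  if h : ∃ i, a i = v then (C h.choose).map (lcast N h.choose_spec).toLinearMap
  else (if d then ⊤ else ⊥)

lemma map_lcast_eq_of (C : ∀ i, Submodule k (N.space (a i))) {i j : Fin (n + 1)}
    (h : i = j) (hv : a i = a j) :
    (C i).map (lcast N hv).toLinearMap = C j := by
  subst h
  simp

lemma famOf_eq (ha : Injective a) (C : ∀ i, Submodule k (N.space (a i))) (d : Bool)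
    {i : Fin (n + 1)} {v : V} (hv : a i = v) :
    famOf N a C d v = (C i).map (lcast N hv).toLinearMap := by
  subst hv
  have hex : ∃ j, a j = a i := ⟨i, rfl⟩
  rw [famOf, dif_pos hex, map_lcast_eq_of N a C (ha hex.choose_spec) hex.choose_spec]
  exact (map_lcast_eq_of N a C rfl _).symm

lemma famOf_not (C : ∀ i, Submodule k (N.space (a i))) (d : Bool) {v : V}
    (h : ¬∃ i, a i = v) : famOf N a C d v = if d then ⊤ else ⊥ := by
  rw [famOf]
  exact dif_neg h

lemma mem_famOf_iff (ha : Injective a) (C : ∀ i, Submodule k (N.space (a i))) (d : Bool)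
    {i : Fin (n + 1)} {v : V} (hv : a i = v) (x : N.space v) :
    x ∈ famOf N a C d v ↔ lcast N hv.symm x ∈ C i := by
  rw [famOf_eq N a ha C d hv, mem_map_lcast]

lemma famOf_top_of (ha : Injective a) (C : ∀ i, Submodule k (N.space (a i)))
    (hC0 : C 0 = ⊤) {v : V} (hv : ∀ i : Fin (n + 1), i ≠ 0 → a i ≠ v) :
    famOf N a C true v = ⊤ := by
  by_cases hex : ∃ i, a i = v
  · obtain ⟨i, hi⟩ := hex
    have hi0 : i = 0 := by
      by_contra h0
      exact hv i h0 hi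
    subst hi0
    rw [famOf_eq N a ha C true hi, hC0, map_lcast_top]
  · rw [famOf_not N a C true hex]
    rfl

lemma famOf_bot_of (ha : Injective a) (C : ∀ i, Submodule k (N.space (a i)))
    (hC0 : C 0 = ⊥) {v : V} (hv : ∀ i : Fin (n + 1), i ≠ 0 → a i ≠ v) :
    famOf N a C false v = ⊥ := by
  by_cases hex : ∃ i, a i = v
  · obtain ⟨i, hi⟩ := hex
    have hi0 : i = 0 := by
      by_contra h0
      exact hv i h0 hi
    subst hi0
    rw [famOf_eq N a ha C false hi, hC0, map_lcast_bot]
  · rw [famOf_not N a C false hex]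
    rfl

/-- Bridging: a chain-level forward mapping fact gives arrow stability. -/
lemma maps_fwd_bridge (ha : Injective a) (Pc : ∀ i, Submodule k (N.space (a i))) (d : Bool)
    (j : Fin n) (hs : s (b j) = a j.castSucc) (ht : t (b j) = a j.succ)
    (hch : (Pc j.castSucc).map (armfwd N a b hb ha j) ≤ Pc j.succ) :
    ∀ x ∈ famOf N a Pc d (s (b j)), N.map (b j) x ∈ famOf N a Pc d (t (b j)) := by
  intro x hx
  rw [mem_famOf_iff N a ha Pc d hs.symm] at hx
  rw [mem_famOf_iff N a ha Pc d ht.symm]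
  have hkey : lcast N ht.symm.symm (N.map (b j) x)
      = armfwd N a b hb ha j (lcast N hs.symm.symm x) :=
    (armfwd_comp N a b hb ha j ht hs.symm x).symm
  rw [hkey]
  exact hch (Submodule.mem_map_of_mem hx)

lemma maps_bwd_bridge (ha : Injective a) (Pc : ∀ i, Submodule k (N.space (a i))) (d : Bool)
    (j : Fin n) (hs : s (b j) = a j.succ) (ht : t (b j) = a j.castSucc)
    (hch : (Pc j.succ).map (armbwd N a b hb ha j) ≤ Pc j.castSucc) :
    ∀ x ∈ famOf N a Pc d (s (b j)), N.map (b j) x ∈ famOf N a Pc d (t (b j)) := by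
  intro x hx
  rw [mem_famOf_iff N a ha Pc d hs.symm] at hx
  rw [mem_famOf_iff N a ha Pc d ht.symm]
  have hkey : lcast N ht.symm.symm (N.map (b j) x)
      = armbwd N a b hb ha j (lcast N hs.symm.symm x) :=
    (armbwd_comp N a b hb ha j ht hs.symm x).symm
  rw [hkey]
  exact hch (Submodule.mem_map_of_mem hx)

/-- Bridging: elementwise injectivity on the chain gives injectivity with `N.map`. -/
lemma inj_bridge (ha : Injective a) (Pc : ∀ i, Submodule k (N.space (a i))) (d : Bool)
    (j : Fin n) (hs : s (b j) = a j.succ) (ht : t (b j) = a j.castSucc)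
    (hch : ∀ x' ∈ Pc j.succ, armbwd N a b hb ha j x' = 0 → x' = 0) :
    ∀ x ∈ famOf N a Pc d (s (b j)), N.map (b j) x = 0 → x = 0 := by
  intro x hx hx0
  rw [mem_famOf_iff N a ha Pc d hs.symm] at hx
  have hkey : armbwd N a b hb ha j (lcast N hs.symm.symm x) = lcast N ht (N.map (b j) x) :=
    armbwd_comp N a b hb ha j ht hs.symm x
  rw [hx0, map_zero] at hkey
  have hz := hch _ hx hkey
  have : lcast N hs.symm (lcast N hs.symm.symm x) = lcast N hs.symm 0 := by rw [hz]
  rw [lcast_symm_lcast, map_zero] at this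
  exact this

/-- Bridging: chain-level surjectivity gives surjectivity with `N.map`. -/
lemma surj_bridge (ha : Injective a) (Pc : ∀ i, Submodule k (N.space (a i))) (d : Bool)
    (j : Fin n) (hs : s (b j) = a j.castSucc) (ht : t (b j) = a j.succ)
    (hch : Pc j.succ ≤ (Pc j.castSucc).map (armfwd N a b hb ha j)) :
    ∀ y ∈ famOf N a Pc d (t (b j)), ∃ x ∈ famOf N a Pc d (s (b j)), N.map (b j) x = y := by
  intro y hy
  rw [mem_famOf_iff N a ha Pc d ht.symm] at hy
  obtain ⟨x', hx', hfx'⟩ := hch hy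
  refine ⟨lcast N hs.symm x', ?_, ?_⟩
  · rw [mem_famOf_iff N a ha Pc d hs.symm]
    have : lcast N hs.symm.symm (lcast N hs.symm x') = x' := lcast_lcast_symm N hs.symm x'
    rw [this]
    exact hx'
  · apply (lcast N ht).injective
    have hkey : armfwd N a b hb ha j (lcast N hs.symm.symm (lcast N hs.symm x'))
        = lcast N ht (N.map (b j) (lcast N hs.symm x')) :=
      armfwd_comp N a b hb ha j ht hs.symm (lcast N hs.symm x')
    rw [lcast_lcast_symm] at hkey
    rw [← hkey, hfx']

lemma isCompl_map_lcast {v w : V} (h : v = w) {p q : Submodule k (N.space v)}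
    (hpq : IsCompl p q) :
    IsCompl (p.map (lcast N h).toLinearMap) (q.map (lcast N h).toLinearMap) := by
  subst h
  simpa using hpq

/-- Assembling a decomposition of `N` from complementary stable chains on the arm. -/
lemma assemble (ha : Injective a)
    (hArm : ∀ e : E, ∀ i : Fin (n + 1), i ≠ 0 → (s e = a i ∨ t e = a i) → ∃ j, e = b j)
    (Cc Wc : ∀ i, Submodule k (N.space (a i)))
    (hcompl : ∀ i, IsCompl (Cc i) (Wc i))
    (hC0 : Cc 0 = ⊤) (hW0 : Wc 0 = ⊥)
    (mapsC : ∀ j : Fin n, ∀ x ∈ famOf N a Cc true (s (b j)),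
      N.map (b j) x ∈ famOf N a Cc true (t (b j)))
    (mapsW : ∀ j : Fin n, ∀ x ∈ famOf N a Wc false (s (b j)),
      N.map (b j) x ∈ famOf N a Wc false (t (b j)))
    (hinj : ∀ j : Fin n, t (b j) = a j.castSucc →
      ∀ x ∈ famOf N a Cc true (s (b j)), N.map (b j) x = 0 → x = 0)
    (hsurj : ∀ j : Fin n, t (b j) = a j.succ →
      ∀ y ∈ famOf N a Cc true (t (b j)), ∃ x ∈ famOf N a Cc true (s (b j)),
        N.map (b j) x = y) :
    ∃ M' M'' : QRep k s t, Nonempty (Iso N (M'.prod M'')) ∧ ConicalOn k M' a b ∧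
      (∀ v : V, (∃ y : M''.space v, y ≠ 0) → ∃ i : Fin (n + 1), i ≠ 0 ∧ v = a i) := by
  have hCall : ∀ e : E, ∀ x ∈ famOf N a Cc true (s e), N.map e x ∈ famOf N a Cc true (t e) := by
    intro e
    by_cases hj : ∃ j, e = b j
    · obtain ⟨j, rfl⟩ := hj
      exact mapsC j
    · intro x _
      have htop : famOf N a Cc true (t e) = ⊤ := by
        apply famOf_top_of N a ha Cc hC0
        intro i hi0 hiv
        exact hj (hArm e i hi0 (Or.inr hiv.symm))
      rw [htop]
      trivial
  have hWall : ∀ e : E, ∀ x ∈ famOf N a Wc false (s e),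
      N.map e x ∈ famOf N a Wc false (t e) := by
    intro e
    by_cases hj : ∃ j, e = b j
    · obtain ⟨j, rfl⟩ := hj
      exact mapsW j
    · intro x hx
      have hbot : famOf N a Wc false (s e) = ⊥ := by
        apply famOf_bot_of N a ha Wc hW0
        intro i hi0 hiv
        exact hj (hArm e i hi0 (Or.inl hiv.symm))
      rw [hbot] at hx
      rw [Submodule.mem_bot] at hx
      subst hx
      rw [map_zero]
      exact Submodule.zero_mem _
  have hcompl' : ∀ v, IsCompl (famOf N a Cc true v) (famOf N a Wc false v) := by
    intro v
    by_cases hex : ∃ i, a i = v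
    · obtain ⟨i, hi⟩ := hex
      rw [famOf_eq N a ha Cc true hi, famOf_eq N a ha Wc false hi]
      exact isCompl_map_lcast N hi (hcompl i)
    · rw [famOf_not N a Cc true hex, famOf_not N a Wc false hex]
      exact isCompl_top_bot
  refine ⟨subRep N (famOf N a Cc true) hCall, subRep N (famOf N a Wc false) hWall,
    ⟨isoOfCompl N _ _ hCall hWall hcompl'⟩, ?_, ?_⟩
  · intro i
    constructor
    · intro ht
      exact restrict_injective (N.map (b i)) (hCall (b i)) (hinj i ht)
    · intro ht
      exact restrict_surjective (N.map (b i)) (hCall (b i)) (hsurj i ht)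
  · intro v hy
    obtain ⟨y, hy⟩ := hy
    by_contra hcon
    push_neg at hcon
    have hbot : famOf N a Wc false v = ⊥ := by
      apply famOf_bot_of N a ha Wc hW0
      intro i hi0 hiv
      exact (hcon i hi0) hiv.symm
    have hy2 : (show famOf N a Wc false v from y).1 ∈ famOf N a Wc false v :=
      (show famOf N a Wc false v from y).2
    have h0 : _ ∈ (⊥ : Submodule k (N.space v)) := (le_of_eq hbot) hy2
    rw [Submodule.mem_bot] at h0
    exact hy (Subtype.ext h0)

end Arm

end Stmt16Aux

namespace Stmt16Aux

open Function QRep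

variable {k : Type} [Field k] {V E : Type} {s t : E → V}

/-- Key step: if a representation is conical on all arm arrows except possibly the first,
then it decomposes into a fully conical part and a part supported off the root. -/
lemma keyStep (m : ℕ) (a : Fin (m + 2) → V) (b : Fin (m + 1) → E)
    (ha : Injective a)
    (hb : ∀ i : Fin (m + 1), (s (b i) = a i.castSucc ∧ t (b i) = a i.succ) ∨
      (s (b i) = a i.succ ∧ t (b i) = a i.castSucc))
    (hArm : ∀ e : E, ∀ i : Fin (m + 2), i ≠ 0 → (s e = a i ∨ t e = a i) → ∃ j, e = b j)
    (N : QRep k s t)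
    (hN : ∀ i : Fin (m + 1), i ≠ 0 →
      (t (b i) = a i.castSucc → Injective (N.map (b i))) ∧
      (t (b i) = a i.succ → Surjective (N.map (b i)))) :
    ∃ M' M'' : QRep k s t, Nonempty (Iso N (M'.prod M'')) ∧ ConicalOn k M' a b ∧
      (∀ v : V, (∃ y : M''.space v, y ≠ 0) → ∃ i : Fin (m + 2), i ≠ 0 ∧ v = a i) := by
  have hdir_t : ∀ j, t (b j) = a j.succ → armdir a b N j = true :=
    fun j ht => (armdir_iff N a b j).2 ht
  have hdir_f : ∀ j, t (b j) = a j.castSucc → armdir a b N j = false := fun j ht =>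
    Bool.eq_false_iff.2 (fun h => arm_excl a b ha j ht ((armdir_iff N a b j).1 h))
  rcases hb 0 with ⟨hs0, ht0⟩ | ⟨hs0, ht0⟩
  · -- Case B : the first arrow points away from the root; conical chain is `X`, start `⊤`.
    set dch := armdir a b N with hdch
    set fw := armfwd N a b hb ha with hfw
    set bw := armbwd N a b hb ha with hbw
    set X := chainX (Pf := fun i : Fin (m+2) => N.space (a i)) dch fw bw (⊤ : Submodule k (N.space (a 0))) with hX
    set Y := chainY (Pf := fun i : Fin (m+2) => N.space (a i)) dch fw bw (⊤ : Submodule k (N.space (a 0))) with hY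
    have hXY : ∀ i, IsCompl (X i) (Y i) := chainY_isCompl (Pf := fun i : Fin (m+2) => N.space (a i)) dch fw bw ⊤
    have hC0 : X 0 = ⊤ := chainX_zero (Pf := fun i : Fin (m+2) => N.space (a i)) dch fw bw ⊤
    have hW0 : Y 0 = ⊥ := by
      have h := hXY 0
      rw [hC0] at h
      exact le_bot_iff.1 (h.disjoint le_top le_rfl)
    apply assemble N a b ha hArm X Y hXY hC0 hW0
    · -- mapsC
      intro j
      rcases hb j with ⟨hs, ht⟩ | ⟨hs, ht⟩
      · exact maps_fwd_bridge N a b hb ha X true j hs ht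
          (le_of_eq (chainX_fwd (Pf := fun i : Fin (m+2) => N.space (a i)) dch fw bw ⊤ j (hdir_t j ht)).symm)
      · refine maps_bwd_bridge N a b hb ha X true j hs ht ?_
        rw [hX, chainX_bwd (Pf := fun i : Fin (m+2) => N.space (a i)) dch fw bw ⊤ j (hdir_f j ht), hbw]
        exact Submodule.map_comap_le _ _
    · -- mapsW
      intro j
      rcases hb j with ⟨hs, ht⟩ | ⟨hs, ht⟩
      · exact maps_fwd_bridge N a b hb ha Y false j hs ht
          (chainY_fwd (Pf := fun i : Fin (m+2) => N.space (a i)) dch fw bw ⊤ j (hdir_t j ht)).1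
      · exact maps_bwd_bridge N a b hb ha Y false j hs ht
          (chainY_bwd (Pf := fun i : Fin (m+2) => N.space (a i)) dch fw bw ⊤ j (hdir_f j ht))
    · -- injectivity
      intro j ht x _ h0
      have hj0 : j ≠ 0 := by
        rintro rfl
        exact arm_excl a b ha 0 ht ht0
      exact (hN j hj0).1 ht (by rw [h0, map_zero])
    · -- surjectivity
      intro j ht
      exact surj_bridge N a b hb ha X true j (arm_src_of_fwd a b ha hb j ht) ht
        (le_of_eq (chainX_fwd (Pf := fun i : Fin (m+2) => N.space (a i)) dch fw bw ⊤ j (hdir_t j ht)))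
  · -- Case A : the first arrow points toward the root; conical chain is `Y`, start `⊥`.
    set dch := armdir a b N with hdch
    set fw := armfwd N a b hb ha with hfw
    set bw := armbwd N a b hb ha with hbw
    set X := chainX (Pf := fun i : Fin (m+2) => N.space (a i)) dch fw bw (⊥ : Submodule k (N.space (a 0))) with hX
    set Y := chainY (Pf := fun i : Fin (m+2) => N.space (a i)) dch fw bw (⊥ : Submodule k (N.space (a 0))) with hY
    have hXY : ∀ i, IsCompl (Y i) (X i) := fun i => (chainY_isCompl (Pf := fun i : Fin (m+2) => N.space (a i)) dch fw bw ⊥ i).symm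
    have hW0 : X 0 = ⊥ := chainX_zero (Pf := fun i : Fin (m+2) => N.space (a i)) dch fw bw ⊥
    have hC0 : Y 0 = ⊤ := by
      have h := chainY_isCompl (Pf := fun i : Fin (m+2) => N.space (a i)) dch fw bw ⊥ 0
      rw [chainX_zero] at h
      have h2 := codisjoint_iff.1 h.codisjoint
      rwa [bot_sup_eq] at h2
    apply assemble N a b ha hArm Y X hXY hC0 hW0
    · -- mapsC (now the `Y` chain)
      intro j
      rcases hb j with ⟨hs, ht⟩ | ⟨hs, ht⟩
      · exact maps_fwd_bridge N a b hb ha Y true j hs ht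
          (chainY_fwd (Pf := fun i : Fin (m+2) => N.space (a i)) dch fw bw ⊥ j (hdir_t j ht)).1
      · exact maps_bwd_bridge N a b hb ha Y true j hs ht
          (chainY_bwd (Pf := fun i : Fin (m+2) => N.space (a i)) dch fw bw ⊥ j (hdir_f j ht))
    · -- mapsW (now the `X` chain)
      intro j
      rcases hb j with ⟨hs, ht⟩ | ⟨hs, ht⟩
      · exact maps_fwd_bridge N a b hb ha X false j hs ht
          (le_of_eq (chainX_fwd (Pf := fun i : Fin (m+2) => N.space (a i)) dch fw bw ⊥ j (hdir_t j ht)).symm)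
      · refine maps_bwd_bridge N a b hb ha X false j hs ht ?_
        rw [hX, chainX_bwd (Pf := fun i : Fin (m+2) => N.space (a i)) dch fw bw ⊥ j (hdir_f j ht), hbw]
        exact Submodule.map_comap_le _ _
    · -- injectivity
      intro j ht
      refine inj_bridge N a b hb ha Y true j (arm_src_of_bwd a b ha hb j ht) ht ?_
      intro x' hx' hbx'
      have hker : x' ∈ X j.succ := by
        rw [hX, chainX_bwd (Pf := fun i : Fin (m+2) => N.space (a i)) dch fw bw ⊥ j (hdir_f j ht), Submodule.mem_comap, hbx']
        exact Submodule.zero_mem _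
      exact Submodule.disjoint_def.1 (chainY_isCompl (Pf := fun i : Fin (m+2) => N.space (a i)) dch fw bw ⊥ j.succ).disjoint x' hker hx'
    · -- surjectivity
      intro j ht
      have hj0 : j ≠ 0 := by
        rintro rfl
        exact arm_excl a b ha 0 ht0 ht
      have hs := arm_src_of_fwd a b ha hb j ht
      have hNs := (hN j hj0).2 ht
      have hfs : Surjective (fw j) := by
        intro z
        obtain ⟨w, hw⟩ := hNs (lcast N ht.symm z)
        refine ⟨lcast N hs.symm.symm w, ?_⟩
        rw [hfw, armfwd_comp N a b hb ha j ht hs.symm w, hw, lcast_symm_lcast]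
      exact surj_bridge N a b hb ha Y true j hs ht
        (le_of_eq ((chainY_fwd (Pf := fun i : Fin (m+2) => N.space (a i)) dch fw bw ⊥ j (hdir_t j ht)).2 hfs).symm)

end Stmt16Aux

namespace Stmt16Aux

open Function QRep

variable {k : Type} [Field k] {V E : Type} {s t : E → V}

/-- Transfer of conicality through an isomorphism with a zero second factor. -/
lemma conical_transfer {M A B : QRep k s t} (iso : Iso M (A.prod B)) (hz : B.IsZero)
    {n : ℕ} (a : Fin (n + 1) → V) (bb : Fin n → E) (hcon : ConicalOn k A a bb) :
    ConicalOn k M a bb := by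
  intro i
  constructor
  · intro ht
    have hI := (hcon i).1 ht
    intro x y hxy
    apply (iso.app (s (bb i))).injective
    have h3 : (A.prod B).map (bb i) (iso.app (s (bb i)) x)
        = (A.prod B).map (bb i) (iso.app (s (bb i)) y) := by
      rw [← iso.comm (bb i) x, ← iso.comm (bb i) y, hxy]
    have hfst : A.map (bb i) (iso.app (s (bb i)) x).1
        = A.map (bb i) (iso.app (s (bb i)) y).1 := congrArg Prod.fst h3
    exact Prod.ext (hI hfst) ((hz _ _).trans (hz _ _).symm)
  · intro ht
    have hS := (hcon i).2 ht
    intro z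
    obtain ⟨u, hu⟩ := hS ((iso.app (t (bb i)) z).1)
    refine ⟨(iso.app (s (bb i))).symm (u, 0), ?_⟩
    apply (iso.app (t (bb i))).injective
    rw [iso.comm (bb i)]
    erw [LinearEquiv.apply_symm_apply]
    exact Prod.ext (by exact hu) ((hz _ _).trans (hz _ _).symm)

/-- Main auxiliary statement, proven by induction on the length of the arm. -/
theorem mainAux : ∀ (L : ℕ) (a : Fin (L + 1) → V) (b : Fin L → E),
    Injective a →
    (∀ i : Fin L, (s (b i) = a i.castSucc ∧ t (b i) = a i.succ) ∨
      (s (b i) = a i.succ ∧ t (b i) = a i.castSucc)) →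
    (∀ e : E, ∀ i : Fin (L + 1), i ≠ 0 → (s e = a i ∨ t e = a i) → ∃ j, e = b j) →
    ∀ M : QRep k s t,
    ∃ M' M'' : QRep k s t, Nonempty (Iso M (M'.prod M'')) ∧ ConicalOn k M' a b ∧
      (∀ v : V, (∃ y : M''.space v, y ≠ 0) → ∃ i : Fin (L + 1), i ≠ 0 ∧ v = a i) := by
  intro L
  induction L with
  | zero =>
    intro a b _ _ _ M
    refine ⟨M, zeroRep, ⟨isoProdZero M⟩, ?_, ?_⟩
    · intro i
      exact i.elim0
    · rintro v ⟨y, hy⟩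
      exact absurd rfl hy
  | succ L ih =>
    intro a b ha hb hArm M
    set a' : Fin (L + 1) → V := fun i => a i.succ with ha'
    set b' : Fin L → E := fun i => b i.succ with hb'
    have ha'inj : Injective a' := fun i j hij => Fin.succ_injective _ (ha hij)
    have hb'ok : ∀ i : Fin L, (s (b' i) = a' i.castSucc ∧ t (b' i) = a' i.succ) ∨
        (s (b' i) = a' i.succ ∧ t (b' i) = a' i.castSucc) := by
      intro i
      have e1 : a' i.castSucc = a i.succ.castSucc := congrArg a (Fin.succ_castSucc i)
      have e2 : a' i.succ = a i.succ.succ := rfl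
      rw [e1, e2]
      exact hb i.succ
    have hArm' : ∀ e : E, ∀ i : Fin (L + 1), i ≠ 0 → (s e = a' i ∨ t e = a' i) →
        ∃ j : Fin L, e = b' j := by
      intro e i hi0 htouch
      obtain ⟨j, rfl⟩ := hArm e i.succ (Fin.succ_ne_zero i) htouch
      have hj0 : j ≠ 0 := by
        rintro rfl
        rcases hb 0 with ⟨hs, ht⟩ | ⟨hs, ht⟩ <;> rcases htouch with h | h
        · have h3 := ha (h.symm.trans hs)
          rw [Fin.castSucc_zero] at h3
          exact Fin.succ_ne_zero i h3
        · exact hi0 (Fin.succ_injective _ (ha (h.symm.trans ht)))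
        · exact hi0 (Fin.succ_injective _ (ha (h.symm.trans hs)))
        · have h3 := ha (h.symm.trans ht)
          rw [Fin.castSucc_zero] at h3
          exact Fin.succ_ne_zero i h3
      obtain ⟨j', rfl⟩ := Fin.eq_succ_of_ne_zero hj0
      exact ⟨j', rfl⟩
    obtain ⟨N, P, ⟨iso1⟩, conN, supP⟩ := ih a' b' ha'inj hb'ok hArm' M
    have hN : ∀ i : Fin (L + 1), i ≠ 0 →
        (t (b i) = a i.castSucc → Injective (N.map (b i))) ∧
        (t (b i) = a i.succ → Surjective (N.map (b i))) := by
      intro i hi0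
      obtain ⟨j, rfl⟩ := Fin.eq_succ_of_ne_zero hi0
      have h := conN j
      constructor
      · intro ht
        exact h.1 (ht.trans (congrArg a (Fin.succ_castSucc j)).symm)
      · intro ht
        exact h.2 ht
    obtain ⟨M', W, ⟨iso2⟩, conM', supW⟩ := keyStep L a b ha hb hArm N hN
    refine ⟨M', W.prod P,
      ⟨isoTrans iso1 (isoTrans (isoProdCongr iso2 (isoRefl P)) (isoProdAssoc M' W P))⟩,
      conM', ?_⟩
    rintro v ⟨y, hy⟩
    by_cases hw : y.1 = 0
    · have hp : y.2 ≠ 0 := fun h2 => hy (Prod.ext hw h2)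
      obtain ⟨i, hi0, hv⟩ := supP v ⟨y.2, hp⟩
      exact ⟨i.succ, Fin.succ_ne_zero i, hv⟩
    · obtain ⟨i, hi0, hv⟩ := supW v ⟨y.1, hw⟩
      exact ⟨i, hi0, hv⟩

end Stmt16Aux
/-- Let `Q` have an arm `(Q', x)`: `Q'` is a full subquiver of type `A`
with vertices `a 0 = x, a 1, ..., a L` and arrows `b i` between consecutive vertices, and
the only connection of `Q'` with the rest of `Q` is through `x`. Then every representation
`M` decomposes as `M ≅ M' ⊕ M''` with `M'` conical on `(Q', x)` and the support of `M''`
contained in `Q' \ {x}`. In particular, every indecomposable `M` with `M_x ≠ 0` is conical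
on `(Q', x)`. -/
theorem stmt16 (k : Type) [Field k] {V E : Type} (s t : E → V) (L : ℕ)
    (a : Fin (L + 1) → V) (b : Fin L → E)
    (ha : Function.Injective a)
    (hb : ∀ i : Fin L,
      (s (b i) = a i.castSucc ∧ t (b i) = a i.succ) ∨
      (s (b i) = a i.succ ∧ t (b i) = a i.castSucc))
    (hfull : ∀ e : E, s e ∈ Set.range a → t e ∈ Set.range a → ∃ i, e = b i)
    (harm : ∀ e : E, ∀ i : Fin (L + 1), i ≠ 0 → (s e = a i ∨ t e = a i) →
      s e ∈ Set.range a ∧ t e ∈ Set.range a)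
    (M : QRep k s t) :
    (∃ M' M'' : QRep k s t,
      Nonempty (QRep.Iso M (M'.prod M'')) ∧
      ConicalOn k M' a b ∧
      (∀ v : V, (∃ y : M''.space v, y ≠ 0) → ∃ i : Fin (L + 1), i ≠ 0 ∧ v = a i)) ∧
    (M.Indecomposable → (∃ x : M.space (a 0), x ≠ 0) → ConicalOn k M a b) := by
  have hArm : ∀ e : E, ∀ i : Fin (L + 1), i ≠ 0 → (s e = a i ∨ t e = a i) → ∃ j, e = b j := by
    intro e i hi0 htouch
    obtain ⟨hs', ht'⟩ := harm e i hi0 htouch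
    exact hfull e hs' ht'
  obtain ⟨M', M'', ⟨iso⟩, con, supp⟩ := Stmt16Aux.mainAux L a b ha hb hArm M
  refine ⟨⟨M', M'', ⟨iso⟩, con, supp⟩, ?_⟩
  rintro hind ⟨x0, hx0⟩
  rcases hind.2 M' M'' ⟨iso⟩ with hz | hz
  · exfalso
    set y := iso.app (a 0) x0 with hy
    have h1 : y.1 = 0 := hz _ y.1
    have h2 : y.2 = 0 := by
      by_contra h2
      obtain ⟨i, hi0, hv⟩ := supp (a 0) ⟨y.2, h2⟩
      exact hi0 (ha hv.symm)
    apply hx0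
    apply (iso.app (a 0)).injective
    rw [map_zero, ← hy]
    exact Prod.ext h1 h2
  · exact Stmt16Aux.conical_transfer iso hz a b con
end
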